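/- arXiv:0806.4057 — 5 statements merged into one kernel-verified Lean document; each statement's English description precedes it below -/
import Mathlib

section
/- For all real ν with |ν| ≤ λ/2 (where λ > 0), one has (3/(4π)) ∫₀^∞ (sin⁴(λt/4)/(λ³(t/4)⁴)) cos(νt) dt = 1 - 6(ν/λ)² + 6(|ν|/λ)³. -/
open Real MeasureTheory Set Filter Topology

/-- Integrability helper: continuous on `Ioi 0`, bounded near 0, `≤ B/t²` at infinity. -/
lemma intOn_helper (f : ℝ → ℝ) (hf : ContinuousOn f (Ioi 0)) (A B : ℝ)
    (h1 : ∀ t ∈ Ioc (0:ℝ) 1, |f t| ≤ A) (h2 : ∀ t ∈ Ici (1:ℝ), |f t| ≤ B / t ^ 2) :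
    IntegrableOn f (Ioi 0) := by
  have hmeas : AEStronglyMeasurable f (volume.restrict (Ioi (0:ℝ))) :=
    hf.aestronglyMeasurable measurableSet_Ioi
  have : Ioi (0:ℝ) = Ioc 0 1 ∪ Ioi 1 := by
    ext x
    simp only [mem_Ioi, mem_union, mem_Ioc]
    constructor
    · intro h; rcases le_or_gt x 1 with h'|h' <;> tauto
    · rintro (⟨h, _⟩|h) <;> linarith
  rw [this]
  apply IntegrableOn.union
  · refine Integrable.mono' (integrable_const A) (hmeas.mono_measure
      (Measure.restrict_mono (by rw [this]; exact subset_union_left) le_rfl)) ?_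
    filter_upwards [ae_restrict_mem measurableSet_Ioc] with t ht using h1 t ht
  · have hB : IntegrableOn (fun t : ℝ => B * t ^ ((-2 : ℝ))) (Ioi 1) :=
      (integrableOn_Ioi_rpow_of_lt (by norm_num) one_pos).const_mul B
    refine Integrable.mono' hB (hmeas.mono_measure
      (Measure.restrict_mono (by rw [this]; exact subset_union_right) le_rfl)) ?_
    filter_upwards [ae_restrict_mem measurableSet_Ioi] with t ht
    have ht1 : (1:ℝ) ≤ t := le_of_lt ht
    have ht0 : (0:ℝ) < t := lt_of_lt_of_le one_pos ht1
    have : t ^ ((-2:ℝ)) = (t ^ 2)⁻¹ := by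
      rw [show ((-2:ℝ)) = -((2:ℕ):ℝ) by norm_num, Real.rpow_neg ht0.le, Real.rpow_natCast]
    rw [this]
    calc |f t| ≤ B / t ^ 2 := h2 t ht1
    _ = B * (t ^ 2)⁻¹ := by ring

/-- Laplace transform of 1. -/
lemma laplace_one {s : ℝ} (hs : 0 < s) :
    ∫ t in Ioi (0:ℝ), Real.exp (-(s * t)) = 1 / s := by
  have h : ∀ t ∈ Ioi (0:ℝ), HasDerivAt (fun t : ℝ => -Real.exp (-(s * t)) / s)
      (Real.exp (-(s * t))) t := by
    intro t _
    have h1 : HasDerivAt (fun t : ℝ => -(s * t)) (-s) t := by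
      simpa using ((hasDerivAt_id t).const_mul s).fun_neg
    have h2 := (h1.exp).fun_neg.div_const s
    refine h2.congr_deriv ?_
    field_simp
  have hlim0 : Tendsto (fun t : ℝ => Real.exp (-(s * t))) atTop (𝓝 0) := by
    apply Real.tendsto_exp_atBot.comp
    exact tendsto_neg_atTop_atBot.comp ((tendsto_const_mul_atTop_of_pos hs).mpr tendsto_id)
  have hlim : Tendsto (fun t : ℝ => -Real.exp (-(s * t)) / s) atTop (𝓝 0) := by
    have := (hlim0.neg).div_const s
    simpa using this
  have key := integral_Ioi_of_hasDerivAt_of_nonneg ?_ h (fun t _ => (Real.exp_pos _).le) hlim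
  · rw [key]; simp; ring
  · exact ((Real.continuous_exp.comp (continuous_const.mul continuous_id).neg).neg.div_const
      s).continuousWithinAt

/-- Laplace transform of cosine. -/
lemma laplace_cos {s : ℝ} (hs : 0 < s) :
    ∫ t in Ioi (0:ℝ), Real.exp (-(s * t)) * Real.cos t = s / (s ^ 2 + 1) := by
  set F : ℝ → ℝ := fun t => Real.exp (-(s * t)) * (-s * Real.cos t + Real.sin t) / (s ^ 2 + 1)
    with hF
  have hs1 : s ^ 2 + 1 ≠ 0 := by positivity
  have h : ∀ t ∈ Ioi (0:ℝ), HasDerivAt F (Real.exp (-(s * t)) * Real.cos t) t := by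
    intro t _
    have h1 : HasDerivAt (fun t : ℝ => -(s * t)) (-s) t := by
      simpa using ((hasDerivAt_id t).const_mul s).fun_neg
    have h2 : HasDerivAt (fun t : ℝ => Real.exp (-(s * t))) (Real.exp (-(s*t)) * (-s)) t :=
      h1.exp
    have h3 : HasDerivAt (fun t : ℝ => -s * Real.cos t + Real.sin t)
        (-s * (-Real.sin t) + Real.cos t) t :=
      ((Real.hasDerivAt_cos t).const_mul (-s)).add (Real.hasDerivAt_sin t)
    have h4 := (h2.fun_mul h3).div_const (s ^ 2 + 1)
    refine h4.congr_deriv ?_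
    field_simp
    ring
  have hbound : ∀ t : ℝ, |F t| ≤ Real.exp (-(s * t)) * (s + 1) / (s ^ 2 + 1) := by
    intro t
    rw [hF, abs_div, abs_of_pos (by positivity : (0:ℝ) < s ^ 2 + 1), abs_mul,
      Real.abs_exp]
    apply div_le_div_of_nonneg_right ?_ (by positivity)
    apply mul_le_mul_of_nonneg_left ?_ (Real.exp_pos _).le
    calc |(-s * Real.cos t + Real.sin t)| ≤ |(-s * Real.cos t)| + |Real.sin t| := abs_add_le _ _
    _ ≤ s * 1 + 1 := by
        rw [abs_mul, abs_neg, abs_of_pos hs]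
        exact add_le_add (mul_le_mul_of_nonneg_left (Real.abs_cos_le_one t) hs.le)
          (Real.abs_sin_le_one t)
    _ = s + 1 := by ring
  have hlim0 : Tendsto (fun t : ℝ => Real.exp (-(s * t))) atTop (𝓝 0) := by
    apply Real.tendsto_exp_atBot.comp
    exact tendsto_neg_atTop_atBot.comp ((tendsto_const_mul_atTop_of_pos hs).mpr tendsto_id)
  have hlim : Tendsto F atTop (𝓝 0) := by
    apply squeeze_zero_norm (fun t => hbound t)
    have := (hlim0.mul_const (s + 1)).div_const (s ^ 2 + 1)
    simpa using this
  have hint : IntegrableOn (fun t => Real.exp (-(s * t)) * Real.cos t) (Ioi (0:ℝ)) := by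
    apply Integrable.mono' (exp_neg_integrableOn_Ioi 0 hs)
    · apply Continuous.aestronglyMeasurable
      exact (Real.continuous_exp.comp (continuous_const.mul continuous_id).neg).mul
        Real.continuous_cos
    · filter_upwards with t
      rw [norm_mul, Real.norm_eq_abs, Real.norm_eq_abs, Real.abs_exp,
        show -(s * t) = -s * t by ring]
      nth_rewrite 2 [show Real.exp (-s * t) = Real.exp (-s * t) * 1 by ring]
      exact mul_le_mul_of_nonneg_left (Real.abs_cos_le_one t) (Real.exp_pos _).le
  have hcontF : ContinuousWithinAt F (Ici 0) 0 := by
    apply Continuous.continuousWithinAt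
    exact (((Real.continuous_exp.comp (continuous_const.mul continuous_id).neg).mul
      ((continuous_const.mul Real.continuous_cos).add Real.continuous_sin)).div_const _)
  have key := integral_Ioi_of_hasDerivAt_of_tendsto hcontF h hint hlim
  rw [key, hF]
  simp
  field_simp

/-- For fixed `t > 0`, facts about `s ↦ s * exp (-(s*t))` on `Ioi 0`. -/
lemma laplace_id_aux {t : ℝ} (ht : 0 < t) :
    (∀ s ∈ Ioi (0:ℝ), HasDerivAt (fun s : ℝ => -(s / t + 1 / t ^ 2) * Real.exp (-(s * t)))
      (s * Real.exp (-(s * t))) s) ∧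
    ContinuousWithinAt (fun s : ℝ => -(s / t + 1 / t ^ 2) * Real.exp (-(s * t))) (Ici 0) 0 ∧
    Tendsto (fun s : ℝ => -(s / t + 1 / t ^ 2) * Real.exp (-(s * t))) atTop (𝓝 0) := by
  have ht' : t ≠ 0 := ht.ne'
  refine ⟨?_, ?_, ?_⟩
  · intro s _
    have h1 : HasDerivAt (fun s : ℝ => -(s * t)) (-t) s := by
      simpa using ((hasDerivAt_id s).mul_const t).fun_neg
    have h2 : HasDerivAt (fun s : ℝ => -(s / t + 1 / t ^ 2)) (-(1/t)) s := by
      exact (((hasDerivAt_id s).div_const t).add_const (1 / t ^ 2)).neg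
    have h4 := h2.fun_mul h1.exp
    refine h4.congr_deriv ?_
    field_simp
    ring
  · exact (((continuous_id.div_const t).add continuous_const).neg.mul
      (Real.continuous_exp.comp (continuous_id.mul continuous_const).neg)).continuousWithinAt
  · have hu : Tendsto (fun s : ℝ => s * t) atTop atTop := tendsto_id.atTop_mul_const ht
    have hx : Tendsto (fun x : ℝ => (1 / t ^ 2) * (x * Real.exp (-x))
        + (1 / t ^ 2) * Real.exp (-x)) atTop (𝓝 0) := by
      have h1 := (tendsto_pow_mul_exp_neg_atTop_nhds_zero 1).const_mul (1 / t ^ 2)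
      have h2 := tendsto_exp_neg_atTop_nhds_zero.const_mul (1 / t ^ 2)
      simpa using h1.add h2
    have h3 := (hx.comp hu).neg
    rw [neg_zero] at h3
    refine h3.congr (fun s => ?_)
    simp only [Function.comp]
    field_simp

lemma laplace_id {t : ℝ} (ht : 0 < t) :
    (∫ s in Ioi (0:ℝ), s * Real.exp (-(s * t))) = 1 / t ^ 2 ∧
      IntegrableOn (fun s : ℝ => s * Real.exp (-(s * t))) (Ioi (0:ℝ)) := by
  obtain ⟨hderiv, hcont, hlim⟩ := laplace_id_aux ht
  have hpos : ∀ s ∈ Ioi (0:ℝ), 0 ≤ s * Real.exp (-(s * t)) :=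
    fun s hs => mul_nonneg (le_of_lt hs) (Real.exp_pos _).le
  constructor
  · rw [integral_Ioi_of_hasDerivAt_of_nonneg hcont hderiv hpos hlim]
    simp
  · exact integrableOn_Ioi_deriv_of_nonneg hcont hderiv hpos hlim

lemma int_exp_cos {s : ℝ} (hs : 0 < s) :
    IntegrableOn (fun t => Real.exp (-(s * t)) * Real.cos t) (Ioi (0:ℝ)) := by
  apply Integrable.mono' (exp_neg_integrableOn_Ioi 0 hs)
  · apply Continuous.aestronglyMeasurable
    exact (Real.continuous_exp.comp (continuous_const.mul continuous_id).neg).mul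
      Real.continuous_cos
  · filter_upwards with t
    rw [norm_mul, Real.norm_eq_abs, Real.norm_eq_abs, Real.abs_exp,
      show -(s * t) = -s * t by ring]
    nth_rewrite 2 [show Real.exp (-s * t) = Real.exp (-s * t) * 1 by ring]
    exact mul_le_mul_of_nonneg_left (Real.abs_cos_le_one t) (Real.exp_pos _).le

/-- The key improper integral `∫₀^∞ (1 - cos t)/t² dt = π/2`. -/
lemma one_sub_cos_div_sq :
    IntegrableOn (fun t : ℝ => (1 - Real.cos t) / t ^ 2) (Ioi (0:ℝ)) ∧
      ∫ t in Ioi (0:ℝ), (1 - Real.cos t) / t ^ 2 = π / 2 := by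
  set μ := volume.restrict (Ioi (0:ℝ)) with hμ
  set k : ℝ → ℝ → ℝ := fun t s => (1 - Real.cos t) * (s * Real.exp (-(s * t))) with hk
  have hk_cont : Continuous (fun p : ℝ × ℝ => k p.1 p.2) := by
    apply Continuous.mul
    · exact (continuous_const.sub (Real.continuous_cos.comp continuous_fst))
    · exact continuous_snd.mul
        (Real.continuous_exp.comp (continuous_snd.mul continuous_fst).neg)
  -- s-side inner integral
  have hs_int : ∀ s : ℝ, 0 < s → IntegrableOn (fun t => k t s) (Ioi (0:ℝ)) := by
    intro s hs
    apply Integrable.mono' ((exp_neg_integrableOn_Ioi 0 hs).const_mul (2 * s))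
    · exact (hk_cont.comp (continuous_id.prodMk continuous_const)).aestronglyMeasurable
    · filter_upwards with t
      rw [hk]
      simp only [Real.norm_eq_abs, abs_mul]
      rw [Real.abs_exp, abs_of_nonneg hs.le, show -(s * t) = -s * t by ring]
      have h1 : |1 - Real.cos t| ≤ 2 := by
        have := Real.abs_cos_le_one t
        rw [abs_le] at *
        constructor <;> [linarith [this.2]; linarith [this.1]]
      calc |1 - Real.cos t| * (s * Real.exp (-s * t)) ≤ 2 * (s * Real.exp (-s * t)) :=
            mul_le_mul_of_nonneg_right h1 (by positivity)
        _ = 2 * s * Real.exp (-s * t) := by ring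
  have hs_val : ∀ s : ℝ, 0 < s → ∫ t in Ioi (0:ℝ), k t s = (1 + s ^ 2)⁻¹ := by
    intro s hs
    have e1 : IntegrableOn (fun t => s * Real.exp (-(s * t))) (Ioi (0:ℝ)) := by
      have h0 : IntegrableOn (fun t : ℝ => s * Real.exp (-s * t)) (Ioi (0:ℝ)) :=
        (exp_neg_integrableOn_Ioi 0 hs).const_mul s
      refine h0.congr_fun (fun t _ => ?_) measurableSet_Ioi
      simp only [show -s * t = -(s * t) by ring]
    have e2 : IntegrableOn (fun t => s * (Real.exp (-(s * t)) * Real.cos t)) (Ioi (0:ℝ)) :=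
      (int_exp_cos hs).const_mul s
    have : (fun t => k t s) = fun t => s * Real.exp (-(s * t))
        - s * (Real.exp (-(s * t)) * Real.cos t) := by
      funext t; rw [hk]; ring
    rw [this, integral_sub e1 e2, integral_const_mul, integral_const_mul,
      laplace_one hs, laplace_cos hs]
    field_simp
    ring
  -- t-side inner integral
  have ht_val : ∀ t : ℝ, 0 < t → ∫ s in Ioi (0:ℝ), k t s = (1 - Real.cos t) / t ^ 2 := by
    intro t ht
    rw [hk]
    simp only
    rw [integral_const_mul, (laplace_id ht).1]
    ring
  have ht_int : ∀ t : ℝ, 0 < t → IntegrableOn (fun s => k t s) (Ioi (0:ℝ)) := by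
    intro t ht
    exact ((laplace_id ht).2).const_mul _
  -- nonnegativity
  have hk_nn : ∀ t ∈ Ioi (0:ℝ), ∀ s ∈ Ioi (0:ℝ), 0 ≤ k t s := by
    intro t _ s hs
    have : Real.cos t ≤ 1 := Real.cos_le_one t
    apply mul_nonneg (by linarith) (mul_nonneg (le_of_lt hs) (Real.exp_pos _).le)
  -- Tonelli
  have swap : ∫⁻ t, ∫⁻ s, ENNReal.ofReal (k t s) ∂μ ∂μ
      = ∫⁻ s, ∫⁻ t, ENNReal.ofReal (k t s) ∂μ ∂μ :=
    lintegral_lintegral_swap ((ENNReal.measurable_ofReal.comp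
      hk_cont.measurable).aemeasurable)
  have left_eq : ∫⁻ t, ∫⁻ s, ENNReal.ofReal (k t s) ∂μ ∂μ
      = ∫⁻ t, ENNReal.ofReal ((1 - Real.cos t) / t ^ 2) ∂μ := by
    apply lintegral_congr_ae
    filter_upwards [ae_restrict_mem measurableSet_Ioi] with t ht
    rw [← ht_val t ht, ← ofReal_integral_eq_lintegral_ofReal (ht_int t ht)]
    filter_upwards [ae_restrict_mem measurableSet_Ioi] with s hs
    exact hk_nn t ht s hs
  have right_eq : ∫⁻ s, ∫⁻ t, ENNReal.ofReal (k t s) ∂μ ∂μ = ENNReal.ofReal (π / 2) := by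
    have : ∀ᵐ s ∂μ, ∫⁻ t, ENNReal.ofReal (k t s) ∂μ = ENNReal.ofReal ((1 + s ^ 2)⁻¹) := by
      filter_upwards [ae_restrict_mem measurableSet_Ioi] with s hs
      rw [← hs_val s hs, ← ofReal_integral_eq_lintegral_ofReal (hs_int s hs)]
      filter_upwards [ae_restrict_mem measurableSet_Ioi] with t ht
      exact hk_nn t ht s hs
    rw [lintegral_congr_ae this,
      ← ofReal_integral_eq_lintegral_ofReal integrable_inv_one_add_sq.integrableOn
        (Eventually.of_forall (fun s => by positivity))]
    rw [integral_Ioi_inv_one_add_sq]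
    simp [Real.arctan_zero]
  have key : ∫⁻ t, ENNReal.ofReal ((1 - Real.cos t) / t ^ 2) ∂μ = ENNReal.ofReal (π / 2) := by
    rw [← left_eq, swap, right_eq]
  -- conclude
  have hf_nn : 0 ≤ᵐ[μ] fun t : ℝ => (1 - Real.cos t) / t ^ 2 := by
    filter_upwards [ae_restrict_mem measurableSet_Ioi] with t ht
    have : Real.cos t ≤ 1 := Real.cos_le_one t
    exact div_nonneg (by linarith) (by positivity)
  have hf_meas : AEStronglyMeasurable (fun t : ℝ => (1 - Real.cos t) / t ^ 2) μ := by
    apply ContinuousOn.aestronglyMeasurable ?_ measurableSet_Ioi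
    exact ContinuousOn.div (continuous_const.sub Real.continuous_cos).continuousOn
      (continuous_pow 2).continuousOn (fun t ht => pow_ne_zero _ (ne_of_gt ht))
  have hint : IntegrableOn (fun t : ℝ => (1 - Real.cos t) / t ^ 2) (Ioi (0:ℝ)) := by
    refine ⟨hf_meas, ?_⟩
    rw [hasFiniteIntegral_iff_ofReal hf_nn, key]
    exact ENNReal.ofReal_lt_top
  refine ⟨hint, ?_⟩
  rw [integral_eq_lintegral_of_nonneg_ae hf_nn hf_meas, key,
    ENNReal.toReal_ofReal (by positivity)]

lemma one_sub_cos_omega_int {w : ℝ} (hw : 0 ≤ w) :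
    IntegrableOn (fun t : ℝ => (1 - Real.cos (w * t)) / t ^ 2) (Ioi (0:ℝ)) := by
  apply intOn_helper _ ?_ (w ^ 2 / 2) 2
  · intro t ht
    have ht0 : 0 < t := ht.1
    have h1 : 1 - Real.cos (w * t) ≤ w ^ 2 * t ^ 2 / 2 := by
      have := Real.one_sub_sq_div_two_le_cos (x := w * t)
      nlinarith
    have h2 : 0 ≤ 1 - Real.cos (w * t) := by linarith [Real.cos_le_one (w * t)]
    rw [abs_of_nonneg (div_nonneg h2 (by positivity))]
    rw [div_le_iff₀ (by positivity)]
    calc 1 - Real.cos (w * t) ≤ w ^ 2 * t ^ 2 / 2 := h1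
      _ = w ^ 2 / 2 * t ^ 2 := by ring
  · intro t ht
    have ht0 : (0:ℝ) < t := lt_of_lt_of_le one_pos ht
    have h2 : 0 ≤ 1 - Real.cos (w * t) := by linarith [Real.cos_le_one (w * t)]
    rw [abs_of_nonneg (div_nonneg h2 (by positivity))]
    apply div_le_div_of_nonneg_right ?_ (by positivity)
    linarith [Real.neg_one_le_cos (w * t)]
  · exact ContinuousOn.div
      (continuous_const.sub (Real.continuous_cos.comp (continuous_const.mul continuous_id))).continuousOn
      (continuous_pow 2).continuousOn (fun t ht => pow_ne_zero _ (ne_of_gt ht))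

lemma one_sub_cos_omega {w : ℝ} (hw : 0 ≤ w) :
    ∫ t in Ioi (0:ℝ), (1 - Real.cos (w * t)) / t ^ 2 = π * w / 2 := by
  rcases eq_or_lt_of_le hw with h|h
  · simp [← h]
  · have hcongr : ∫ t in Ioi (0:ℝ), (1 - Real.cos (w * t)) / t ^ 2
        = ∫ t in Ioi (0:ℝ), w ^ 2 * ((fun u => (1 - Real.cos u) / u ^ 2) (w * t)) := by
      apply setIntegral_congr_fun measurableSet_Ioi
      intro t ht
      simp only
      rw [mul_pow, mul_div_assoc',
        mul_div_mul_left _ _ (by positivity : (w:ℝ) ^ 2 ≠ 0)]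
    rw [hcongr, integral_const_mul,
      integral_comp_mul_left_Ioi (fun u => (1 - Real.cos u) / u ^ 2) 0 h, mul_zero,
      smul_eq_mul, one_sub_cos_div_sq.2]
    field_simp

lemma sin_pow4_cos (x y : ℝ) : Real.sin x ^ 4 * Real.cos y =
    (6 * Real.cos y - 4 * Real.cos (2 * x + y) - 4 * Real.cos (2 * x - y)
      + Real.cos (4 * x + y) + Real.cos (4 * x - y)) / 16 := by
  rw [Real.cos_add, Real.cos_sub, Real.cos_add, Real.cos_sub,
    show (4:ℝ) * x = 2 * (2 * x) by ring, Real.cos_two_mul, Real.sin_two_mul,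
    Real.cos_two_mul, Real.sin_two_mul, Real.cos_two_mul, Real.sin_two_mul]
  linear_combination (Real.cos y * (Real.sin x ^ 2 + 1 - Real.cos x ^ 2)) *
    Real.sin_sq_add_cos_sq x

set_option maxHeartbeats 1600000 in
lemma main_aux (lam b : ℝ) (hlam : 0 < lam) (hb : 0 ≤ b) (hb2 : b ≤ lam / 2) :
    ∫ t in Ioi (0:ℝ), Real.sin (lam * t / 4) ^ 4 / (lam ^ 3 * (t / 4) ^ 4) * Real.cos (b * t)
      = 4 * π / 3 * ((lam ^ 3 - 6 * lam * b ^ 2 + 6 * b ^ 3) / lam ^ 3) := by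
  have hw2 : (0:ℝ) ≤ lam / 2 + b := by linarith
  have hw3 : (0:ℝ) ≤ lam / 2 - b := by linarith
  have hw4 : (0:ℝ) ≤ lam + b := by linarith
  have hw5 : (0:ℝ) ≤ lam - b := by linarith
  set G : ℝ → ℝ := fun t => Real.sin (lam * t / 4) ^ 4 * Real.cos (b * t) with hGdef
  set Gc : ℝ → ℝ := fun t => (6 * Real.cos (b * t) - 4 * Real.cos ((lam / 2 + b) * t)
      - 4 * Real.cos ((lam / 2 - b) * t) + Real.cos ((lam + b) * t)
      + Real.cos ((lam - b) * t)) / 16 with hGcdef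
  set D1 : ℝ → ℝ := fun t => (-(6 * (b * Real.sin (b * t)))
      + 4 * ((lam / 2 + b) * Real.sin ((lam / 2 + b) * t))
      + 4 * ((lam / 2 - b) * Real.sin ((lam / 2 - b) * t))
      - (lam + b) * Real.sin ((lam + b) * t)
      - (lam - b) * Real.sin ((lam - b) * t)) / 16 with hD1def
  set D2 : ℝ → ℝ := fun t => (-(6 * (b ^ 2 * Real.cos (b * t)))
      + 4 * ((lam / 2 + b) ^ 2 * Real.cos ((lam / 2 + b) * t))
      + 4 * ((lam / 2 - b) ^ 2 * Real.cos ((lam / 2 - b) * t))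
      - (lam + b) ^ 2 * Real.cos ((lam + b) * t)
      - (lam - b) ^ 2 * Real.cos ((lam - b) * t)) / 16 with hD2def
  set P1 : ℝ → ℝ := fun t => lam * Real.sin (lam * t / 4) ^ 3 * Real.cos (lam * t / 4)
      * Real.cos (b * t) - b * Real.sin (lam * t / 4) ^ 4 * Real.sin (b * t) with hP1def
  -- basic derivative facts
  have hcos_deriv : ∀ (w t : ℝ), HasDerivAt (fun t : ℝ => Real.cos (w * t))
      (-(w * Real.sin (w * t))) t := by
    intro w t
    have := ((hasDerivAt_id t).const_mul w).cos
    simpa [mul_comm] using this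
  have hsin_deriv : ∀ (w t : ℝ), HasDerivAt (fun t : ℝ => Real.sin (w * t))
      (w * Real.cos (w * t)) t := by
    intro w t
    have := ((hasDerivAt_id t).const_mul w).sin
    simpa [mul_comm] using this
  have hGGc : G = Gc := by
    funext t
    rw [hGdef, hGcdef]
    simp only
    rw [sin_pow4_cos (lam * t / 4) (b * t),
      show 2 * (lam * t / 4) + b * t = (lam / 2 + b) * t by ring,
      show 2 * (lam * t / 4) - b * t = (lam / 2 - b) * t by ring,
      show 4 * (lam * t / 4) + b * t = (lam + b) * t by ring,
      show 4 * (lam * t / 4) - b * t = (lam - b) * t by ring]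
  have hD1 : ∀ t, HasDerivAt Gc (D1 t) t := by
    intro t
    have h := (((((((hcos_deriv b t).const_mul 6).sub
      ((hcos_deriv (lam / 2 + b) t).const_mul 4)).sub
      ((hcos_deriv (lam / 2 - b) t).const_mul 4)).add
      (hcos_deriv (lam + b) t)).add
      (hcos_deriv (lam - b) t)).div_const 16)
    refine h.congr_deriv ?_
    rw [hD1def]; ring
  have hD2 : ∀ t, HasDerivAt D1 (D2 t) t := by
    intro t
    have h := ((((((((hsin_deriv b t).const_mul b).const_mul 6).neg.add
      (((hsin_deriv (lam / 2 + b) t).const_mul (lam / 2 + b)).const_mul 4)).add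
      (((hsin_deriv (lam / 2 - b) t).const_mul (lam / 2 - b)).const_mul 4)).sub
      ((hsin_deriv (lam + b) t).const_mul (lam + b))).sub
      ((hsin_deriv (lam - b) t).const_mul (lam - b))).div_const 16)
    refine h.congr_deriv ?_
    rw [hD2def]; ring
  have hP1 : ∀ t, HasDerivAt G (P1 t) t := by
    intro t
    have hs : HasDerivAt (fun t : ℝ => Real.sin (lam * t / 4))
        (Real.cos (lam * t / 4) * (lam / 4)) t := by
      have harg : HasDerivAt (fun t : ℝ => lam * t / 4) (lam / 4) t := by
        simpa using ((hasDerivAt_id t).const_mul lam).div_const 4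
      exact harg.sin
    have h := ((hs.fun_pow 4).mul ((hasDerivAt_id t).const_mul b).cos)
    refine h.congr_deriv ?_
    rw [hP1def]
    simp only [id_eq]
    ring
  have hGd : ∀ t, HasDerivAt G (D1 t) t := by
    intro t; rw [hGGc]; exact hD1 t
  have hP1D1 : ∀ t, P1 t = D1 t := by
    intro t
    exact HasDerivAt.unique (hGGc ▸ hP1 t) (hGd t)
  have hD2H : ∀ t, D2 t = (6 * (b ^ 2 * (1 - Real.cos (b * t)))
      - 4 * ((lam / 2 + b) ^ 2 * (1 - Real.cos ((lam / 2 + b) * t)))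
      - 4 * ((lam / 2 - b) ^ 2 * (1 - Real.cos ((lam / 2 - b) * t)))
      + (lam + b) ^ 2 * (1 - Real.cos ((lam + b) * t))
      + (lam - b) ^ 2 * (1 - Real.cos ((lam - b) * t))) / 16 := by
    intro t; rw [hD2def]; ring
  set F : ℝ → ℝ := fun t => -G t / (3 * t ^ 3) - D1 t / (6 * t ^ 2) with hFdef
  -- sin bounds
  have hsin_bd : ∀ t : ℝ, 0 ≤ t → |Real.sin (lam * t / 4)| ≤ lam * t / 4 := by
    intro t ht
    have := Real.abs_sin_le_abs (x := lam * t / 4)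
    rwa [abs_of_nonneg (div_nonneg (mul_nonneg hlam.le ht) (by norm_num))] at this
  have hG_bd : ∀ t : ℝ, 0 ≤ t → |G t| ≤ (lam / 4) ^ 4 * t ^ 4 := by
    intro t ht
    rw [hGdef]
    simp only
    rw [abs_mul, abs_pow]
    calc |Real.sin (lam * t / 4)| ^ 4 * |Real.cos (b * t)|
        ≤ (lam * t / 4) ^ 4 * 1 := by
          apply mul_le_mul (pow_le_pow_left₀ (abs_nonneg _) (hsin_bd t ht) 4)
            (Real.abs_cos_le_one _) (abs_nonneg _) (by positivity)
      _ = (lam / 4) ^ 4 * t ^ 4 := by ring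
  have hG_bd1 : ∀ t : ℝ, |G t| ≤ 1 := by
    intro t
    rw [hGdef]
    simp only
    rw [abs_mul, abs_pow]
    calc |Real.sin (lam * t / 4)| ^ 4 * |Real.cos (b * t)| ≤ 1 ^ 4 * 1 :=
        mul_le_mul (pow_le_pow_left₀ (abs_nonneg _) (Real.abs_sin_le_one _) 4)
          (Real.abs_cos_le_one _) (abs_nonneg _) (by norm_num)
      _ = 1 := by norm_num
  have hP1_bd : ∀ t : ℝ, 0 ≤ t → |P1 t| ≤ lam * (lam / 4) ^ 3 * t ^ 3
      + b * (lam / 4) ^ 4 * t ^ 4 := by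
    intro t ht
    rw [hP1def]
    simp only
    apply (abs_sub _ _).trans
    apply add_le_add
    · rw [abs_mul, abs_mul, abs_mul, abs_pow, abs_of_pos hlam]
      calc lam * |Real.sin (lam * t / 4)| ^ 3 * |Real.cos (lam * t / 4)| * |Real.cos (b * t)|
          ≤ lam * (lam * t / 4) ^ 3 * 1 * 1 := by
            apply mul_le_mul (mul_le_mul (mul_le_mul le_rfl
              (pow_le_pow_left₀ (abs_nonneg _) (hsin_bd t ht) 3) (by positivity) hlam.le)
              (Real.abs_cos_le_one _) (abs_nonneg _) (by positivity))
              (Real.abs_cos_le_one _) (abs_nonneg _) (by positivity)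
        _ = lam * (lam / 4) ^ 3 * t ^ 3 := by ring
    · rw [abs_mul, abs_mul, abs_pow, abs_of_nonneg hb]
      calc b * |Real.sin (lam * t / 4)| ^ 4 * |Real.sin (b * t)|
          ≤ b * (lam * t / 4) ^ 4 * 1 := by
            apply mul_le_mul (mul_le_mul le_rfl
              (pow_le_pow_left₀ (abs_nonneg _) (hsin_bd t ht) 4) (by positivity) hb)
              (Real.abs_sin_le_one _) (abs_nonneg _) (by positivity)
        _ = b * (lam / 4) ^ 4 * t ^ 4 := by ring
  have hP1_bd1 : ∀ t : ℝ, |P1 t| ≤ lam + b := by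
    intro t
    rw [hP1def]
    simp only
    apply (abs_sub _ _).trans
    apply add_le_add
    · rw [abs_mul, abs_mul, abs_mul, abs_pow, abs_of_pos hlam]
      calc lam * |Real.sin (lam * t / 4)| ^ 3 * |Real.cos (lam * t / 4)| * |Real.cos (b * t)|
          ≤ lam * 1 ^ 3 * 1 * 1 := by
            apply mul_le_mul (mul_le_mul (mul_le_mul le_rfl
              (pow_le_pow_left₀ (abs_nonneg _) (Real.abs_sin_le_one _) 3) (by positivity) hlam.le)
              (Real.abs_cos_le_one _) (abs_nonneg _) (by positivity))
              (Real.abs_cos_le_one _) (abs_nonneg _) (by positivity)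
        _ = lam := by ring
    · rw [abs_mul, abs_mul, abs_pow, abs_of_nonneg hb]
      calc b * |Real.sin (lam * t / 4)| ^ 4 * |Real.sin (b * t)|
          ≤ b * 1 ^ 4 * 1 := by
            apply mul_le_mul (mul_le_mul le_rfl
              (pow_le_pow_left₀ (abs_nonneg _) (Real.abs_sin_le_one _) 4) (by positivity) hb)
              (Real.abs_sin_le_one _) (abs_nonneg _) (by positivity)
        _ = b := by ring
  -- value at 0 and continuity from the right
  have hG0 : G 0 = 0 := by rw [hGdef]; norm_num
  have hD10 : D1 0 = 0 := by rw [hD1def]; norm_num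
  have hF0 : F 0 = 0 := by rw [hFdef]; simp [hG0, hD10]
  set C : ℝ := (lam / 4) ^ 4 / 3 + (lam * (lam / 4) ^ 3 + b * (lam / 4) ^ 4) / 6 with hCdef
  have hFcont : ContinuousWithinAt F (Ici 0) 0 := by
    rw [ContinuousWithinAt, hF0]
    apply squeeze_zero_norm' (a := fun t => C * t)
    · filter_upwards [Icc_mem_nhdsGE_of_mem (by constructor <;> norm_num :
        (0:ℝ) ∈ Ico (0:ℝ) 1)] with t ht
      rcases eq_or_lt_of_le ht.1 with h0|h0
      · rw [← h0]
        simp [hF0]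
      · have ht1 : t ≤ 1 := ht.2
        have e1 : |F t| ≤ |G t| / (3 * t ^ 3) + |D1 t| / (6 * t ^ 2) := by
          rw [hFdef]
          simp only
          apply (abs_sub _ _).trans
          rw [abs_div, abs_div, abs_neg, abs_of_pos (by positivity : (0:ℝ) < 3 * t ^ 3),
            abs_of_pos (by positivity : (0:ℝ) < 6 * t ^ 2)]
        have e2 : |G t| / (3 * t ^ 3) ≤ (lam / 4) ^ 4 / 3 * t := by
          rw [div_le_iff₀ (by positivity)]
          calc |G t| ≤ (lam / 4) ^ 4 * t ^ 4 := hG_bd t h0.le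
            _ = (lam / 4) ^ 4 / 3 * t * (3 * t ^ 3) := by ring
        have e3 : |D1 t| / (6 * t ^ 2) ≤ (lam * (lam / 4) ^ 3 + b * (lam / 4) ^ 4) / 6 * t := by
          rw [div_le_iff₀ (by positivity), ← hP1D1]
          have ht43 : t ^ 4 ≤ t ^ 3 := pow_le_pow_of_le_one h0.le ht1 (by norm_num)
          calc |P1 t| ≤ lam * (lam / 4) ^ 3 * t ^ 3 + b * (lam / 4) ^ 4 * t ^ 4 :=
              hP1_bd t h0.le
            _ ≤ lam * (lam / 4) ^ 3 * t ^ 3 + b * (lam / 4) ^ 4 * t ^ 3 := by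
                have := mul_le_mul_of_nonneg_left ht43
                  (by positivity : (0:ℝ) ≤ b * (lam / 4) ^ 4)
                linarith
            _ = (lam * (lam / 4) ^ 3 + b * (lam / 4) ^ 4) / 6 * t * (6 * t ^ 2) := by ring
        rw [Real.norm_eq_abs, hCdef]
        calc |F t| ≤ |G t| / (3 * t ^ 3) + |D1 t| / (6 * t ^ 2) := e1
          _ ≤ (lam / 4) ^ 4 / 3 * t + (lam * (lam / 4) ^ 3 + b * (lam / 4) ^ 4) / 6 * t :=
            add_le_add e2 e3
          _ = ((lam / 4) ^ 4 / 3 + (lam * (lam / 4) ^ 3 + b * (lam / 4) ^ 4) / 6) * t := by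
            ring
    · have : Tendsto (fun t : ℝ => C * t) (𝓝 0) (𝓝 (C * 0)) :=
        (continuous_const.mul continuous_id).tendsto 0
      rw [mul_zero] at this
      exact this.mono_left nhdsWithin_le_nhds
  -- limit at infinity
  have hFtop : Tendsto F atTop (𝓝 0) := by
    apply squeeze_zero_norm' (a := fun t => (1 / 3 + (lam + b) / 6) * (t ^ 2)⁻¹)
    · filter_upwards [eventually_ge_atTop (1:ℝ)] with t ht1
      have h0 : (0:ℝ) < t := lt_of_lt_of_le one_pos ht1
      have e1 : |F t| ≤ |G t| / (3 * t ^ 3) + |D1 t| / (6 * t ^ 2) := by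
        rw [hFdef]
        simp only
        apply (abs_sub _ _).trans
        rw [abs_div, abs_div, abs_neg, abs_of_pos (by positivity : (0:ℝ) < 3 * t ^ 3),
          abs_of_pos (by positivity : (0:ℝ) < 6 * t ^ 2)]
      have e2 : |G t| / (3 * t ^ 3) ≤ 1 / 3 * (t ^ 2)⁻¹ := by
        rw [div_le_iff₀ (by positivity)]
        have heq : 1 / 3 * (t ^ 2)⁻¹ * (3 * t ^ 3) = t := by
          field_simp
        rw [heq]
        exact (hG_bd1 t).trans ht1
      have e3 : |D1 t| / (6 * t ^ 2) ≤ (lam + b) / 6 * (t ^ 2)⁻¹ := by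
        rw [div_le_iff₀ (by positivity), ← hP1D1]
        have heq : (lam + b) / 6 * (t ^ 2)⁻¹ * (6 * t ^ 2) = lam + b := by
          field_simp
        rw [heq]
        exact hP1_bd1 t
      rw [Real.norm_eq_abs]
      calc |F t| ≤ |G t| / (3 * t ^ 3) + |D1 t| / (6 * t ^ 2) := e1
        _ ≤ 1 / 3 * (t ^ 2)⁻¹ + (lam + b) / 6 * (t ^ 2)⁻¹ := add_le_add e2 e3
        _ = (1 / 3 + (lam + b) / 6) * (t ^ 2)⁻¹ := by ring
    · have h2 : Tendsto (fun t : ℝ => (t ^ 2)⁻¹) atTop (𝓝 0) :=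
        (tendsto_pow_atTop (two_ne_zero)).inv_tendsto_atTop
      have := h2.const_mul (1 / 3 + (lam + b) / 6)
      simpa using this
  -- derivative of F on Ioi 0
  have hF' : ∀ t ∈ Ioi (0:ℝ), HasDerivAt F (G t / t ^ 4 - D2 t / (6 * t ^ 2)) t := by
    intro t ht
    have ht0 : (0:ℝ) < t := ht
    have hd3 : HasDerivAt (fun t : ℝ => 3 * t ^ 3) (3 * (3 * t ^ 2)) t := by
      have h0 := (hasDerivAt_pow 3 t).const_mul (3:ℝ)
      refine h0.congr_deriv ?_ <;> push_cast <;> ring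
    have hd2 : HasDerivAt (fun t : ℝ => 6 * t ^ 2) (6 * (2 * t)) t := by
      have h0 := (hasDerivAt_pow 2 t).const_mul (6:ℝ)
      refine h0.congr_deriv ?_ <;> push_cast <;> ring
    have h1 := ((hGd t).fun_neg.div hd3 (by positivity))
    have h2 := ((hD2 t).div hd2 (by positivity))
    have h := h1.sub h2
    refine h.congr_deriv ?_
    field_simp
    ring
  -- continuity of the pieces
  have hGcont : Continuous G := by
    rw [hGdef]
    exact ((Real.continuous_sin.comp ((continuous_const.mul continuous_id).div_const 4)).pow
      4).mul (Real.continuous_cos.comp (continuous_const.mul continuous_id))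
  have hD2cont : Continuous D2 := by
    rw [hD2def]
    apply Continuous.div_const
    fun_prop
  -- integrability of G/t⁴
  have hIntG : IntegrableOn (fun t => G t / t ^ 4) (Ioi (0:ℝ)) := by
    apply intOn_helper _ ?_ ((lam / 4) ^ 4) 1
    · intro t ht
      have ht0 : 0 < t := ht.1
      rw [abs_div, abs_of_pos (by positivity : (0:ℝ) < t ^ 4), div_le_iff₀ (by positivity)]
      calc |G t| ≤ (lam / 4) ^ 4 * t ^ 4 := hG_bd t ht0.le
        _ = (lam / 4) ^ 4 * t ^ 4 := by ring
    · intro t ht1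
      have ht0 : (0:ℝ) < t := lt_of_lt_of_le one_pos ht1
      rw [abs_div, abs_of_pos (by positivity : (0:ℝ) < t ^ 4), div_le_div_iff₀ (by positivity)
        (by positivity)]
      have ht24 : t ^ 2 ≤ t ^ 4 := pow_le_pow_right₀ ht1 (by norm_num)
      calc |G t| * t ^ 2 ≤ 1 * t ^ 4 := mul_le_mul (hG_bd1 t) ht24 (by positivity) one_pos.le
        _ = 1 * t ^ 4 := by ring
    · exact ContinuousOn.div hGcont.continuousOn (continuous_pow 4).continuousOn
        (fun t ht => pow_ne_zero _ (ne_of_gt ht))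
  -- decomposition of D2/(6t²)
  have hdecomp : (fun t : ℝ => D2 t / (6 * t ^ 2)) = fun t : ℝ =>
      6 * b ^ 2 / 96 * ((1 - Real.cos (b * t)) / t ^ 2)
      - 4 * (lam / 2 + b) ^ 2 / 96 * ((1 - Real.cos ((lam / 2 + b) * t)) / t ^ 2)
      - 4 * (lam / 2 - b) ^ 2 / 96 * ((1 - Real.cos ((lam / 2 - b) * t)) / t ^ 2)
      + (lam + b) ^ 2 / 96 * ((1 - Real.cos ((lam + b) * t)) / t ^ 2)
      + (lam - b) ^ 2 / 96 * ((1 - Real.cos ((lam - b) * t)) / t ^ 2) := by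
    funext t
    rw [hD2H t]
    ring
  have hi1 := (one_sub_cos_omega_int hb).const_mul (6 * b ^ 2 / 96)
  have hi2 := (one_sub_cos_omega_int hw2).const_mul (4 * (lam / 2 + b) ^ 2 / 96)
  have hi3 := (one_sub_cos_omega_int hw3).const_mul (4 * (lam / 2 - b) ^ 2 / 96)
  have hi4 := (one_sub_cos_omega_int hw4).const_mul ((lam + b) ^ 2 / 96)
  have hi5 := (one_sub_cos_omega_int hw5).const_mul ((lam - b) ^ 2 / 96)
  have j1 : IntegrableOn (fun t : ℝ =>
      6 * b ^ 2 / 96 * ((1 - Real.cos (b * t)) / t ^ 2)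
      - 4 * (lam / 2 + b) ^ 2 / 96 * ((1 - Real.cos ((lam / 2 + b) * t)) / t ^ 2))
      (Ioi (0:ℝ)) := hi1.sub hi2
  have j2 : IntegrableOn (fun t : ℝ =>
      6 * b ^ 2 / 96 * ((1 - Real.cos (b * t)) / t ^ 2)
      - 4 * (lam / 2 + b) ^ 2 / 96 * ((1 - Real.cos ((lam / 2 + b) * t)) / t ^ 2)
      - 4 * (lam / 2 - b) ^ 2 / 96 * ((1 - Real.cos ((lam / 2 - b) * t)) / t ^ 2))
      (Ioi (0:ℝ)) := j1.sub hi3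
  have j3 : IntegrableOn (fun t : ℝ =>
      6 * b ^ 2 / 96 * ((1 - Real.cos (b * t)) / t ^ 2)
      - 4 * (lam / 2 + b) ^ 2 / 96 * ((1 - Real.cos ((lam / 2 + b) * t)) / t ^ 2)
      - 4 * (lam / 2 - b) ^ 2 / 96 * ((1 - Real.cos ((lam / 2 - b) * t)) / t ^ 2)
      + (lam + b) ^ 2 / 96 * ((1 - Real.cos ((lam + b) * t)) / t ^ 2))
      (Ioi (0:ℝ)) := j2.add hi4
  have j4 : IntegrableOn (fun t : ℝ =>
      6 * b ^ 2 / 96 * ((1 - Real.cos (b * t)) / t ^ 2)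
      - 4 * (lam / 2 + b) ^ 2 / 96 * ((1 - Real.cos ((lam / 2 + b) * t)) / t ^ 2)
      - 4 * (lam / 2 - b) ^ 2 / 96 * ((1 - Real.cos ((lam / 2 - b) * t)) / t ^ 2)
      + (lam + b) ^ 2 / 96 * ((1 - Real.cos ((lam + b) * t)) / t ^ 2)
      + (lam - b) ^ 2 / 96 * ((1 - Real.cos ((lam - b) * t)) / t ^ 2))
      (Ioi (0:ℝ)) := j3.add hi5
  have hIntD2 : IntegrableOn (fun t => D2 t / (6 * t ^ 2)) (Ioi (0:ℝ)) := by
    rw [hdecomp]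
    exact j4
  -- FTC
  have hftc := integral_Ioi_of_hasDerivAt_of_tendsto hFcont hF' (hIntG.sub hIntD2) hFtop
  rw [hF0, sub_zero] at hftc
  have hsplit : ∫ t in Ioi (0:ℝ), (G t / t ^ 4 - D2 t / (6 * t ^ 2))
      = (∫ t in Ioi (0:ℝ), G t / t ^ 4) - ∫ t in Ioi (0:ℝ), D2 t / (6 * t ^ 2) :=
    integral_sub hIntG hIntD2
  have hGint_eq : ∫ t in Ioi (0:ℝ), G t / t ^ 4 = ∫ t in Ioi (0:ℝ), D2 t / (6 * t ^ 2) := by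
    rw [hsplit] at hftc
    linarith
  -- evaluate ∫ D2/(6t²)
  have hD2val : ∫ t in Ioi (0:ℝ), D2 t / (6 * t ^ 2)
      = π * (lam ^ 3 - 6 * lam * b ^ 2 + 6 * b ^ 3) / 192 := by
    rw [hdecomp, integral_add j3 hi5, integral_add j2 hi4,
      integral_sub j1 hi3, integral_sub hi1 hi2,
      integral_const_mul, integral_const_mul, integral_const_mul, integral_const_mul,
      integral_const_mul, one_sub_cos_omega hb, one_sub_cos_omega hw2,
      one_sub_cos_omega hw3, one_sub_cos_omega hw4, one_sub_cos_omega hw5]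
    ring
  -- rewrite the original integrand
  have horig : ∫ t in Ioi (0:ℝ),
      Real.sin (lam * t / 4) ^ 4 / (lam ^ 3 * (t / 4) ^ 4) * Real.cos (b * t)
      = ∫ t in Ioi (0:ℝ), 256 / lam ^ 3 * (G t / t ^ 4) := by
    apply setIntegral_congr_fun measurableSet_Ioi
    intro t ht
    have ht0 : (0:ℝ) < t := ht
    rw [hGdef]
    simp only
    field_simp
    ring
  rw [horig, integral_const_mul, hGint_eq, hD2val]
  field_simp
  ring

theorem stmt_0 (lam : ℝ) (hlam : 0 < lam) (v : ℝ) (hv : |v| ≤ lam / 2) :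
    (3 / (4 * π)) * ∫ t in Set.Ioi (0:ℝ),
        (Real.sin (lam * t / 4)) ^ 4 / (lam ^ 3 * (t / 4) ^ 4) * Real.cos (v * t)
      = 1 - 6 * (v / lam) ^ 2 + 6 * (|v| / lam) ^ 3 := by
  have hcongr : ∫ t in Ioi (0:ℝ),
      Real.sin (lam * t / 4) ^ 4 / (lam ^ 3 * (t / 4) ^ 4) * Real.cos (v * t)
      = ∫ t in Ioi (0:ℝ),
      Real.sin (lam * t / 4) ^ 4 / (lam ^ 3 * (t / 4) ^ 4) * Real.cos (|v| * t) := by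
    apply setIntegral_congr_fun measurableSet_Ioi
    intro t ht
    have ht0 : (0:ℝ) < t := ht
    beta_reduce
    rw [show |v| * t = |v * t| by rw [abs_mul, abs_of_pos ht0], Real.cos_abs]
  rw [hcongr, main_aux lam |v| hlam (abs_nonneg v) hv]
  rw [show |v| ^ 2 = v ^ 2 from sq_abs v]
  field_simp [Real.pi_ne_zero]
end

section
/- For all real ν with λ/2 ≤ |ν| ≤ λ (where λ > 0), one has (3/(4π)) ∫₀^∞ (sin⁴(λt/4)/(λ³(t/4)⁴)) cos(νt) dt = 2(1 - |ν|/λ)³, and for |ν| ≥ λ the integral equals 0. -/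
open Real MeasureTheory
open Set intervalIntegral

noncomputable def Bsp (x : ℝ) : ℝ := (max (4 - |x|) 0)^3 / 48 - (max (2 - |x|) 0)^3 / 12

lemma Bsp_cont : Continuous Bsp := by
  unfold Bsp; fun_prop

lemma Bsp_even (x : ℝ) : Bsp (-x) = Bsp x := by simp [Bsp]

lemma Bsp_zero {x : ℝ} (hx : 4 ≤ |x|) : Bsp x = 0 := by
  have h1 : max (4 - |x|) 0 = 0 := max_eq_right (by linarith)
  have h2 : max (2 - |x|) 0 = 0 := max_eq_right (by linarith)
  simp [Bsp, h1, h2]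

lemma cube_antideriv (r a : ℝ) (ha : a ≠ 0) (x : ℝ) :
    HasDerivAt (fun x : ℝ => (r-x)^3 * Real.sin (a*x)/a - 3*(r-x)^2 * Real.cos (a*x)/a^2
      - 6*(r-x) * Real.sin (a*x)/a^3 + 6 * Real.cos (a*x)/a^4)
      ((r-x)^3 * Real.cos (a*x)) x := by
  have hs : HasDerivAt (fun x : ℝ => Real.sin (a*x)) (Real.cos (a*x) * a) x := by
    simpa [Function.comp_def] using (Real.hasDerivAt_sin (a*x)).comp x ((hasDerivAt_id x).const_mul a)
  have hc : HasDerivAt (fun x : ℝ => Real.cos (a*x)) (-Real.sin (a*x) * a) x := by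
    simpa [Function.comp_def] using (Real.hasDerivAt_cos (a*x)).comp x ((hasDerivAt_id x).const_mul a)
  have hp3 : HasDerivAt (fun x : ℝ => (r-x)^3) (-(3*(r-x)^2)) x := by
    simpa [Pi.pow_def] using (((hasDerivAt_id x).const_sub r).pow 3)
  have hp2 : HasDerivAt (fun x : ℝ => (r-x)^2) (-(2*(r-x))) x := by
    simpa [Pi.pow_def] using (((hasDerivAt_id x).const_sub r).pow 2)
  have hp1 : HasDerivAt (fun x : ℝ => r-x) (-1) x := by
    simpa using ((hasDerivAt_id x).const_sub r)
  have H := ((((hp3.mul hs).div_const a).sub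
      (((hp2.const_mul 3).mul hc).div_const (a^2))).sub
      (((hp1.const_mul 6).mul hs).div_const (a^3))).add ((hc.const_mul 6).div_const (a^4))
  convert H using 1 <;> try rfl
  field_simp
  ring

lemma cube_int (r a : ℝ) (ha : a ≠ 0) :
    ∫ x in (0:ℝ)..r, (r-x)^3 * Real.cos (a*x)
      = (3*a^2*r^2 + 6*Real.cos (a*r) - 6)/a^4 := by
  rw [intervalIntegral.integral_eq_sub_of_hasDerivAt
    (fun x _ => cube_antideriv r a ha x)
    (by apply Continuous.intervalIntegrable; fun_prop)]
  simp only [sub_self, mul_zero, Real.sin_zero, Real.cos_zero]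
  field_simp
  ring

lemma K_int (r a : ℝ) (hr : 0 < r) (ha : a ≠ 0) :
    ∫ x : ℝ, (max (r - |x|) 0)^3 * Real.cos (a*x)
      = 2*(3*a^2*r^2 + 6*Real.cos (a*r) - 6)/a^4 := by
  set h : ℝ → ℝ := fun x => (max (r - |x|) 0)^3 * Real.cos (a*x) with hh
  have hcont : Continuous h := by simp only [hh]; fun_prop
  have hvan : ∀ x ∉ Icc (-r) r, h x = 0 := by
    intro x hx
    have : r ≤ |x| := by
      rcases abs_cases x with ⟨h1, _⟩ | ⟨h1, _⟩ <;> simp only [mem_Icc, not_and_or, not_le] at hx <;>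
        rcases hx with h2 | h2 <;> linarith
    have : max (r - |x|) 0 = 0 := max_eq_right (by linarith)
    simp [hh, this]
  have h1 : ∫ x : ℝ, h x = ∫ x in Icc (-r) r, h x :=
    (setIntegral_eq_integral_of_forall_compl_eq_zero hvan).symm
  have h2 : ∫ x in Icc (-r) r, h x = ∫ x in (-r)..r, h x := by
    rw [intervalIntegral.integral_of_le (by linarith), integral_Icc_eq_integral_Ioc]
  have h3 : ∫ x in (-r)..(0:ℝ), h x = ∫ x in (0:ℝ)..r, h x := by
    have heven : ∀ x, h (-x) = h x := by
      intro x
      simp only [hh, abs_neg, mul_neg]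
      rw [Real.cos_neg]
    have := intervalIntegral.integral_comp_neg (a := 0) (b := r) h
    rw [neg_zero] at this
    rw [← this]
    exact intervalIntegral.integral_congr fun x _ => heven x
  have h4 : ∫ x in (0:ℝ)..r, h x = ∫ x in (0:ℝ)..r, (r-x)^3 * Real.cos (a*x) := by
    apply intervalIntegral.integral_congr
    intro x hx
    rw [uIcc_of_le (by linarith)] at hx
    have hx0 : 0 ≤ x := hx.1
    have hxr : x ≤ r := hx.2
    simp [hh, abs_of_nonneg hx0, max_eq_left (by linarith : (0:ℝ) ≤ r - x)]
  have h5 : ∫ x in (-r)..r, h x = (∫ x in (-r)..(0:ℝ), h x) + ∫ x in (0:ℝ)..r, h x :=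
    (intervalIntegral.integral_add_adjacent_intervals
      (hcont.intervalIntegrable _ _) (hcont.intervalIntegrable _ _)).symm
  rw [h1, h2, h5, h3, h4, cube_int r a ha]
  ring

open FourierTransform Complex in
lemma K_integrable (r a : ℝ) : Integrable
    (fun x : ℝ => (max (r - |x|) 0)^3 * Real.cos (a*x)) := by
  apply Continuous.integrable_of_hasCompactSupport (by fun_prop)
  apply HasCompactSupport.intro (isCompact_Icc (a := -(|r|+1)) (b := |r|+1))
  intro x hx
  simp only [mem_Icc, not_and_or, not_le] at hx
  have hr : r ≤ |x| := by
    rcases abs_cases x with ⟨h1, _⟩ | ⟨h1, _⟩ <;> rcases hx with h2 | h2 <;>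
      [skip; skip; skip; skip] <;>
      nlinarith [le_abs_self r, neg_abs_le r]
  have : max (r - |x|) 0 = 0 := max_eq_right (by linarith)
  simp [this]

lemma Bsp_mul_integrable (g : ℝ → ℝ) (hg : Continuous g) :
    Integrable (fun x => Bsp x * g x) := by
  apply Continuous.integrable_of_hasCompactSupport ((Bsp_cont).mul hg)
  apply HasCompactSupport.intro (isCompact_Icc (a := (-4:ℝ)) (b := 4))
  intro x hx
  simp only [mem_Icc, not_and_or, not_le] at hx
  have : 4 ≤ |x| := by
    rcases abs_cases x with ⟨h1, _⟩ | ⟨h1, _⟩ <;> rcases hx with h2 | h2 <;> linarith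
  simp [Bsp_zero this]

lemma odd_integral_zero (f : ℝ → ℝ) (hodd : ∀ x, f (-x) = - f x) :
    ∫ x : ℝ, f x = 0 := by
  have h := MeasureTheory.integral_neg_eq_self f (volume : Measure ℝ)
  simp_rw [hodd] at h
  rw [MeasureTheory.integral_neg] at h
  linarith

lemma trig_id (c : ℝ) (hc : c ≠ 0) :
    2*(3*c^2*4^2 + 6*Real.cos (c*4) - 6)/c^4 * (1/48)
      - 2*(3*c^2*2^2 + 6*Real.cos (c*2) - 6)/c^4 * (1/12)
      = 2 * Real.sin c ^ 4 / c^4 := by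
  have hk : Real.cos c^2 = 1 - Real.sin c^2 := by
    have := Real.sin_sq_add_cos_sq c; linarith
  have e2 : Real.cos (c*2) = 1 - 2*Real.sin c^2 := by
    rw [show c*2 = 2*c by ring, Real.cos_two_mul]; linarith
  have e4 : Real.cos (c*4) = 1 - 8*Real.sin c^2 + 8*Real.sin c^4 := by
    have h1 : Real.cos (c*4) = 1 - 2*Real.sin (c*2)^2 := by
      rw [show c*4 = 2*(c*2) by ring, Real.cos_two_mul]
      have := Real.sin_sq_add_cos_sq (c*2); linarith
    have hs2 : Real.sin (c*2) = 2 * Real.sin c * Real.cos c := by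
      rw [show c*2 = 2*c by ring]; exact Real.sin_two_mul c
    rw [h1, hs2]
    linear_combination (-8*Real.sin c^2) * hk
  rw [e4, e2]
  field_simp
  ring

open FourierTransform Complex in
lemma Bc_fourier {ξ : ℝ} (hξ : ξ ≠ 0) :
    𝓕 (fun x : ℝ => (Bsp x : ℂ)) ξ
      = ((2 * Real.sin (2*π*ξ)^4 / (2*π*ξ)^4 : ℝ) : ℂ) := by
  have hπ := Real.pi_ne_zero
  set c : ℝ := 2*π*ξ with hc
  have hcne : c ≠ 0 := by
    simp only [hc]
    exact mul_ne_zero (mul_ne_zero two_ne_zero hπ) hξ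
  rw [Real.fourier_real_eq_integral_exp_smul]
  have key : ∀ v : ℝ, Complex.exp (↑(-2 * π * v * ξ) * Complex.I) • ((Bsp v : ℂ))
      = ((Bsp v * Real.cos (c*v) : ℝ) : ℂ)
        + ((-(Bsp v * Real.sin (c*v)) : ℝ) : ℂ) * Complex.I := by
    intro v
    rw [smul_eq_mul, Complex.exp_mul_I, ← Complex.ofReal_cos, ← Complex.ofReal_sin,
      show (-2 * π * v * ξ : ℝ) = -(c*v) by rw [hc]; ring, Real.cos_neg, Real.sin_neg]
    push_cast
    ring
  simp_rw [key]
  have int1 : Integrable (fun v => ((Bsp v * Real.cos (c*v) : ℝ) : ℂ)) :=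
    (Bsp_mul_integrable _ (by fun_prop)).ofReal
  have int2 : Integrable (fun v => ((-(Bsp v * Real.sin (c*v)) : ℝ) : ℂ) * Complex.I) :=
    ((Bsp_mul_integrable _ (by fun_prop)).neg.ofReal).mul_const _
  rw [MeasureTheory.integral_add int1 int2]
  have hsin : ∫ v : ℝ, ((-(Bsp v * Real.sin (c*v)) : ℝ) : ℂ) * Complex.I = 0 := by
    have hz : ∫ v : ℝ, -(Bsp v * Real.sin (c*v)) = 0 := by
      apply odd_integral_zero
      intro x
      rw [Bsp_even, mul_neg, Real.sin_neg]
      ring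
    have hcast1 : (∫ v : ℝ, ((-(Bsp v * Real.sin (c*v)) : ℝ) : ℂ))
        = ((∫ v : ℝ, -(Bsp v * Real.sin (c*v)) : ℝ) : ℂ) := integral_ofReal
    calc ∫ v : ℝ, ((-(Bsp v * Real.sin (c*v)) : ℝ) : ℂ) * Complex.I
        = (∫ v : ℝ, ((-(Bsp v * Real.sin (c*v)) : ℝ) : ℂ)) * Complex.I := by
          simp_rw [mul_comm _ Complex.I]
          rw [MeasureTheory.integral_const_mul]
      _ = 0 := by rw [hcast1, hz]; simp
  have hcast2 : (∫ v : ℝ, ((Bsp v * Real.cos (c*v) : ℝ) : ℂ))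
      = ((∫ v : ℝ, Bsp v * Real.cos (c*v) : ℝ) : ℂ) := integral_ofReal
  rw [hsin, add_zero, hcast2]
  norm_cast
  have hsplit : ∀ v : ℝ, Bsp v * Real.cos (c*v)
      = (max (4 - |v|) 0)^3 * Real.cos (c*v) * (1/48)
        - (max (2 - |v|) 0)^3 * Real.cos (c*v) * (1/12) := by
    intro v; simp only [Bsp]; ring
  simp_rw [hsplit]
  rw [MeasureTheory.integral_sub ((K_integrable 4 c).mul_const _)
    ((K_integrable 2 c).mul_const _),
    MeasureTheory.integral_mul_const, MeasureTheory.integral_mul_const,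
    K_int 4 c (by norm_num) hcne, K_int 2 c (by norm_num) hcne]
  exact trig_id c hcne

lemma master_integrable : Integrable (fun u : ℝ => Real.sin u^4/u^4) := by
  apply Integrable.mono' (integrable_inv_one_add_sq.const_mul 2)
  · exact ((Real.measurable_sin.pow_const 4).div (measurable_id.pow_const 4)).aestronglyMeasurable
  · filter_upwards with x
    rcases eq_or_ne x 0 with rfl | hx
    · simp only [Real.sin_zero, ne_eq, zero_pow, OfNat.ofNat_ne_zero, not_false_eq_true, zero_div, norm_zero]
      positivity
    have hsin : Real.sin x ^ 2 ≤ x ^ 2 := by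
      have h1 : |Real.sin x| ≤ |x| := Real.abs_sin_le_abs
      calc Real.sin x ^ 2 = |Real.sin x|^2 := (sq_abs _).symm
        _ ≤ |x|^2 := by gcongr
        _ = x^2 := sq_abs x
    have hsin1 : Real.sin x ^ 2 ≤ 1 := by
      calc Real.sin x ^ 2 = |Real.sin x|^2 := (sq_abs _).symm
        _ ≤ 1^2 := by gcongr; exact Real.abs_sin_le_one x
        _ = 1 := one_pow 2
    have hx4 : (0:ℝ) < x^4 := by positivity
    have hnn : (0:ℝ) ≤ Real.sin x^4/x^4 := by positivity
    rw [Real.norm_eq_abs, abs_of_nonneg hnn, div_le_iff₀ hx4]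
    have h1x : (0:ℝ) < 1 + x^2 := by positivity
    rw [show (2:ℝ) * (1+x^2)⁻¹ * x^4 = 2*x^4/(1+x^2) by ring, le_div_iff₀ h1x]
    have hs4 : Real.sin x ^ 4 = (Real.sin x^2)^2 := by ring
    have h4 : Real.sin x ^ 4 ≤ 1 := by nlinarith [sq_nonneg (Real.sin x)]
    have h4' : Real.sin x ^ 4 ≤ x^4 := by nlinarith [sq_nonneg (Real.sin x), sq_nonneg x]
    rcases le_total (x^2) 1 with h | h
    · nlinarith [sq_nonneg (Real.sin x), sq_nonneg x, pow_nonneg (sq_nonneg x) 2]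
    · have hx2 : x^2 ≤ x^4 := by nlinarith
      nlinarith [sq_nonneg x]

open FourierTransform Complex in
lemma key_identity (x₀ : ℝ) :
    ∫ u : ℝ, Real.sin u^4/u^4 * Real.cos (x₀*u) = π * Bsp x₀ := by
  have hπ := Real.pi_ne_zero
  have h2π : (2*π : ℝ) ≠ 0 := mul_ne_zero two_ne_zero hπ
  have h2πpos : (0:ℝ) < 2*π := by positivity
  set Bc : ℝ → ℂ := fun x => (Bsp x : ℂ) with hBc
  have hBint : Integrable Bc := by
    have := (Bsp_mul_integrable (fun _ => 1) continuous_const)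
    exact this.ofReal.congr (by filter_upwards with x; simp [hBc])
  have hBcont : Continuous Bc := Complex.continuous_ofReal.comp Bsp_cont
  set g : ℝ → ℝ := fun ξ => 2 * Real.sin (2*π*ξ)^4 / (2*π*ξ)^4 with hg
  have hae0 : ({(0:ℝ)}ᶜ : Set ℝ) ∈ ae (volume : Measure ℝ) :=
    compl_mem_ae_iff.mpr (measure_singleton 0)
  have hFae : 𝓕 Bc =ᵐ[volume] fun ξ => ((g ξ : ℝ) : ℂ) := by
    filter_upwards [hae0] with ξ hξ
    exact Bc_fourier (by simpa using hξ)
  have hgint : Integrable g := by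
    have h1 : Integrable (fun ξ : ℝ => Real.sin (2*π*ξ)^4/(2*π*ξ)^4) :=
      master_integrable.comp_mul_left' h2π
    have := h1.const_mul 2
    apply this.congr
    filter_upwards with ξ
    rw [hg]
    ring
  have hFint : Integrable (𝓕 Bc) := (hgint.ofReal).congr hFae.symm
  have hinv : 𝓕⁻ (𝓕 Bc) x₀ = Bc x₀ :=
    hBint.fourierInv_fourier_eq hFint hBcont.continuousAt
  rw [Real.fourierInv_eq_fourier_neg,
    Real.fourier_real_eq_integral_exp_smul] at hinv
  have harg : ∀ v : ℝ, (-2 * π * v * -x₀ : ℝ) = 2*π*v*x₀ := fun v => by ring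
  simp_rw [harg] at hinv
  have hinv2 : (∫ v : ℝ, Complex.exp (↑(2*π*v*x₀ : ℝ) * Complex.I) • ((g v : ℝ) : ℂ))
      = ((Bsp x₀ : ℝ) : ℂ) := by
    rw [show ((Bsp x₀ : ℝ) : ℂ) = Bc x₀ from rfl, ← hinv]
    apply MeasureTheory.integral_congr_ae
    filter_upwards [hFae] with v hv
    rw [hv]
  have key : ∀ v : ℝ, Complex.exp (↑(2*π*v*x₀ : ℝ) * Complex.I) • ((g v : ℝ) : ℂ)
      = ((g v * Real.cos (2*π*v*x₀) : ℝ) : ℂ)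
        + ((g v * Real.sin (2*π*v*x₀) : ℝ) : ℂ) * Complex.I := by
    intro v
    rw [smul_eq_mul, Complex.exp_mul_I, ← Complex.ofReal_cos, ← Complex.ofReal_sin]
    push_cast
    ring
  simp_rw [key] at hinv2
  have hmeasg : AEStronglyMeasurable g (volume : Measure ℝ) := hgint.aestronglyMeasurable
  have hmc : AEStronglyMeasurable (fun v => g v * Real.cos (2*π*v*x₀)) (volume : Measure ℝ) := by
    apply (hmeasg.mul ?_)
    exact (Real.continuous_cos.comp (by continuity)).aestronglyMeasurable
  have hms : AEStronglyMeasurable (fun v => g v * Real.sin (2*π*v*x₀)) (volume : Measure ℝ) := by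
    apply (hmeasg.mul ?_)
    exact (Real.continuous_sin.comp (by continuity)).aestronglyMeasurable
  have hintc : Integrable (fun v => g v * Real.cos (2*π*v*x₀)) := by
    apply hgint.abs.mono' hmc
    filter_upwards with v
    rw [Real.norm_eq_abs, abs_mul]
    calc |g v| * |Real.cos (2*π*v*x₀)| ≤ |g v| * 1 := by
          gcongr; exact Real.abs_cos_le_one _
      _ = |g v| := mul_one _
  have hints : Integrable (fun v => g v * Real.sin (2*π*v*x₀)) := by
    apply hgint.abs.mono' hms
    filter_upwards with v
    rw [Real.norm_eq_abs, abs_mul]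
    calc |g v| * |Real.sin (2*π*v*x₀)| ≤ |g v| * 1 := by
          gcongr; exact Real.abs_sin_le_one _
      _ = |g v| := mul_one _
  have hI1 : Integrable (fun v => ((g v * Real.cos (2*π*v*x₀) : ℝ) : ℂ)) := hintc.ofReal
  have hI2 : Integrable (fun v => ((g v * Real.sin (2*π*v*x₀) : ℝ) : ℂ) * Complex.I) :=
    hints.ofReal.mul_const Complex.I
  rw [MeasureTheory.integral_add hI1 hI2] at hinv2
  have hcast1 : (∫ v : ℝ, ((g v * Real.cos (2*π*v*x₀) : ℝ) : ℂ))
      = ((∫ v : ℝ, g v * Real.cos (2*π*v*x₀) : ℝ) : ℂ) := integral_ofReal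
  have hcast2 : (∫ v : ℝ, ((g v * Real.sin (2*π*v*x₀) : ℝ) : ℂ) * Complex.I)
      = ((∫ v : ℝ, g v * Real.sin (2*π*v*x₀) : ℝ) : ℂ) * Complex.I := by
    simp_rw [mul_comm _ Complex.I]
    rw [MeasureTheory.integral_const_mul]
    rw [show (∫ v : ℝ, ((g v * Real.sin (2*π*v*x₀) : ℝ) : ℂ))
      = ((∫ v : ℝ, g v * Real.sin (2*π*v*x₀) : ℝ) : ℂ) from integral_ofReal]
  rw [hcast1, hcast2] at hinv2
  have hre : ∫ v : ℝ, g v * Real.cos (2*π*v*x₀) = Bsp x₀ := by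
    have := congrArg Complex.re hinv2
    simpa using this
  -- now substitute u = 2π v
  have hcomp : ∀ v : ℝ, g v * Real.cos (2*π*v*x₀)
      = (fun u => 2 * (Real.sin u^4/u^4 * Real.cos (x₀*u))) (2*π*v) := by
    intro v
    simp only [hg]
    rw [show x₀*(2*π*v) = 2*π*v*x₀ by ring]
    ring
  simp_rw [hcomp] at hre
  rw [MeasureTheory.Measure.integral_comp_mul_left
    (fun u => 2 * (Real.sin u^4/u^4 * Real.cos (x₀*u))) (2*π)] at hre
  rw [MeasureTheory.integral_const_mul, abs_of_pos (by positivity : (0:ℝ) < (2*π)⁻¹),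
    smul_eq_mul] at hre
  have hthis : (2*π)⁻¹ * (2 * ∫ u : ℝ, Real.sin u^4/u^4 * Real.cos (x₀*u)) = Bsp x₀ := hre
  have h3 : (2*π) * ((2*π)⁻¹ * (2 * ∫ u : ℝ, Real.sin u^4/u^4 * Real.cos (x₀*u)))
      = (2*π) * Bsp x₀ := by rw [hthis]
  rw [← mul_assoc, mul_inv_cancel₀ h2π, one_mul] at h3
  linarith

lemma Bsp_abs (x : ℝ) : Bsp |x| = Bsp x := by
  rcases abs_cases x with ⟨h, _⟩ | ⟨h, _⟩
  · rw [h]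
  · rw [h, Bsp_even]

lemma Bsp_val {x : ℝ} (h2 : 2 ≤ x) (h4 : x ≤ 4) : Bsp x = (4-x)^3/48 := by
  rw [Bsp, abs_of_nonneg (by linarith), max_eq_left (by linarith),
    max_eq_right (by linarith : (2:ℝ) - x ≤ 0)]
  norm_num

lemma h_integrable (c : ℝ) :
    Integrable (fun s : ℝ => Real.sin s^4/s^4 * Real.cos (c*s)) := by
  apply master_integrable.abs.mono'
  · exact (((Real.measurable_sin.pow_const 4).div (measurable_id.pow_const 4)).mul
      (Real.measurable_cos.comp (measurable_id.const_mul c))).aestronglyMeasurable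
  · filter_upwards with s
    rw [Real.norm_eq_abs, abs_mul]
    calc |Real.sin s^4/s^4| * |Real.cos (c*s)| ≤ |Real.sin s^4/s^4| * 1 := by
          gcongr; exact Real.abs_cos_le_one _
      _ = |Real.sin s^4/s^4| := mul_one _

lemma half_line (c : ℝ) :
    ∫ s in Set.Ioi (0:ℝ), Real.sin s^4/s^4 * Real.cos (c*s) = π * Bsp c / 2 := by
  set h : ℝ → ℝ := fun s => Real.sin s^4/s^4 * Real.cos (c*s) with hh
  have hint := h_integrable c
  have heven : ∀ s : ℝ, h (-s) = h s := by
    intro s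
    simp only [hh, mul_neg, Real.cos_neg, Real.sin_neg]
    rw [show (-Real.sin s)^4 = Real.sin s^4 by ring, show (-s)^4 = s^4 by ring]
  have hsplit : (∫ s in Set.Iic (0:ℝ), h s) + (∫ s in Set.Ioi (0:ℝ), h s) = ∫ s : ℝ, h s :=
    integral_Iic_add_Ioi hint.integrableOn hint.integrableOn
  have hneg : ∫ s in Set.Iic (0:ℝ), h s = ∫ s in Set.Ioi (0:ℝ), h s := by
    have := integral_comp_neg_Ioi (0:ℝ) h
    rw [neg_zero] at this
    rw [← this]
    apply MeasureTheory.integral_congr_ae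
    filter_upwards with s using heven s
  have hfull : ∫ s : ℝ, h s = π * Bsp c := key_identity c
  rw [hneg, hfull] at hsplit
  linarith

theorem stmt_1 (lam : ℝ) (hlam : 0 < lam) (v : ℝ) :
    (lam / 2 ≤ |v| → |v| ≤ lam →
      (3 / (4 * π)) * ∫ t in Set.Ioi (0:ℝ),
          (Real.sin (lam * t / 4)) ^ 4 / (lam ^ 3 * (t / 4) ^ 4) * Real.cos (v * t)
        = 2 * (1 - |v| / lam) ^ 3) ∧
    (lam ≤ |v| →
      (3 / (4 * π)) * ∫ t in Set.Ioi (0:ℝ),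
          (Real.sin (lam * t / 4)) ^ 4 / (lam ^ 3 * (t / 4) ^ 4) * Real.cos (v * t)
        = 0) := by
  have hπ := Real.pi_ne_zero
  have hπpos := Real.pi_pos
  have hlamne : lam ≠ 0 := hlam.ne'
  set μ : ℝ := 4*v/lam with hμ
  have habs : |μ| = 4*|v|/lam := by
    rw [hμ, abs_div, abs_of_pos hlam, abs_mul]
    norm_num
  have htrans : ∀ t : ℝ, (Real.sin (lam * t / 4)) ^ 4 / (lam ^ 3 * (t / 4) ^ 4) * Real.cos (v * t)
      = (fun s => lam * (Real.sin s^4/s^4 * Real.cos (μ*s))) ((lam/4) * t) := by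
    intro t
    simp only
    rcases eq_or_ne t 0 with rfl | ht
    · simp
    · have harg : μ * (lam/4*t) = v*t := by rw [hμ]; field_simp
      rw [harg, show lam * t/4 = lam/4*t by ring]
      have h1 : lam/4*t ≠ 0 := mul_ne_zero (div_ne_zero hlamne (by norm_num)) ht
      field_simp
  have hIoi : (∫ t in Set.Ioi (0:ℝ),
        (Real.sin (lam * t / 4)) ^ 4 / (lam ^ 3 * (t / 4) ^ 4) * Real.cos (v * t))
      = 2 * π * Bsp μ := by
    rw [setIntegral_congr_fun measurableSet_Ioi (fun t _ => htrans t),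
      MeasureTheory.integral_comp_mul_left_Ioi
        (fun s => lam * (Real.sin s^4/s^4 * Real.cos (μ*s))) 0 (by positivity : (0:ℝ) < lam/4),
      mul_zero, MeasureTheory.integral_const_mul, half_line μ, smul_eq_mul]
    field_simp
    ring
  constructor
  · intro h1 h2
    have h1' : 2 ≤ |μ| := by
      rw [habs, le_div_iff₀ hlam]
      linarith
    have h2' : |μ| ≤ 4 := by
      rw [habs, div_le_iff₀ hlam]
      linarith
    rw [hIoi, ← Bsp_abs, Bsp_val h1' h2', habs]
    field_simp
    ring
  · intro h1
    have h4 : 4 ≤ |μ| := by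
      rw [habs, le_div_iff₀ hlam]
      linarith
    rw [hIoi, ← Bsp_abs, Bsp_zero (by rwa [abs_abs])]
    ring
end

section
/- Let a, b, c be real constants. The function φ(y,v) = (|y|+1)^{-a} (|v|+1)^{-b} (|y+v|+1)^{-c} is integrable over ℝ² if and only if a+b > 1, a+c > 1, b+c > 1, and a+b+c > 2. -/
open MeasureTheory Set Real

namespace Stmt3

noncomputable def g (s x : ℝ) : ℝ := (|x| + 1) ^ (-s)

lemma ab_pos (x : ℝ) : (0:ℝ) < |x| + 1 := by positivity

lemma one_le_ab (x : ℝ) : (1:ℝ) ≤ |x| + 1 := by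
  have := abs_nonneg x; linarith

lemma g_pos (s x : ℝ) : 0 < g s x := rpow_pos_of_pos (ab_pos x) _

lemma g_nonneg (s x : ℝ) : 0 ≤ g s x := (g_pos s x).le

lemma peetre (x y : ℝ) : |x + y| + 1 ≤ (|x| + 1) * (|y| + 1) := by
  nlinarith [abs_add_le x y, abs_nonneg x, abs_nonneg y]

lemma g_measurable (s : ℝ) : Measurable (g s) := by
  unfold g; fun_prop

lemma g_mul (s t x : ℝ) : g s x * g t x = g (s + t) x := by
  rw [g, g, g, neg_add, rpow_add (ab_pos x)]

lemma g_neg_arg (s x : ℝ) : g s (-x) = g s x := by rw [g, g, abs_neg]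

/-- comparison on a band: if `A ≤ B ≤ M * A` with `1 ≤ A`, `1 ≤ M`, then
`M ^ (-|t|) * A ^ (-t) ≤ B ^ (-t)`. -/
lemma band (t : ℝ) {M A B : ℝ} (hA : 1 ≤ A) (hM : 1 ≤ M) (h1 : A ≤ B) (h2 : B ≤ M * A) :
    M ^ (-|t|) * A ^ (-t) ≤ B ^ (-t) := by
  have hA0 : (0:ℝ) < A := lt_of_lt_of_le one_pos hA
  have hM0 : (0:ℝ) < M := lt_of_lt_of_le one_pos hM
  rcases le_or_gt 0 t with ht | ht
  · rw [abs_of_nonneg ht]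
    calc M ^ (-t) * A ^ (-t) = (M * A) ^ (-t) := (mul_rpow hM0.le hA0.le).symm
      _ ≤ B ^ (-t) := rpow_le_rpow_of_nonpos (lt_of_lt_of_le hA0 h1) h2 (by linarith)
  · rw [abs_of_neg ht]
    have e1 : A ^ (-t) ≤ B ^ (-t) := rpow_le_rpow hA0.le h1 (by linarith)
    have e2 : M ^ (- -t) ≤ 1 := by
      rw [← rpow_zero M]
      exact rpow_le_rpow_of_exponent_le hM (by linarith)
    nlinarith [rpow_nonneg hA0.le (-t), rpow_nonneg hM0.le (- -t)]

/-- `g s (u + v) ≥ (|u|+1) ^ (-|s|) * g s v`. -/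
lemma key_lower (s u v : ℝ) : (|u| + 1) ^ (-|s|) * g s v ≤ g s (u + v) := by
  have hu := ab_pos u; have hv := ab_pos v; have huv := ab_pos (u + v)
  rcases le_or_gt 0 s with hs | hs
  · rw [abs_of_nonneg hs]
    calc (|u| + 1) ^ (-s) * g s v = ((|u| + 1) * (|v| + 1)) ^ (-s) := by
          rw [g, mul_rpow hu.le hv.le]
      _ ≤ g s (u + v) := rpow_le_rpow_of_nonpos huv (peetre u v) (by linarith)
  · rw [abs_of_neg hs]
    have hp : |v| + 1 ≤ (|u| + 1) * (|u + v| + 1) := by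
      have h := peetre (-u) (u + v)
      rw [show -u + (u + v) = v by ring, abs_neg] at h
      exact h
    have e1 : (|v| + 1) ^ (-s) ≤ ((|u| + 1) * (|u + v| + 1)) ^ (-s) :=
      rpow_le_rpow hv.le hp (by linarith)
    rw [mul_rpow hu.le huv.le] at e1
    have e2 : (|u| + 1) ^ (- -s) * (|v| + 1) ^ (-s) ≤
        (|u| + 1) ^ (- -s) * ((|u| + 1) ^ (-s) * (|u + v| + 1) ^ (-s)) := by
      have := rpow_nonneg hu.le (- -s)
      nlinarith
    calc (|u| + 1) ^ (- -s) * g s v ≤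
        (|u| + 1) ^ (- -s) * ((|u| + 1) ^ (-s) * (|u + v| + 1) ^ (-s)) := e2
      _ = ((|u| + 1) ^ (- -s) * (|u| + 1) ^ (-s)) * (|u + v| + 1) ^ (-s) := by ring
      _ = g s (u + v) := by
          rw [← rpow_add hu, neg_neg, add_neg_cancel, rpow_zero, one_mul]; rfl

lemma g_integrable {s : ℝ} (h : 1 < s) : Integrable (g s) := by
  have h' : ((Module.finrank ℝ ℝ : ℝ)) < s := by simpa using h
  have h2 := integrable_one_add_norm (E := ℝ) (μ := volume) h'
  have he : (fun x : ℝ => (1 + ‖x‖) ^ (-s)) = g s := by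
    funext x; rw [g, Real.norm_eq_abs, add_comm]
  rwa [he] at h2

lemma g_not_integrable {s : ℝ} (h : s ≤ 1) : ¬ Integrable (g s) := by
  intro H
  have H1 : IntegrableOn (g s) (Ioi 1) := H.integrableOn
  have H2 : IntegrableOn (fun x : ℝ => x ^ (-s)) (Ioi 1) := by
    refine Integrable.mono' (H1.const_mul ((2:ℝ) ^ |s|)) ?_ ?_
    · exact Measurable.aestronglyMeasurable (by fun_prop)
    · rw [ae_restrict_iff' measurableSet_Ioi]
      refine ae_of_all _ (fun x hx => ?_)
      have hx1 : (1:ℝ) < x := hx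
      have hx0 : (0:ℝ) < x := by linarith
      have hb := band s (M := 2) (A := x) (B := |x| + 1) hx1.le one_le_two
        (by rw [abs_of_pos hx0]; linarith) (by rw [abs_of_pos hx0]; linarith)
      have h2 : (0:ℝ) < (2:ℝ) ^ (-|s|) := rpow_pos_of_pos two_pos _
      rw [Real.norm_eq_abs, abs_of_nonneg (rpow_nonneg hx0.le _)]
      have e : (2:ℝ) ^ |s| * ((2:ℝ) ^ (-|s|)) = 1 := by
        rw [← rpow_add two_pos, add_neg_cancel, rpow_zero]
      have h3 : (0:ℝ) < (2:ℝ) ^ |s| := rpow_pos_of_pos two_pos _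
      calc x ^ (-s) = (2:ℝ) ^ |s| * ((2:ℝ) ^ (-|s|) * x ^ (-s)) := by
            rw [← mul_assoc, e, one_mul]
        _ ≤ (2:ℝ) ^ |s| * g s x := by
            rw [g]; nlinarith
  rw [integrableOn_Ioi_rpow_iff one_pos] at H2
  linarith

/-! ### measure-preserving transformations of the plane -/

/-- the shear `(x, y) ↦ (x, x + y)` as a measurable equiv -/
def shear : ℝ × ℝ ≃ᵐ ℝ × ℝ where
  toFun := fun p => (p.1, p.1 + p.2)
  invFun := fun p => (p.1, p.2 - p.1)
  left_inv := fun p => by simp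
  right_inv := fun p => by simp
  measurable_toFun := by dsimp; fun_prop
  measurable_invFun := by dsimp; fun_prop

@[simp] lemma shear_apply (z : ℝ × ℝ) : shear z = (z.1, z.1 + z.2) := rfl

lemma shear_mp : MeasurePreserving shear (volume : Measure (ℝ × ℝ)) volume := by
  rw [Measure.volume_eq_prod]
  exact measurePreserving_prod_add volume volume

lemma swap_mp : MeasurePreserving (Prod.swap : ℝ × ℝ → ℝ × ℝ)
    (volume : Measure (ℝ × ℝ)) volume := by
  rw [Measure.volume_eq_prod]
  exact Measure.measurePreserving_swap

/-- the map `(x, y) ↦ (x + y, -y)` as a measurable equiv (an involution) -/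
def flip3 : ℝ × ℝ ≃ᵐ ℝ × ℝ where
  toFun := fun p => (p.1 + p.2, -p.2)
  invFun := fun p => (p.1 + p.2, -p.2)
  left_inv := fun p => by simp
  right_inv := fun p => by simp
  measurable_toFun := by dsimp; fun_prop
  measurable_invFun := by dsimp; fun_prop

@[simp] lemma flip3_apply (z : ℝ × ℝ) : flip3 z = (z.1 + z.2, -z.2) := rfl

lemma negSnd_mp : MeasurePreserving (fun z : ℝ × ℝ => (z.1, -z.2))
    (volume : Measure (ℝ × ℝ)) volume := by
  rw [Measure.volume_eq_prod]
  exact (MeasurePreserving.id volume).prod (Measure.measurePreserving_neg volume)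

lemma flip3_mp : MeasurePreserving flip3 (volume : Measure (ℝ × ℝ)) volume := by
  have h := negSnd_mp.comp (swap_mp.comp (shear_mp.comp swap_mp))
  have he : ((fun z : ℝ × ℝ => (z.1, -z.2)) ∘ (Prod.swap ∘ (⇑shear ∘ Prod.swap)))
      = ⇑flip3 := by
    funext z
    simp [Function.comp, add_comm]
  rwa [he] at h

/-! ### integrable building blocks -/

lemma int12 {p q : ℝ} (hp : Integrable (g p)) (hq : Integrable (g q)) :
    Integrable (fun z : ℝ × ℝ => g p z.1 * g q z.2) (volume : Measure (ℝ × ℝ)) := by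
  rw [Measure.volume_eq_prod]
  exact hp.mul_prod hq

lemma int13 {p q : ℝ} (hp : Integrable (g p)) (hq : Integrable (g q)) :
    Integrable (fun z : ℝ × ℝ => g p z.1 * g q (z.1 + z.2)) (volume : Measure (ℝ × ℝ)) :=
  (shear_mp.integrable_comp_emb shear.measurableEmbedding).mpr (int12 hp hq)

lemma int23 {p q : ℝ} (hp : Integrable (g p)) (hq : Integrable (g q)) :
    Integrable (fun z : ℝ × ℝ => g p z.2 * g q (z.1 + z.2)) (volume : Measure (ℝ × ℝ)) := by
  have h := (swap_mp.integrable_comp_emb MeasurableEquiv.prodComm.measurableEmbedding).mpr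
    (int13 hp hq)
  have he : ((fun z : ℝ × ℝ => g p z.1 * g q (z.1 + z.2)) ∘ Prod.swap) =
      fun z : ℝ × ℝ => g p z.2 * g q (z.1 + z.2) := by
    funext z; simp [Function.comp, add_comm]
  rwa [he] at h

/-- exponent selection -/
lemma expo {a b c : ℝ} (hac : 1 < a + c) (hbc : 1 < b + c) (habc : 2 < a + b + c) :
    ∃ p q : ℝ, 1 < p ∧ 1 < q ∧ ∀ A B C : ℝ, 1 ≤ A → 1 ≤ B → A ≤ C → B ≤ C → C ≤ A * B →
      A ^ (-a) * B ^ (-b) * C ^ (-c) ≤ A ^ (-p) * B ^ (-q) := by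
  rcases le_or_gt c 0 with hc | hc
  · refine ⟨a + c, b + c, hac, hbc, fun A B C hA hB hAC hBC hCab => ?_⟩
    have hA0 : (0:ℝ) < A := lt_of_lt_of_le one_pos hA
    have hB0 : (0:ℝ) < B := lt_of_lt_of_le one_pos hB
    have hC0 : (0:ℝ) < C := lt_of_lt_of_le hA0 hAC
    have h1 : C ^ (-c) ≤ (A * B) ^ (-c) := rpow_le_rpow hC0.le hCab (by linarith)
    calc A ^ (-a) * B ^ (-b) * C ^ (-c) ≤ A ^ (-a) * B ^ (-b) * (A * B) ^ (-c) := by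
          have := mul_pos (rpow_pos_of_pos hA0 (-a)) (rpow_pos_of_pos hB0 (-b))
          nlinarith
      _ = A ^ (-(a + c)) * B ^ (-(b + c)) := by
          rw [mul_rpow hA0.le hB0.le, neg_add, neg_add, rpow_add hA0, rpow_add hB0]; ring
  · have hA1 : (1 - a) / c < (b + c - 1) / c := by
      rw [div_lt_div_iff₀ hc hc]; nlinarith
    have hB1 : (1 - a) / c < 1 := (div_lt_one hc).mpr (by linarith)
    have hC1 : (0:ℝ) < (b + c - 1) / c := div_pos (by linarith) hc
    set L : ℝ := max ((1 - a) / c) 0 with hLdef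
    set U : ℝ := min ((b + c - 1) / c) 1 with hUdef
    have hLU : L < U := max_lt (lt_min hA1 hB1) (lt_min hC1 one_pos)
    set θ : ℝ := (L + U) / 2 with hθdef
    have hθL : L < θ := by rw [hθdef]; linarith
    have hθU : θ < U := by rw [hθdef]; linarith
    have hθ0 : 0 ≤ θ := le_of_lt (lt_of_le_of_lt (le_max_right _ 0) hθL)
    have hθ1 : θ ≤ 1 := le_of_lt (lt_of_lt_of_le hθU (min_le_right _ 1))
    have hp : 1 < a + θ * c := by
      have := (div_lt_iff₀ hc).mp (lt_of_le_of_lt (le_max_left _ _) hθL)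
      linarith
    have hq : 1 < b + (1 - θ) * c := by
      have := (lt_div_iff₀ hc).mp (lt_of_lt_of_le hθU (min_le_left _ _))
      nlinarith
    refine ⟨a + θ * c, b + (1 - θ) * c, hp, hq, fun A B C hA hB hAC hBC hCab => ?_⟩
    have hA0 : (0:ℝ) < A := lt_of_lt_of_le one_pos hA
    have hB0 : (0:ℝ) < B := lt_of_lt_of_le one_pos hB
    have hC0 : (0:ℝ) < C := lt_of_lt_of_le hA0 hAC
    have key : A ^ θ * B ^ (1 - θ) ≤ C := by
      have k1 : A ^ θ ≤ C ^ θ := rpow_le_rpow hA0.le hAC hθ0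
      have k2 : B ^ (1 - θ) ≤ C ^ (1 - θ) := rpow_le_rpow hB0.le hBC (by linarith)
      calc A ^ θ * B ^ (1 - θ) ≤ C ^ θ * C ^ (1 - θ) :=
            mul_le_mul k1 k2 (rpow_nonneg hB0.le _) (rpow_nonneg hC0.le _)
        _ = C := by rw [← rpow_add hC0]; norm_num
    have hCc : C ^ (-c) ≤ (A ^ θ * B ^ (1 - θ)) ^ (-c) :=
      rpow_le_rpow_of_nonpos (mul_pos (rpow_pos_of_pos hA0 _) (rpow_pos_of_pos hB0 _)) key
        (by linarith)
    have hsplit : (A ^ θ * B ^ (1 - θ)) ^ (-c) = A ^ (θ * -c) * B ^ ((1 - θ) * -c) := by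
      rw [mul_rpow (rpow_nonneg hA0.le _) (rpow_nonneg hB0.le _),
        ← rpow_mul hA0.le, ← rpow_mul hB0.le]
    calc A ^ (-a) * B ^ (-b) * C ^ (-c)
        ≤ A ^ (-a) * B ^ (-b) * (A ^ (θ * -c) * B ^ ((1 - θ) * -c)) := by
          rw [← hsplit]
          have := mul_pos (rpow_pos_of_pos hA0 (-a)) (rpow_pos_of_pos hB0 (-b))
          nlinarith
      _ = A ^ (-a + θ * -c) * B ^ (-b + (1 - θ) * -c) := by
          rw [rpow_add hA0, rpow_add hB0]; ring
      _ = A ^ (-(a + θ * c)) * B ^ (-(b + (1 - θ) * c)) := by ring_nf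

/-! ### sufficiency -/

lemma suff {a b c : ℝ} (hab : 1 < a + b) (hac : 1 < a + c) (hbc : 1 < b + c)
    (habc : 2 < a + b + c) :
    Integrable (fun z : ℝ × ℝ => g a z.1 * g b z.2 * g c (z.1 + z.2))
      (volume : Measure (ℝ × ℝ)) := by
  obtain ⟨p, q, hp, hq, H3⟩ := expo hac hbc habc
  obtain ⟨p1, q1, hp1, hq1, H1⟩ :=
    expo (a := b) (b := c) (c := a) (by linarith) (by linarith) (by linarith)
  obtain ⟨p2, q2, hp2, hq2, H2⟩ :=
    expo (a := a) (b := c) (c := b) (by linarith) (by linarith) (by linarith)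
  have hΦ : Integrable (fun z : ℝ × ℝ =>
      g p z.1 * g q z.2 + g p2 z.1 * g q2 (z.1 + z.2) + g p1 z.2 * g q1 (z.1 + z.2))
      (volume : Measure (ℝ × ℝ)) :=
    ((int12 (g_integrable hp) (g_integrable hq)).add
      (int13 (g_integrable hp2) (g_integrable hq2))).add
      (int23 (g_integrable hp1) (g_integrable hq1))
  refine hΦ.mono' (Measurable.aestronglyMeasurable (by unfold g; fun_prop))
    (ae_of_all _ fun z => ?_)
  have hA : (1:ℝ) ≤ |z.1| + 1 := one_le_ab _
  have hB : (1:ℝ) ≤ |z.2| + 1 := one_le_ab _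
  have hC : (1:ℝ) ≤ |z.1 + z.2| + 1 := one_le_ab _
  have hCab : |z.1 + z.2| + 1 ≤ (|z.1| + 1) * (|z.2| + 1) := peetre z.1 z.2
  have hAbc : |z.1| + 1 ≤ (|z.2| + 1) * (|z.1 + z.2| + 1) := by
    have h := peetre (-z.2) (z.1 + z.2)
    rw [show -z.2 + (z.1 + z.2) = z.1 by ring, abs_neg] at h
    exact h
  have hBac : |z.2| + 1 ≤ (|z.1| + 1) * (|z.1 + z.2| + 1) := by
    have h := peetre (-z.1) (z.1 + z.2)
    rw [show -z.1 + (z.1 + z.2) = z.2 by ring, abs_neg] at h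
    exact h
  rw [Real.norm_eq_abs, abs_of_nonneg
    (mul_nonneg (mul_nonneg (g_nonneg _ _) (g_nonneg _ _)) (g_nonneg _ _))]
  have t12 : 0 ≤ g p z.1 * g q z.2 := mul_nonneg (g_nonneg _ _) (g_nonneg _ _)
  have t13 : 0 ≤ g p2 z.1 * g q2 (z.1 + z.2) := mul_nonneg (g_nonneg _ _) (g_nonneg _ _)
  have t23 : 0 ≤ g p1 z.2 * g q1 (z.1 + z.2) := mul_nonneg (g_nonneg _ _) (g_nonneg _ _)
  simp only [g] at t12 t13 t23 ⊢
  rcases le_total (|z.1| + 1) (|z.1 + z.2| + 1) with h1 | h1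
  · rcases le_total (|z.2| + 1) (|z.1 + z.2| + 1) with h2 | h2
    · -- C is the max
      have h := H3 _ _ _ hA hB h1 h2 hCab
      linarith
    · -- B is the max
      have h := H2 (|z.1| + 1) (|z.1 + z.2| + 1) (|z.2| + 1) hA hC (h1.trans h2) h2 hBac
      have e : (|z.1| + 1) ^ (-a) * (|z.2| + 1) ^ (-b) * (|z.1 + z.2| + 1) ^ (-c)
          = (|z.1| + 1) ^ (-a) * (|z.1 + z.2| + 1) ^ (-c) * (|z.2| + 1) ^ (-b) := by ring
      rw [e]
      linarith
  · rcases le_total (|z.1| + 1) (|z.2| + 1) with h2 | h2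
    · -- B is the max
      have h := H2 (|z.1| + 1) (|z.1 + z.2| + 1) (|z.2| + 1) hA hC h2 (h1.trans h2) hBac
      have e : (|z.1| + 1) ^ (-a) * (|z.2| + 1) ^ (-b) * (|z.1 + z.2| + 1) ^ (-c)
          = (|z.1| + 1) ^ (-a) * (|z.1 + z.2| + 1) ^ (-c) * (|z.2| + 1) ^ (-b) := by ring
      rw [e]
      linarith
    · -- A is the max
      have h := H1 (|z.2| + 1) (|z.1 + z.2| + 1) (|z.1| + 1) hB hC h2 h1 hAbc
      have e : (|z.1| + 1) ^ (-a) * (|z.2| + 1) ^ (-b) * (|z.1 + z.2| + 1) ^ (-c)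
          = (|z.2| + 1) ^ (-b) * (|z.1 + z.2| + 1) ^ (-c) * (|z.1| + 1) ^ (-a) := by ring
      rw [e]
      linarith

/-! ### necessity: pair conditions -/

lemma not_pair {a b c : ℝ} (hbc : b + c ≤ 1) :
    ¬ Integrable (fun z : ℝ × ℝ => g a z.1 * g b z.2 * g c (z.1 + z.2))
      (volume : Measure (ℝ × ℝ)) := by
  intro h
  rw [Measure.volume_eq_prod] at h
  have hae := h.prod_right_ae
  have hne : (ae (volume : Measure ℝ)).NeBot := by
    rw [ae_neBot]
    intro h0
    have := congrArg (fun μ : Measure ℝ => μ (Ioo 0 1)) h0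
    simp [Real.volume_Ioo] at this
  obtain ⟨u, hu⟩ := hae.exists
  set k : ℝ := g a u * (|u| + 1) ^ (-|c|) with hk
  have hk0 : 0 < k := mul_pos (g_pos _ _) (rpow_pos_of_pos (ab_pos u) _)
  have hbound : ∀ v, g (b + c) v ≤ k⁻¹ * (g a u * g b v * g c (u + v)) := by
    intro v
    have h1 : (|u| + 1) ^ (-|c|) * g c v ≤ g c (u + v) := key_lower c u v
    have hkey : k * g (b + c) v ≤ g a u * g b v * g c (u + v) := by
      rw [← g_mul]
      have hga := g_pos a u
      have hgb := g_nonneg b v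
      have hgc := g_nonneg c v
      calc k * (g b v * g c v)
          = g a u * (g b v * ((|u| + 1) ^ (-|c|) * g c v)) := by rw [hk]; ring
        _ ≤ g a u * (g b v * g c (u + v)) :=
          mul_le_mul_of_nonneg_left (mul_le_mul_of_nonneg_left h1 hgb) hga.le
        _ = g a u * g b v * g c (u + v) := by ring
    calc g (b + c) v = k⁻¹ * (k * g (b + c) v) := by field_simp
      _ ≤ k⁻¹ * (g a u * g b v * g c (u + v)) :=
        mul_le_mul_of_nonneg_left hkey (inv_nonneg.mpr hk0.le)
  have hint : Integrable (g (b + c)) := by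
    refine (hu.const_mul k⁻¹).mono' ((g_measurable _).aestronglyMeasurable)
      (ae_of_all _ fun v => ?_)
    rw [Real.norm_eq_abs, abs_of_nonneg (g_nonneg _ _)]
    exact hbound v
  exact g_not_integrable hbc hint

/-- transport along `Prod.swap` : pattern `(a,b,c)` to `(b,a,c)` -/
lemma int_swap {a b c : ℝ}
    (h : Integrable (fun z : ℝ × ℝ => g a z.1 * g b z.2 * g c (z.1 + z.2))
      (volume : Measure (ℝ × ℝ))) :
    Integrable (fun z : ℝ × ℝ => g b z.1 * g a z.2 * g c (z.1 + z.2))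
      (volume : Measure (ℝ × ℝ)) := by
  have h2 := (swap_mp.integrable_comp_emb MeasurableEquiv.prodComm.measurableEmbedding).mpr h
  have he : ((fun z : ℝ × ℝ => g a z.1 * g b z.2 * g c (z.1 + z.2)) ∘ Prod.swap)
      = fun z : ℝ × ℝ => g b z.1 * g a z.2 * g c (z.1 + z.2) := by
    funext z
    simp only [Function.comp_apply, Prod.fst_swap, Prod.snd_swap]
    rw [show z.2 + z.1 = z.1 + z.2 by ring]
    ring
  rwa [he] at h2

/-- transport along `flip3` : pattern `(a,b,c)` to `(c,b,a)` -/
lemma int_flip3 {a b c : ℝ}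
    (h : Integrable (fun z : ℝ × ℝ => g a z.1 * g b z.2 * g c (z.1 + z.2))
      (volume : Measure (ℝ × ℝ))) :
    Integrable (fun z : ℝ × ℝ => g c z.1 * g b z.2 * g a (z.1 + z.2))
      (volume : Measure (ℝ × ℝ)) := by
  have h2 := (flip3_mp.integrable_comp_emb flip3.measurableEmbedding).mpr h
  have he : ((fun z : ℝ × ℝ => g a z.1 * g b z.2 * g c (z.1 + z.2)) ∘ ⇑flip3)
      = fun z : ℝ × ℝ => g c z.1 * g b z.2 * g a (z.1 + z.2) := by
    funext z
    simp only [Function.comp_apply, flip3_apply]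
    rw [show z.1 + z.2 + -z.2 = z.1 by ring, g_neg_arg]
    ring
  rwa [he] at h2

/-! ### necessity: total condition -/

lemma not_total {a b c : ℝ} (hs0 : 0 < a + b + c) (hs2 : a + b + c ≤ 2) :
    ¬ Integrable (fun z : ℝ × ℝ => g a z.1 * g b z.2 * g c (z.1 + z.2))
      (volume : Measure (ℝ × ℝ)) := by
  set s : ℝ := a + b + c with hsdef
  set φ : ℝ × ℝ → ℝ := fun z => g a z.1 * g b z.2 * g c (z.1 + z.2) with hφ
  intro h
  set E : Set (ℝ × ℝ) := {z : ℝ × ℝ | 1 < z.1} ∩ {z | z.1 ≤ z.2} ∩ {z | z.2 ≤ 2 * z.1}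
    with hE
  have hEm : MeasurableSet E :=
    ((measurableSet_lt measurable_const measurable_fst).inter
      (measurableSet_le measurable_fst measurable_snd)).inter
      (measurableSet_le measurable_snd (measurable_fst.const_mul 2))
  have hind : Integrable (E.indicator φ) (volume : Measure (ℝ × ℝ)) := h.indicator hEm
  rw [Measure.volume_eq_prod] at hind
  have hsec := hind.prod_right_ae
  have hInt := hind.integral_norm_prod_left
  set K : ℝ := (2:ℝ) ^ (-|b|) * (3:ℝ) ^ (-|c|) * (2:ℝ) ^ (-s) with hKdef
  have hK0 : 0 < K := by positivity
  -- the 1D function we will show is (falsely) integrable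
  set T : ℝ → ℝ := (Ioi (1:ℝ)).indicator (fun y => y ^ (-(1:ℝ))) with hT
  have hTint : Integrable T := by
    refine (hInt.const_mul K⁻¹).mono'
      (Measurable.aestronglyMeasurable ((by fun_prop : Measurable fun y : ℝ =>
        y ^ (-(1:ℝ))).indicator measurableSet_Ioi)) ?_
    filter_upwards [hsec] with y hy
    by_cases hy1 : y ∈ Ioi (1:ℝ)
    · have hy1' : (1:ℝ) < y := hy1
      have hy0 : (0:ℝ) < y := by linarith
      -- the lower bound for φ on the slice
      set κ : ℝ := (2:ℝ) ^ (-|b|) * (3:ℝ) ^ (-|c|) * g s y with hκdef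
      have hκ0 : 0 < κ := by
        have := g_pos s y
        positivity
      have hlow : ∀ v, (Icc y (2 * y)).indicator (fun _ => κ) v
          ≤ ‖E.indicator φ (y, v)‖ := by
        intro v
        by_cases hv : v ∈ Icc y (2 * y)
        · rw [indicator_of_mem hv]
          obtain ⟨hv1, hv2⟩ := hv
          have hv0 : (0:ℝ) < v := by linarith
          have hmem : (y, v) ∈ E := ⟨⟨hy1', hv1⟩, hv2⟩
          rw [indicator_of_mem hmem]
          have hφnn : 0 ≤ φ (y, v) :=
            mul_nonneg (mul_nonneg (g_nonneg _ _) (g_nonneg _ _)) (g_nonneg _ _)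
          rw [Real.norm_eq_abs, abs_of_nonneg hφnn]
          -- band bounds
          have hbb : (2:ℝ) ^ (-|b|) * (|y| + 1) ^ (-b) ≤ g b v := by
            refine band b (one_le_ab y) one_le_two ?_ ?_
            · rw [abs_of_pos hy0, abs_of_pos hv0]; linarith
            · rw [abs_of_pos hy0, abs_of_pos hv0]; linarith
          have hcc : (3:ℝ) ^ (-|c|) * (|y| + 1) ^ (-c) ≤ g c (y + v) := by
            refine band c (one_le_ab y) (by norm_num) ?_ ?_
            · rw [abs_of_pos hy0, abs_of_pos (by linarith : (0:ℝ) < y + v)]; linarith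
            · rw [abs_of_pos hy0, abs_of_pos (by linarith : (0:ℝ) < y + v)]; linarith
          have hgs : g a y * ((|y| + 1) ^ (-b)) * ((|y| + 1) ^ (-c)) = g s y := by
            have : g a y * g b y * g c y = g s y := by
              rw [g_mul, g_mul, hsdef]
            simpa only [g] using this
          have h2b : (0:ℝ) < (2:ℝ) ^ (-|b|) := by positivity
          have h3c : (0:ℝ) < (3:ℝ) ^ (-|c|) := by positivity
          have hyb : (0:ℝ) < (|y| + 1) ^ (-b) := rpow_pos_of_pos (ab_pos y) _
          have hyc : (0:ℝ) < (|y| + 1) ^ (-c) := rpow_pos_of_pos (ab_pos y) _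
          have hga : (0:ℝ) < g a y := g_pos _ _
          calc κ = g a y * ((|y| + 1) ^ (-b)) * ((|y| + 1) ^ (-c))
                * ((2:ℝ) ^ (-|b|)) * ((3:ℝ) ^ (-|c|)) := by rw [hκdef, ← hgs]; ring
            _ = g a y * ((2:ℝ) ^ (-|b|) * (|y| + 1) ^ (-b))
                * ((3:ℝ) ^ (-|c|) * (|y| + 1) ^ (-c)) := by ring
            _ ≤ g a y * g b v * g c (y + v) :=
              mul_le_mul (mul_le_mul_of_nonneg_left hbb hga.le) hcc
                (by positivity) (mul_nonneg hga.le (g_nonneg _ _))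
            _ = φ (y, v) := rfl
        · rw [indicator_of_notMem hv]
          exact norm_nonneg _
      -- integrate the pointwise bound
      have hIccInt : Integrable ((Icc y (2 * y)).indicator (fun _ => κ)) := by
        rw [integrable_indicator_iff measurableSet_Icc]
        exact (integrableOn_const_iff).mpr (Or.inr (by rw [Real.volume_Icc]; exact
          ENNReal.ofReal_lt_top))
      have hmono := integral_mono hIccInt hy.norm hlow
      have hIccVal : ∫ v, (Icc y (2 * y)).indicator (fun _ => κ) v = y * κ := by
        rw [integral_indicator_const κ measurableSet_Icc, Real.volume_real_Icc_of_le (by linarith),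
          smul_eq_mul]
        ring
      rw [hIccVal] at hmono
      -- y * κ ≥ K * y⁻¹
      have hyk : K * y ^ (-(1:ℝ)) ≤ y * κ := by
        have e1 : (|y| + 1) ^ (-s) ≥ (2:ℝ) ^ (-s) * y ^ (-s) := by
          rw [← mul_rpow two_pos.le hy0.le]
          refine rpow_le_rpow_of_nonpos (by positivity) ?_ (by linarith)
          rw [abs_of_pos hy0]; linarith
        have e2 : y * y ^ (-s) = y ^ (1 - s) := by
          rw [show (1:ℝ) - s = 1 + (-s) by ring, rpow_add hy0, rpow_one]
        have e3 : y ^ (-(1:ℝ)) ≤ y ^ (1 - s) :=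
          rpow_le_rpow_of_exponent_le hy1'.le (by linarith)
        have h2b : (0:ℝ) < (2:ℝ) ^ (-|b|) := by positivity
        have h3c : (0:ℝ) < (3:ℝ) ^ (-|c|) := by positivity
        have h2s : (0:ℝ) < (2:ℝ) ^ (-s) := by positivity
        have hys : (0:ℝ) < y ^ (-s) := rpow_pos_of_pos hy0 _
        calc K * y ^ (-(1:ℝ)) ≤ K * y ^ (1 - s) := mul_le_mul_of_nonneg_left e3 hK0.le
          _ = (2:ℝ) ^ (-|b|) * (3:ℝ) ^ (-|c|) * ((2:ℝ) ^ (-s) * (y * y ^ (-s))) := by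
              rw [e2, hKdef]; ring
          _ ≤ (2:ℝ) ^ (-|b|) * (3:ℝ) ^ (-|c|) * ((|y| + 1) ^ (-s) * y) := by
              have hin : (2:ℝ) ^ (-s) * (y * y ^ (-s)) ≤ (|y| + 1) ^ (-s) * y := by
                have h' := mul_le_mul_of_nonneg_right e1 hy0.le
                linarith [h']
              exact mul_le_mul_of_nonneg_left hin (by positivity)
          _ = y * κ := by rw [hκdef, g]; ring
      -- conclude
      rw [hT, Real.norm_eq_abs, indicator_of_mem hy1,
        abs_of_nonneg (rpow_nonneg hy0.le _)]
      have : K * y ^ (-(1:ℝ)) ≤ ∫ v, ‖E.indicator φ (y, v)‖ := le_trans hyk hmono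
      calc y ^ (-(1:ℝ)) = K⁻¹ * (K * y ^ (-(1:ℝ))) := by field_simp
        _ ≤ K⁻¹ * ∫ v, ‖E.indicator φ (y, v)‖ :=
          mul_le_mul_of_nonneg_left this (inv_nonneg.mpr hK0.le)
    · rw [hT, Real.norm_eq_abs, indicator_of_notMem hy1, abs_zero]
      exact mul_nonneg (inv_nonneg.mpr hK0.le)
        (integral_nonneg fun v => norm_nonneg _)
  -- contradiction with 1D non-integrability
  rw [hT, integrable_indicator_iff measurableSet_Ioi] at hTint
  rw [integrableOn_Ioi_rpow_iff one_pos] at hTint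
  linarith

end Stmt3

theorem stmt_3 (a b c : ℝ) :
    Integrable (fun p : ℝ × ℝ =>
      (|p.1| + 1) ^ (-a) * (|p.2| + 1) ^ (-b) * (|p.1 + p.2| + 1) ^ (-c))
      (volume : Measure (ℝ × ℝ)) ↔
    (a + b > 1 ∧ a + c > 1 ∧ b + c > 1 ∧ a + b + c > 2) := by
  have he : (fun p : ℝ × ℝ =>
      (|p.1| + 1) ^ (-a) * (|p.2| + 1) ^ (-b) * (|p.1 + p.2| + 1) ^ (-c))
      = fun z : ℝ × ℝ => Stmt3.g a z.1 * Stmt3.g b z.2 * Stmt3.g c (z.1 + z.2) := by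
    funext z
    simp only [Stmt3.g]
  rw [he]
  constructor
  · intro h'
    have hbc : 1 < b + c := by
      by_contra hcon
      exact Stmt3.not_pair (a := a) (b := b) (c := c) (le_of_not_gt hcon) h'
    have hac : 1 < a + c := by
      by_contra hcon
      exact Stmt3.not_pair (a := b) (b := a) (c := c) (le_of_not_gt hcon) (Stmt3.int_swap h')
    have hab : 1 < a + b := by
      by_contra hcon
      exact Stmt3.not_pair (a := c) (b := b) (c := a) (by linarith : b + a ≤ 1) (Stmt3.int_flip3 h')
    have habc : 2 < a + b + c := by
      by_contra hcon
      exact Stmt3.not_total (by linarith) (le_of_not_gt hcon) h'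
    exact ⟨hab, hac, hbc, habc⟩
  · rintro ⟨hab, hac, hbc, habc⟩
    exact Stmt3.suff hab hac hbc habc
end

section
/- For every natural number r ≥ 1 and x ≥ 2, one has ψ_{2r}(x) = θ_{2r}(x) + 2θ*_{2r}(x^{1/2}) + O(x^{1/3} log² x), where the implied constant may depend on r. -/
open ArithmeticFunction Real Finset
attribute [local instance 10] Classical.propDecidable

lemma sum_inv_le (N : ℕ) : ∑ n ∈ Finset.Icc 1 N, ((n:ℝ))⁻¹ ≤ 1 + Real.log N := by
  have h := harmonic_le_one_add_log N
  rw [harmonic_eq_sum_Icc] at h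
  calc ∑ n ∈ Finset.Icc 1 N, ((n:ℝ))⁻¹
      = ((∑ i ∈ Finset.Icc 1 N, ((i:ℚ))⁻¹ : ℚ) : ℝ) := by push_cast; rfl
    _ ≤ 1 + Real.log N := h

lemma log_sub_log_le {a b : ℕ} (ha : 0 < a) (hab : a ≤ b) :
    Real.log b - Real.log a ≤ (b - a : ℝ) / a := by
  have ha' : (0:ℝ) < a := by exact_mod_cast ha
  have hb' : (0:ℝ) < b := lt_of_lt_of_le ha' (by exact_mod_cast hab)
  rw [← Real.log_div (ne_of_gt hb') (ne_of_gt ha')]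
  have := Real.log_le_sub_one_of_pos (div_pos hb' ha')
  calc Real.log ((b:ℝ)/a) ≤ (b:ℝ)/a - 1 := this
    _ = ((b:ℝ) - a)/a := by field_simp

lemma one_add_log_le {y x : ℝ} (hx : 2 ≤ x) (hy : 0 ≤ y) (hyx : y ≤ Real.log x) :
    1 + y ≤ 3 * Real.log x := by
  have h2 : (0.6931471803:ℝ) < Real.log 2 := Real.log_two_gt_d9
  have hl2 : Real.log 2 ≤ Real.log x := Real.log_le_log (by norm_num) hx
  nlinarith

lemma piece1 (r N : ℕ) (hr : 1 ≤ r) (x : ℝ) (hx : 2 ≤ x) (hN : (N:ℝ) ≤ x) :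
    |∑ n ∈ (Finset.Icc 1 N).filter (fun n => n.Prime ∧ (n+2*r).Prime), Λ n * Λ (n+2*r)
      - ∑ p ∈ Finset.Icc 1 N, (if p.Prime ∧ (p+2*r).Prime then (Real.log p)^2 else 0)|
      ≤ 6*r*(Real.log x)^2 := by
  have hL : 0 < Real.log x := Real.log_pos (by linarith)
  rw [← Finset.sum_filter, ← Finset.sum_sub_distrib]
  have hterm : ∀ n ∈ (Finset.Icc 1 N).filter (fun n => n.Prime ∧ (n+2*r).Prime),
      Λ n * Λ (n+2*r) - (Real.log n)^2 ∈ Set.Icc 0 (Real.log x * (2*r/n)) := by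
    intro n hn
    rw [Finset.mem_filter, Finset.mem_Icc] at hn
    obtain ⟨⟨hn1, hnN⟩, hp, hq⟩ := hn
    rw [vonMangoldt_apply_prime hp, vonMangoldt_apply_prime hq]
    have hn0 : (0:ℝ) < n := by exact_mod_cast hn1
    have hlogn : 0 ≤ Real.log n := Real.log_nonneg (by exact_mod_cast hn1)
    have hmono : Real.log n ≤ Real.log ((n + 2*r : ℕ)) := by
      apply Real.log_le_log hn0; exact_mod_cast Nat.le_add_right n (2*r)
    constructor
    · have : (Real.log n)^2 ≤ Real.log n * Real.log ((n+2*r:ℕ)) := by nlinarith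
      simpa using this
    · have h1 : Real.log ((n + 2*r : ℕ)) - Real.log n ≤ ((n+2*r : ℕ) - (n:ℝ))/n :=
        log_sub_log_le hn1 (by omega)
      have h2 : ((n+2*r:ℕ) - (n:ℝ))/n = 2*r/n := by push_cast; ring
      have hlognx : Real.log n ≤ Real.log x :=
        Real.log_le_log hn0 (le_trans (by exact_mod_cast hnN) hN)
      have hnn : Real.log n * Real.log ((n+2*r:ℕ)) - (Real.log n)^2
          = Real.log n * (Real.log ((n+2*r:ℕ)) - Real.log n) := by ring
      rw [hnn]
      calc Real.log n * (Real.log ((n+2*r:ℕ)) - Real.log n)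
          ≤ Real.log x * (Real.log ((n+2*r:ℕ)) - Real.log n) := by
            apply mul_le_mul_of_nonneg_right hlognx; linarith [hmono]
        _ ≤ Real.log x * (2*r/n) := by
            apply mul_le_mul_of_nonneg_left _ (le_of_lt hL); rw [← h2]; exact h1
  rw [abs_of_nonneg (Finset.sum_nonneg (fun n hn => (hterm n hn).1))]
  calc ∑ n ∈ (Finset.Icc 1 N).filter (fun n => n.Prime ∧ (n+2*r).Prime),
        (Λ n * Λ (n+2*r) - (Real.log n)^2)
      ≤ ∑ n ∈ (Finset.Icc 1 N).filter (fun n => n.Prime ∧ (n+2*r).Prime),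
        Real.log x * (2*r) * (n:ℝ)⁻¹ := by
        apply Finset.sum_le_sum
        intro n hn
        have := (hterm n hn).2
        calc Λ n * Λ (n+2*r) - (Real.log n)^2 ≤ Real.log x * (2*r/n) := this
          _ = Real.log x * (2*r) * (n:ℝ)⁻¹ := by ring
    _ ≤ ∑ n ∈ Finset.Icc 1 N, Real.log x * (2*r) * (n:ℝ)⁻¹ := by
        apply Finset.sum_le_sum_of_subset_of_nonneg (Finset.filter_subset _ _)
        intro n hn _; positivity
    _ = Real.log x * (2*r) * ∑ n ∈ Finset.Icc 1 N, (n:ℝ)⁻¹ := by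
        rw [← Finset.mul_sum]
    _ ≤ Real.log x * (2*r) * (3 * Real.log x) := by
        apply mul_le_mul_of_nonneg_left _ (by positivity)
        apply le_trans (sum_inv_le N)
        apply one_add_log_le hx (Real.log_natCast_nonneg N)
        rcases Nat.eq_zero_or_pos N with h0 | h1
        · simp [h0]; positivity
        · exact Real.log_le_log (by exact_mod_cast h1) hN
    _ ≤ 6*r*(Real.log x)^2 := by nlinarith [(by exact_mod_cast hr : (1:ℝ) ≤ (r:ℝ))]


lemma tail_bound (K : ℕ) (c x : ℝ) (hc : 0 ≤ c) (hx : 2 ≤ x) (hK : (K:ℝ) ≤ x)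
    (S : Finset ℕ) (hS : S ⊆ Finset.Icc 1 K) (g : ℕ → ℝ)
    (hg : ∀ n ∈ S, g n ∈ Set.Icc 0 (Real.log x * c * (n:ℝ)⁻¹)) :
    |∑ n ∈ S, g n| ≤ 3 * c * (Real.log x)^2 := by
  have hL : 0 < Real.log x := Real.log_pos (by linarith)
  rw [abs_of_nonneg (Finset.sum_nonneg (fun n hn => (hg n hn).1))]
  calc ∑ n ∈ S, g n ≤ ∑ n ∈ S, Real.log x * c * (n:ℝ)⁻¹ :=
        Finset.sum_le_sum (fun n hn => (hg n hn).2)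
    _ ≤ ∑ n ∈ Finset.Icc 1 K, Real.log x * c * (n:ℝ)⁻¹ := by
        apply Finset.sum_le_sum_of_subset_of_nonneg hS
        intro n hn _; positivity
    _ = Real.log x * c * ∑ n ∈ Finset.Icc 1 K, (n:ℝ)⁻¹ := by rw [← Finset.mul_sum]
    _ ≤ Real.log x * c * (3 * Real.log x) := by
        apply mul_le_mul_of_nonneg_left _ (by positivity)
        apply le_trans (sum_inv_le K)
        apply one_add_log_le hx (Real.log_natCast_nonneg K)
        rcases Nat.eq_zero_or_pos K with h0 | h1
        · simp [h0]; exact hL.le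
        · exact Real.log_le_log (by exact_mod_cast h1) hK
    _ = 3 * c * (Real.log x)^2 := by ring

lemma piece2 (r N M : ℕ) (hr : 1 ≤ r) (x : ℝ) (hx : 2 ≤ x) (hN : (N:ℝ) ≤ x)
    (hMx : (M:ℝ) ≤ x) (hb : ∀ q : ℕ, 0 < q → (q ≤ M ↔ q^2 ≤ N)) :
    |∑ n ∈ (Finset.Icc 1 N).filter
        (fun n => (∃ p, Nat.Prime p ∧ n = p^2) ∧ (n+2*r).Prime), Λ n * Λ (n+2*r)
      - 2 * ∑ q ∈ (Finset.Icc 1 M).filter (fun q => q.Prime ∧ (q^2+2*r).Prime),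
          (Real.log q)^2|
      ≤ 6*r*(Real.log x)^2 := by
  have hL : 0 < Real.log x := Real.log_pos (by linarith)
  have hre : ∑ n ∈ (Finset.Icc 1 N).filter
        (fun n => (∃ p, Nat.Prime p ∧ n = p^2) ∧ (n+2*r).Prime), Λ n * Λ (n+2*r)
      = ∑ q ∈ (Finset.Icc 1 M).filter (fun q => q.Prime ∧ (q^2+2*r).Prime),
          Real.log q * Real.log ((q^2+2*r : ℕ)) := by
    apply Finset.sum_nbij' (fun n => Nat.sqrt n) (fun q => q^2)
    · intro n hn
      rw [Finset.mem_filter, Finset.mem_Icc] at hn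
      obtain ⟨⟨hn1, hnN⟩, ⟨p, hp, rfl⟩, hq⟩ := hn
      have hs : Nat.sqrt (p^2) = p := by rw [pow_two, Nat.sqrt_eq]
      rw [Finset.mem_filter, Finset.mem_Icc, hs]
      refine ⟨⟨hp.one_lt.le.trans' (by norm_num), ?_⟩, hp, ?_⟩
      · exact (hb p hp.pos).mpr hnN
      · exact hq
    · intro q hq
      rw [Finset.mem_filter, Finset.mem_Icc] at hq
      obtain ⟨⟨hq1, hqM⟩, hqp, hqq⟩ := hq
      rw [Finset.mem_filter, Finset.mem_Icc]
      exact ⟨⟨Nat.one_le_iff_ne_zero.mpr (by positivity), (hb q hqp.pos).mp hqM⟩,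
        ⟨q, hqp, rfl⟩, hqq⟩
    · intro n hn
      rw [Finset.mem_filter] at hn
      obtain ⟨_, ⟨p, hp, rfl⟩, _⟩ := hn
      have hs : Nat.sqrt (p^2) = p := by rw [pow_two, Nat.sqrt_eq]
      rw [hs]
    · intro q hq
      have hs : Nat.sqrt (q^2) = q := by rw [pow_two, Nat.sqrt_eq]
      rw [hs]
    · intro n hn
      rw [Finset.mem_filter] at hn
      obtain ⟨_, ⟨p, hp, rfl⟩, hq⟩ := hn
      have hs : Nat.sqrt (p^2) = p := by rw [pow_two, Nat.sqrt_eq]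
      simp only [hs]
      rw [vonMangoldt_apply_pow (two_ne_zero), vonMangoldt_apply_prime hp,
        vonMangoldt_apply_prime hq]
  rw [hre, Finset.mul_sum, ← Finset.sum_sub_distrib]
  have := tail_bound M (2*r) x (by positivity) hx hMx
    ((Finset.Icc 1 M).filter (fun q => q.Prime ∧ (q^2+2*r).Prime))
    (Finset.filter_subset _ _)
    (fun q => Real.log q * Real.log ((q^2+2*r : ℕ)) - 2 * (Real.log q)^2) ?_
  · calc _ ≤ 3 * (2*(r:ℝ)) * (Real.log x)^2 := this
      _ = 6*r*(Real.log x)^2 := by ring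
  · intro q hq
    rw [Finset.mem_filter, Finset.mem_Icc] at hq
    obtain ⟨⟨hq1, hqM⟩, hqp, hqq⟩ := hq
    have hq2 : (0:ℝ) < q := by exact_mod_cast hqp.pos
    have hlq : 0 ≤ Real.log q := Real.log_nonneg (by exact_mod_cast hq1)
    have h2log : 2 * Real.log q = Real.log ((q^2 : ℕ)) := by
      push_cast; rw [Real.log_pow]; push_cast; ring
    have hmono : Real.log ((q^2:ℕ)) ≤ Real.log ((q^2+2*r:ℕ)) := by
      apply Real.log_le_log (by positivity)
      exact_mod_cast Nat.le_add_right (q^2) (2*r)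
    have hlqx : Real.log q ≤ Real.log x :=
      Real.log_le_log hq2 (le_trans (by exact_mod_cast hqM) hMx)
    constructor
    · have : 2*(Real.log q)^2 ≤ Real.log q * Real.log ((q^2+2*r:ℕ)) := by nlinarith
      simpa using this
    · have h1 : Real.log ((q^2+2*r:ℕ)) - Real.log ((q^2:ℕ)) ≤ ((q^2+2*r:ℕ) - ((q^2:ℕ):ℝ))/(q^2:ℕ) :=
        log_sub_log_le (by positivity) (by omega)
      have h2 : ((q^2+2*r:ℕ) - ((q^2:ℕ):ℝ))/((q^2:ℕ):ℝ) ≤ 2*r/q := by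
        push_cast
        rw [div_le_div_iff₀ (by positivity) hq2]
        have hq1r : (1:ℝ) ≤ (q:ℝ) := by exact_mod_cast hq1
        have hqq2 : (q:ℝ) ≤ (q:ℝ)^2 := by nlinarith
        have hr0 : (0:ℝ) ≤ (r:ℝ) := by positivity
        nlinarith
      have key : Real.log q * Real.log ((q^2+2*r:ℕ)) - 2*(Real.log q)^2
          = Real.log q * (Real.log ((q^2+2*r:ℕ)) - Real.log ((q^2:ℕ))) := by
        rw [← h2log]; ring
      rw [key]
      calc Real.log q * (Real.log ((q^2+2*r:ℕ)) - Real.log ((q^2:ℕ)))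
          ≤ Real.log x * (Real.log ((q^2+2*r:ℕ)) - Real.log ((q^2:ℕ))) := by
            apply mul_le_mul_of_nonneg_right hlqx; linarith
        _ ≤ Real.log x * (2*r/q) := by
            apply mul_le_mul_of_nonneg_left _ hL.le
            exact le_trans h1 h2
        _ = Real.log x * (2*r) * (q:ℝ)⁻¹ := by ring


lemma cube_sum_le (N : ℕ) (y : ℝ) (hy : 2 ≤ y) (hNy : (N:ℝ) ≤ y) :
    ∑ m ∈ (Finset.Icc 1 N).filter (fun m => ∃ p a, Nat.Prime p ∧ 3 ≤ a ∧ m = p ^ a), Λ m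
      ≤ y ^ ((1:ℝ)/3) * Real.log y := by
  set F := (Finset.Icc 1 N).filter (fun m => ∃ p a, Nat.Prime p ∧ 3 ≤ a ∧ m = p ^ a) with hF
  have hy0 : (0:ℝ) < y := lt_of_lt_of_le (by norm_num) hy
  have hylog : 0 ≤ Real.log y := Real.log_nonneg (le_trans (by norm_num) hy)
  set P0 : ℕ := ⌊y ^ ((1:ℝ)/3)⌋₊ with hP0
  set e : ℕ → ℕ × ℕ := fun m => (m.minFac, m.factorization m.minFac) with he
  have key : ∀ m ∈ F, ∃ p a, Nat.Prime p ∧ 3 ≤ a ∧ m = p ^ a ∧ e m = (p, a) := by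
    intro m hm
    rw [hF, Finset.mem_filter] at hm
    obtain ⟨hm1, p, a, hp, ha, rfl⟩ := hm
    refine ⟨p, a, hp, ha, rfl, ?_⟩
    have h1 : (p ^ a).minFac = p := hp.pow_minFac (by omega)
    have h2 : (p ^ a).factorization = Finsupp.single p a := hp.factorization_pow
    simp [he, h1, h2]
  have einj : ∀ m1 ∈ F, ∀ m2 ∈ F, e m1 = e m2 → m1 = m2 := by
    intro m1 h1 m2 h2 hee
    obtain ⟨p1, a1, _, _, rfl, he1⟩ := key _ h1
    obtain ⟨p2, a2, _, _, rfl, he2⟩ := key _ h2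
    rw [he1, he2] at hee
    rw [Prod.mk.injEq] at hee
    rw [hee.1, hee.2]
  have step1 : ∑ m ∈ F, Λ m = ∑ pa ∈ F.image e, Real.log pa.1 := by
    rw [Finset.sum_image einj]
    refine Finset.sum_congr rfl ?_
    intro m hm
    obtain ⟨p, a, hp, ha, rfl, heq⟩ := key _ hm
    rw [heq, vonMangoldt_apply_pow (by omega : a ≠ 0), vonMangoldt_apply_prime hp]
  have hsub : F.image e ⊆ ((Finset.Icc 2 P0) ×ˢ (Finset.Icc 3 N)).filter
      (fun pa => Nat.Prime pa.1 ∧ pa.1 ^ pa.2 ≤ N) := by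
    intro pa hpa
    rw [Finset.mem_image] at hpa
    obtain ⟨m, hm, rfl⟩ := hpa
    have hmIcc := (Finset.mem_filter.mp hm).1
    rw [Finset.mem_Icc] at hmIcc
    obtain ⟨p, a, hp, ha, rfl, heq⟩ := key _ hm
    rw [heq]
    rw [Finset.mem_filter, Finset.mem_product, Finset.mem_Icc, Finset.mem_Icc]
    have hpa3 : p ^ 3 ≤ p ^ a := Nat.pow_le_pow_right hp.pos (by omega)
    have hple : p ≤ P0 := by
      rw [hP0]
      apply Nat.le_floor
      have h3 : ((p:ℝ)) ^ (3:ℕ) ≤ y := by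
        calc ((p:ℝ)) ^ (3:ℕ) = ((p ^ 3 : ℕ) : ℝ) := by push_cast; ring
          _ ≤ ((p ^ a : ℕ) : ℝ) := by exact_mod_cast hpa3
          _ ≤ (N : ℝ) := by exact_mod_cast hmIcc.2
          _ ≤ y := hNy
      have hppos : (0:ℝ) ≤ (p:ℝ) := by positivity
      calc (p:ℝ) = (((p:ℝ)) ^ (3:ℕ)) ^ ((1:ℝ)/3) := by
            rw [← Real.rpow_natCast (p:ℝ) 3, ← Real.rpow_mul hppos]
            norm_num
        _ ≤ y ^ ((1:ℝ)/3) := Real.rpow_le_rpow (by positivity) h3 (by norm_num)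
    have haN : a ≤ N := by
      have h2a : 2 ^ a ≤ p ^ a := Nat.pow_le_pow_left hp.two_le a
      have := Nat.lt_two_pow_self (n := a)
      omega
    exact ⟨⟨⟨hp.two_le, hple⟩, ha, haN⟩, hp, hmIcc.2⟩
  have step2 : ∑ pa ∈ F.image e, Real.log pa.1 ≤
      ∑ pa ∈ ((Finset.Icc 2 P0) ×ˢ (Finset.Icc 3 N)).filter
        (fun pa => Nat.Prime pa.1 ∧ pa.1 ^ pa.2 ≤ N), Real.log pa.1 := by
    apply Finset.sum_le_sum_of_subset_of_nonneg hsub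
    intro pa hpa _
    rw [Finset.mem_filter, Finset.mem_product, Finset.mem_Icc] at hpa
    have : (1:ℝ) ≤ pa.1 := by exact_mod_cast le_trans (by norm_num) hpa.1.1.1
    exact Real.log_nonneg this
  have step3 : ∑ pa ∈ ((Finset.Icc 2 P0) ×ˢ (Finset.Icc 3 N)).filter
        (fun pa => Nat.Prime pa.1 ∧ pa.1 ^ pa.2 ≤ N), Real.log pa.1
      ≤ ∑ _p ∈ Finset.Icc 2 P0, Real.log y := by
    rw [Finset.sum_filter, Finset.sum_product]
    apply Finset.sum_le_sum
    intro p hp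
    -- inner sum over a
    by_cases hpp : Nat.Prime p
    · have : ∑ a ∈ Finset.Icc 3 N, (if Nat.Prime p ∧ p ^ a ≤ N then Real.log p else 0)
          = ∑ a ∈ (Finset.Icc 3 N).filter (fun a => Nat.Prime p ∧ p ^ a ≤ N), Real.log p := by
        rw [Finset.sum_filter]
      rw [this, Finset.sum_const]
      set T := (Finset.Icc 3 N).filter (fun a => Nat.Prime p ∧ p ^ a ≤ N) with hT
      rcases Finset.eq_empty_or_nonempty T with hTe | hTne
      · rw [hTe]; simpa using hylog
      · set A := T.max' hTne with hA
        have hAmem : A ∈ T := T.max'_mem hTne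
        have hAprop := Finset.mem_filter.mp hAmem
        have hcard : T.card ≤ A := by
          have hsubT : T ⊆ Finset.Icc 3 A := by
            intro a haT
            rw [Finset.mem_Icc]
            exact ⟨(Finset.mem_Icc.mp (Finset.mem_filter.mp haT).1).1, Finset.le_max' T a haT⟩
          calc T.card ≤ (Finset.Icc 3 A).card := Finset.card_le_card hsubT
            _ ≤ A := by rw [Nat.card_Icc]; omega
        have hpow : (p:ℝ) ^ (T.card) ≤ y := by
          calc (p:ℝ) ^ T.card = ((p ^ T.card : ℕ) : ℝ) := by push_cast; ring
            _ ≤ ((p ^ A : ℕ):ℝ) := by exact_mod_cast Nat.pow_le_pow_right hpp.pos hcard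
            _ ≤ (N:ℝ) := by exact_mod_cast hAprop.2.2
            _ ≤ y := hNy
        have hlogp : (T.card : ℝ) * Real.log p ≤ Real.log y := by
          rw [← Real.log_pow]
          have hp0 : (0:ℝ) < (p:ℝ) := by exact_mod_cast hpp.pos
          exact Real.log_le_log (pow_pos hp0 _) hpow
        calc (T.card : ℕ) • Real.log (p:ℝ) = (T.card : ℝ) * Real.log p := by
              rw [nsmul_eq_mul]
          _ ≤ Real.log y := hlogp
    · simp only [hpp, false_and, if_false, Finset.sum_const_zero]
      exact hylog
  have step4 : ∑ _p ∈ Finset.Icc 2 P0, Real.log y ≤ y ^ ((1:ℝ)/3) * Real.log y := by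
    rw [Finset.sum_const, nsmul_eq_mul]
    apply mul_le_mul_of_nonneg_right _ hylog
    calc ((Finset.Icc 2 P0).card : ℝ) ≤ (P0 : ℝ) := by
          have h : (Finset.Icc 2 P0).card ≤ P0 := by rw [Nat.card_Icc]; omega
          exact_mod_cast h
      _ ≤ y ^ ((1:ℝ)/3) := Nat.floor_le (by positivity)
  exact le_trans (le_of_eq step1) (le_trans step2 (le_trans step3 step4))


lemma log_le_big {r : ℕ} {x : ℝ} (hx : 2 ≤ x) (q : ℕ) (hq : 1 ≤ q)
    (hqx : (q:ℝ) ≤ (1+r)*x) : Real.log q ≤ (1+2*r) * Real.log x := by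
  have hL : 0 < Real.log x := Real.log_pos (by linarith)
  have h2 : (0.6931471803:ℝ) < Real.log 2 := Real.log_two_gt_d9
  have hl2 : Real.log 2 ≤ Real.log x := Real.log_le_log (by norm_num) hx
  have hr0 : (0:ℝ) ≤ (r:ℝ) := by positivity
  have h1 : Real.log q ≤ Real.log ((1+r)*x) :=
    Real.log_le_log (by exact_mod_cast hq) hqx
  have h3 : Real.log ((1+(r:ℝ))*x) = Real.log (1+(r:ℝ)) + Real.log x :=
    Real.log_mul (by positivity) (by linarith)
  have h4 : Real.log (1+(r:ℝ)) ≤ r := by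
    have := Real.log_le_sub_one_of_pos (show (0:ℝ) < 1+(r:ℝ) by positivity)
    linarith
  have h5 : (r:ℝ) ≤ 2*r*Real.log x := by nlinarith
  calc Real.log q ≤ Real.log (1+(r:ℝ)) + Real.log x := by rw [← h3]; exact h1
    _ ≤ (r:ℝ) + Real.log x := by linarith
    _ ≤ (1+2*r) * Real.log x := by nlinarith

set_option maxHeartbeats 2000000 in
lemma piece3 (r N M : ℕ) (hr : 1 ≤ r) (x : ℝ) (hx : 2 ≤ x) (hN : (N:ℝ) ≤ x)
    (hMx : (M:ℝ) ≤ x) (hb : ∀ q : ℕ, 0 < q → (q ≤ M ↔ q^2 ≤ N)) :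
    |∑ n ∈ (Finset.Icc 1 N).filter
        (fun n => n.Prime ∧ ∃ q, Nat.Prime q ∧ n + 2*r = q^2), Λ n * Λ (n+2*r)
      - 2 * ∑ q ∈ (Finset.Icc 1 M).filter (fun q => q.Prime ∧ (q^2 - 2*r).Prime),
          (Real.log q)^2|
      ≤ (6*r*(1+r) + 2*r*(1+2*r)) * (Real.log x)^2 := by
  have hL : 0 < Real.log x := Real.log_pos (by linarith)
  set M' := Nat.sqrt (N + 2*r) with hM'
  set g : ℕ → ℝ := fun q => Real.log ((q^2 - 2*r : ℕ)) * Real.log q with hg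
  set Q := (Finset.Icc 1 M').filter
    (fun q => q.Prime ∧ (q^2 - 2*r).Prime ∧ 2*r+1 ≤ q^2 ∧ q^2 ≤ N+2*r) with hQ
  have hre : ∑ n ∈ (Finset.Icc 1 N).filter
        (fun n => n.Prime ∧ ∃ q, Nat.Prime q ∧ n + 2*r = q^2), Λ n * Λ (n+2*r)
      = ∑ q ∈ Q, g q := by
    apply Finset.sum_nbij' (fun n => Nat.sqrt (n + 2*r)) (fun q => q^2 - 2*r)
    · intro n hn
      rw [Finset.mem_filter, Finset.mem_Icc] at hn
      obtain ⟨⟨hn1, hnN⟩, hnp, q, hqp, hq2⟩ := hn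
      have hs : Nat.sqrt (n + 2*r) = q := by rw [hq2, pow_two, Nat.sqrt_eq]
      rw [hs, hQ, Finset.mem_filter, Finset.mem_Icc]
      have hqM' : q ≤ M' := by
        rw [hM']
        calc q = Nat.sqrt (q^2) := by rw [pow_two, Nat.sqrt_eq]
          _ ≤ Nat.sqrt (N + 2*r) := Nat.sqrt_le_sqrt (by omega)
      have hn' : q^2 - 2*r = n := by omega
      exact ⟨⟨hqp.pos, hqM'⟩, hqp, by rw [hn']; exact hnp, by omega, by omega⟩
    · intro q hq
      rw [hQ, Finset.mem_filter, Finset.mem_Icc] at hq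
      obtain ⟨⟨hq1, hqM'⟩, hqp, hqq, h2r, hN2r⟩ := hq
      rw [Finset.mem_filter, Finset.mem_Icc]
      exact ⟨⟨by omega, by omega⟩, hqq, q, hqp, by omega⟩
    · intro n hn
      rw [Finset.mem_filter] at hn
      obtain ⟨_, _, q, hqp, hq2⟩ := hn
      have hs : Nat.sqrt (n + 2*r) = q := by rw [hq2, pow_two, Nat.sqrt_eq]
      rw [hs]; omega
    · intro q hq
      rw [hQ, Finset.mem_filter, Finset.mem_Icc] at hq
      obtain ⟨⟨hq1, hqM'⟩, hqp, hqq, h2r, hN2r⟩ := hq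
      have h : q^2 - 2*r + 2*r = q^2 := by omega
      rw [h, pow_two, Nat.sqrt_eq]
    · intro n hn
      rw [Finset.mem_filter] at hn
      obtain ⟨hnI, hnp, q, hqp, hq2⟩ := hn
      have hs : Nat.sqrt (n + 2*r) = q := by rw [hq2, pow_two, Nat.sqrt_eq]
      rw [hs, hg]
      have hn' : q^2 - 2*r = n := by omega
      dsimp only
      rw [hn', hq2, vonMangoldt_apply_pow (two_ne_zero), vonMangoldt_apply_prime hqp,
        vonMangoldt_apply_prime hnp]
  have h2log : ∀ q : ℕ, 1 ≤ q → 2 * Real.log q = Real.log ((q^2 : ℕ)) := by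
    intro q hq; push_cast; rw [Real.log_pow]; push_cast; ring
  -- split Q
  have hsplit := Finset.sum_filter_add_sum_filter_not Q (fun q => q ≤ M) g
  set Tset := (Finset.Icc 1 M).filter (fun q => q.Prime ∧ (q^2 - 2*r).Prime) with hTset
  have hcommon : Q.filter (fun q => q ≤ M) = Tset := by
    ext q
    rw [hQ, hTset, Finset.filter_filter, Finset.mem_filter, Finset.mem_filter,
      Finset.mem_Icc, Finset.mem_Icc]
    constructor
    · rintro ⟨⟨hq1, hqM'⟩, ⟨hqp, hqq, h2r, hN2r⟩, hqM⟩
      exact ⟨⟨hq1, hqM⟩, hqp, hqq⟩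
    · rintro ⟨⟨hq1, hqM⟩, hqp, hqq⟩
      have hq2N : q^2 ≤ N := (hb q (by omega)).mp hqM
      have h2 := hqq.two_le
      have hqM' : q ≤ M' := by
        rw [hM']
        calc q = Nat.sqrt (q^2) := by rw [pow_two, Nat.sqrt_eq]
          _ ≤ Nat.sqrt (N + 2*r) := Nat.sqrt_le_sqrt (by omega)
      exact ⟨⟨hq1, hqM'⟩, ⟨hqp, hqq, by omega, by omega⟩, hqM⟩
  -- delta bound
  have hdelta : |∑ q ∈ Tset, (Real.log ((q^2:ℕ)) * Real.log q - g q)|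
      ≤ 3 * (2*r*(1+r)) * (Real.log x)^2 := by
    apply tail_bound M (2*r*(1+r)) x (by positivity) hx hMx Tset
      (by rw [hTset]; exact Finset.filter_subset _ _)
    intro q hq
    rw [hTset, Finset.mem_filter, Finset.mem_Icc] at hq
    obtain ⟨⟨hq1, hqM⟩, hqp, hqq⟩ := hq
    have h2 := hqq.two_le
    have h2rq : 2*r + 2 ≤ q^2 := by omega
    have hA : ((q^2 - 2*r : ℕ) : ℝ) = (q:ℝ)^2 - 2*r := by
      push_cast [Nat.cast_sub (by omega : 2*r ≤ q^2)]; ring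
    have hq1r : (1:ℝ) ≤ (q:ℝ) := by exact_mod_cast hq1
    have hA2 : (2:ℝ) ≤ (q:ℝ)^2 - 2*r := by
      rw [← hA]; exact_mod_cast h2
    have hr0 : (0:ℝ) ≤ (r:ℝ) := by positivity
    have hr1 : (1:ℝ) ≤ (r:ℝ) := by exact_mod_cast hr
    have hlq : 0 ≤ Real.log q := Real.log_nonneg hq1r
    have hlqx : Real.log q ≤ Real.log x :=
      Real.log_le_log (by linarith) (le_trans (by exact_mod_cast hqM) hMx)
    have hmono : Real.log ((q^2-2*r:ℕ)) ≤ Real.log ((q^2:ℕ)) :=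
      Real.log_le_log (by exact_mod_cast (by omega : 0 < q^2 - 2*r)) (by exact_mod_cast (by omega : q^2 - 2*r ≤ q^2))
    constructor
    · rw [hg]; dsimp only
      have : Real.log ((q^2-2*r:ℕ)) * Real.log q ≤ Real.log ((q^2:ℕ)) * Real.log q :=
        mul_le_mul_of_nonneg_right hmono hlq
      linarith
    · have h1 : Real.log ((q^2:ℕ)) - Real.log ((q^2-2*r:ℕ))
          ≤ ((q^2:ℕ) - ((q^2-2*r:ℕ):ℝ))/((q^2-2*r:ℕ):ℝ) :=
        log_sub_log_le (by omega) (by omega)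
      have h2' : ((q^2:ℕ) - ((q^2-2*r:ℕ):ℝ))/((q^2-2*r:ℕ):ℝ) ≤ 2*r*(1+r)/(q:ℝ) := by
        rw [hA]
        push_cast
        rw [div_le_div_iff₀ (by linarith) (by linarith)]
        have hA2' : (0:ℝ) ≤ (q:ℝ)^2 - 2*r - 2 := by linarith
        have h5 : 2*(r:ℝ) ≤ (r:ℝ)*((q:ℝ)^2-2*r) := by nlinarith [mul_nonneg hr0 hA2']
        have h6 : 2*(r:ℝ)*(2*(r:ℝ)) ≤ 2*(r:ℝ)*((r:ℝ)*((q:ℝ)^2-2*r)) :=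
          mul_le_mul_of_nonneg_left h5 (by positivity)
        have h7 : (0:ℝ) ≤ 2*(r:ℝ)*((q:ℝ)^2-(q:ℝ)) :=
          mul_nonneg (by positivity) (by nlinarith)
        nlinarith [h6, h7]
      rw [hg]; dsimp only
      have key : Real.log ((q^2:ℕ)) * Real.log q - Real.log ((q^2-2*r:ℕ)) * Real.log q
          = (Real.log ((q^2:ℕ)) - Real.log ((q^2-2*r:ℕ))) * Real.log q := by ring
      rw [key]
      calc (Real.log ((q^2:ℕ)) - Real.log ((q^2-2*r:ℕ))) * Real.log q
          ≤ (2*r*(1+r)/(q:ℝ)) * Real.log q := by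
            apply mul_le_mul_of_nonneg_right _ hlq
            exact le_trans h1 h2'
        _ ≤ (2*r*(1+r)/(q:ℝ)) * Real.log x := by
            apply mul_le_mul_of_nonneg_left hlqx (by positivity)
        _ = Real.log x * (2*r*(1+r)) * (q:ℝ)⁻¹ := by ring
  -- extra bound
  set E := Q.filter (fun q => ¬ (q ≤ M)) with hE
  have hEcard : E.card ≤ 2*r := by
    have hinj : ∀ a ∈ E, ∀ b ∈ E, a^2 = b^2 → a = b := by
      intro a _ b _ hab
      exact Nat.pow_left_injective (by norm_num) hab
    have hmap : ∀ q ∈ E, q^2 ∈ Finset.Icc (N+1) (N+2*r) := by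
      intro q hq
      rw [hE, Finset.mem_filter, hQ, Finset.mem_filter, Finset.mem_Icc] at hq
      obtain ⟨⟨⟨hq1, hqM'⟩, hqp, hqq, h2r, hN2r⟩, hqM⟩ := hq
      rw [Finset.mem_Icc]
      have : ¬ (q^2 ≤ N) := fun h => hqM ((hb q (by omega)).mpr h)
      omega
    have := Finset.card_le_card_of_injOn (fun q => q^2) hmap
      (fun a ha b hb hab => hinj a ha b hb hab)
    rw [Nat.card_Icc] at this
    omega
  have hEterm : ∀ q ∈ E, g q ≤ Real.log x * ((1+2*r) * Real.log x) := by
    intro q hq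
    rw [hE, Finset.mem_filter, hQ, Finset.mem_filter, Finset.mem_Icc] at hq
    obtain ⟨⟨⟨hq1, hqM'⟩, hqp, hqq, h2r, hN2r⟩, hqM⟩ := hq
    rw [hg]; dsimp only
    have h2 := hqq.two_le
    have hg1 : Real.log ((q^2-2*r:ℕ)) ≤ Real.log x := by
      apply Real.log_le_log (by exact_mod_cast (by omega : 0 < q^2 - 2*r))
      calc ((q^2-2*r:ℕ):ℝ) ≤ (N:ℝ) := by exact_mod_cast (by omega : q^2 - 2*r ≤ N)
        _ ≤ x := hN
    have hg2 : Real.log q ≤ (1+2*r) * Real.log x := by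
      apply log_le_big hx q hq1
      have hq2n : q ≤ q^2 := by nlinarith [hq1]
      have h1 : ((q:ℕ):ℝ) ≤ ((q^2:ℕ):ℝ) := by exact_mod_cast hq2n
      have h2 : ((q^2:ℕ):ℝ) ≤ (N:ℝ) + 2*(r:ℝ) := by exact_mod_cast hN2r
      have hr1 : (1:ℝ) ≤ (r:ℝ) := by exact_mod_cast hr
      nlinarith [mul_nonneg (by positivity : (0:ℝ) ≤ (r:ℝ)) (by linarith : (0:ℝ) ≤ x - 2), h1, h2, hN]
    have hl1 : 0 ≤ Real.log ((q^2-2*r:ℕ)) :=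
      Real.log_nonneg (by exact_mod_cast (by omega : 1 ≤ q^2 - 2*r))
    have hl2 : 0 ≤ Real.log q := Real.log_nonneg (by exact_mod_cast hq1)
    calc Real.log ((q^2-2*r:ℕ)) * Real.log q ≤ Real.log x * Real.log q :=
          mul_le_mul_of_nonneg_right hg1 hl2
      _ ≤ Real.log x * ((1+2*r) * Real.log x) :=
          mul_le_mul_of_nonneg_left hg2 hL.le
  have hEnonneg : ∀ q ∈ E, 0 ≤ g q := by
    intro q hq
    rw [hE, Finset.mem_filter, hQ, Finset.mem_filter, Finset.mem_Icc] at hq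
    obtain ⟨⟨⟨hq1, hqM'⟩, hqp, hqq, h2r, hN2r⟩, hqM⟩ := hq
    rw [hg]; dsimp only
    apply mul_nonneg
    · exact Real.log_nonneg (by exact_mod_cast (by omega : 1 ≤ q^2 - 2*r))
    · exact Real.log_nonneg (by exact_mod_cast hq1)
  have hEsum : ∑ q ∈ E, g q ≤ 2*r*(1+2*r) * (Real.log x)^2 := by
    calc ∑ q ∈ E, g q ≤ E.card • (Real.log x * ((1+2*r) * Real.log x)) :=
          Finset.sum_le_card_nsmul E g _ hEterm
      _ = (E.card : ℝ) * (Real.log x * ((1+2*r) * Real.log x)) := by rw [nsmul_eq_mul]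
      _ ≤ (2*r : ℝ) * (Real.log x * ((1+2*r) * Real.log x)) := by
          apply mul_le_mul_of_nonneg_right _ (by positivity)
          exact_mod_cast hEcard
      _ = 2*r*(1+2*r) * (Real.log x)^2 := by ring
  -- assemble
  have h2T : 2 * ∑ q ∈ Tset, (Real.log q)^2
      = ∑ q ∈ Tset, Real.log ((q^2:ℕ)) * Real.log q := by
    rw [Finset.mul_sum]
    apply Finset.sum_congr rfl
    intro q hq
    rw [hTset, Finset.mem_filter, Finset.mem_Icc] at hq
    rw [← h2log q hq.1.1]
    ring
  have heq : ∑ q ∈ Q, g q - 2 * ∑ q ∈ Tset, (Real.log q)^2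
      = ∑ q ∈ E, g q - ∑ q ∈ Tset, (Real.log ((q^2:ℕ)) * Real.log q - g q) := by
    rw [h2T, ← hsplit, hcommon, Finset.sum_sub_distrib]
    ring
  rw [hre, heq]
  have hEnn : 0 ≤ ∑ q ∈ E, g q := Finset.sum_nonneg hEnonneg
  calc |∑ q ∈ E, g q - ∑ q ∈ Tset, (Real.log ((q^2:ℕ)) * Real.log q - g q)|
      ≤ |∑ q ∈ E, g q| + |∑ q ∈ Tset, (Real.log ((q^2:ℕ)) * Real.log q - g q)| :=
        abs_sub _ _
    _ ≤ 2*r*(1+2*r) * (Real.log x)^2 + 3 * (2*r*(1+r)) * (Real.log x)^2 := by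
        apply add_le_add _ hdelta
        rw [abs_of_nonneg hEnn]
        exact hEsum
    _ = (6*r*(1+r) + 2*r*(1+2*r)) * (Real.log x)^2 := by ring


lemma log_le_big' {r : ℕ} {x : ℝ} (hx : 2 ≤ x) (hr : 1 ≤ r) {y : ℝ} (hy : 1 ≤ y)
    (hyx : y ≤ (1+r)*x) : Real.log y ≤ (1+2*r) * Real.log x := by
  have hL : 0 < Real.log x := Real.log_pos (by linarith)
  have h2 : (0.6931471803:ℝ) < Real.log 2 := Real.log_two_gt_d9
  have hl2 : Real.log 2 ≤ Real.log x := Real.log_le_log (by norm_num) hx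
  have hr0 : (0:ℝ) ≤ (r:ℝ) := by positivity
  have h1 : Real.log y ≤ Real.log ((1+r)*x) := Real.log_le_log (by linarith) hyx
  have h3 : Real.log ((1+(r:ℝ))*x) = Real.log (1+(r:ℝ)) + Real.log x :=
    Real.log_mul (by positivity) (by linarith)
  have h4 : Real.log (1+(r:ℝ)) ≤ r := by
    have := Real.log_le_sub_one_of_pos (show (0:ℝ) < 1+(r:ℝ) by positivity)
    linarith
  have h5 : (r:ℝ) ≤ 2*r*Real.log x := by nlinarith
  calc Real.log y ≤ Real.log (1+(r:ℝ)) + Real.log x := by rw [← h3]; exact h1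
    _ ≤ (r:ℝ) + Real.log x := by linarith
    _ ≤ (1+2*r) * Real.log x := by nlinarith

lemma classify (r n : ℕ) (hf : Λ n * Λ (n+2*r) ≠ 0)
    (h1 : ¬(n.Prime ∧ (n+2*r).Prime))
    (h2 : ¬((∃ p, Nat.Prime p ∧ n = p^2) ∧ (n+2*r).Prime))
    (h3 : ¬(n.Prime ∧ ∃ q, Nat.Prime q ∧ n + 2*r = q^2)) :
    (∃ p a, Nat.Prime p ∧ 3 ≤ a ∧ n = p^a)
      ∨ (∃ q b, Nat.Prime q ∧ 3 ≤ b ∧ n+2*r = q^b)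
      ∨ ((∃ p, Nat.Prime p ∧ n = p^2) ∧ (∃ q, Nat.Prime q ∧ n+2*r = q^2)) := by
  have hΛ1 : Λ n ≠ 0 := fun h => hf (by rw [h, zero_mul])
  have hΛ2 : Λ (n+2*r) ≠ 0 := fun h => hf (by rw [h, mul_zero])
  obtain ⟨p, a, hp, ha, hpa⟩ := (isPrimePow_nat_iff n).mp (vonMangoldt_ne_zero_iff.mp hΛ1)
  obtain ⟨q, b, hq, hb, hqb⟩ := (isPrimePow_nat_iff _).mp (vonMangoldt_ne_zero_iff.mp hΛ2)
  rcases (by omega : a = 1 ∨ a = 2 ∨ 3 ≤ a) with ha1 | ha2 | ha3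
  · -- n = p
    subst ha1; rw [pow_one] at hpa; subst hpa
    rcases (by omega : b = 1 ∨ b = 2 ∨ 3 ≤ b) with hb1 | hb2 | hb3
    · subst hb1; rw [pow_one] at hqb; subst hqb
      exact absurd ⟨hp, hq⟩ h1
    · subst hb2
      exact absurd ⟨hp, q, hq, hqb.symm⟩ h3
    · exact Or.inr (Or.inl ⟨q, b, hq, hb3, hqb.symm⟩)
  · subst ha2
    rcases (by omega : b = 1 ∨ b = 2 ∨ 3 ≤ b) with hb1 | hb2 | hb3
    · subst hb1; rw [pow_one] at hqb; subst hqb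
      exact absurd ⟨⟨p, hp, hpa.symm⟩, hq⟩ h2
    · subst hb2
      exact Or.inr (Or.inr ⟨⟨p, hp, hpa.symm⟩, ⟨q, hq, hqb.symm⟩⟩)
    · exact Or.inr (Or.inl ⟨q, b, hq, hb3, hqb.symm⟩)
  · exact Or.inl ⟨p, a, hp, ha3, hpa.symm⟩

set_option maxHeartbeats 2000000 in
lemma piece4 (r N : ℕ) (hr : 1 ≤ r) (x : ℝ) (hx : 2 ≤ x) (hN : (N:ℝ) ≤ x) :
    |∑ n ∈ (Finset.Icc 1 N).filter (fun n =>
        ¬(n.Prime ∧ (n+2*r).Prime) ∧ ¬((∃ p, Nat.Prime p ∧ n = p^2) ∧ (n+2*r).Prime)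
        ∧ ¬(n.Prime ∧ ∃ q, Nat.Prime q ∧ n + 2*r = q^2)), Λ n * Λ (n+2*r)|
      ≤ ((1+2*r) + (1+r)*(1+2*r) + 4*r^2*(1+2*r)) * (x^((1:ℝ)/3) * (Real.log x)^2) := by
  have hL : 0 < Real.log x := Real.log_pos (by linarith)
  have hr1 : (1:ℝ) ≤ (r:ℝ) := by exact_mod_cast hr
  have hK1 : (1:ℝ) ≤ x^((1:ℝ)/3) := Real.one_le_rpow (by linarith) (by norm_num)
  have hf0 : ∀ n : ℕ, 0 ≤ Λ n * Λ (n+2*r) :=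
    fun n => mul_nonneg vonMangoldt_nonneg vonMangoldt_nonneg
  set f : ℕ → ℝ := fun n => Λ n * Λ (n+2*r) with hfdef
  set D1 : ℕ → Prop := fun m => ∃ p a, Nat.Prime p ∧ 3 ≤ a ∧ m = p ^ a with hD1def
  set D2 : ℕ → Prop := fun n => ∃ q b, Nat.Prime q ∧ 3 ≤ b ∧ n+2*r = q^b with hD2def
  set D3 : ℕ → Prop := fun n => (∃ p, Nat.Prime p ∧ n = p^2) ∧ (∃ q, Nat.Prime q ∧ n+2*r = q^2)
    with hD3def
  -- bound each n+2r term
  have hrx : (0:ℝ) ≤ (r:ℝ)*(x-2) := mul_nonneg (by positivity) (by linarith)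
  have hlog2 : ∀ n ∈ Finset.Icc 1 N, Λ (n+2*r) ≤ (1+2*r) * Real.log x := by
    intro n hn
    rw [Finset.mem_Icc] at hn
    refine le_trans vonMangoldt_le_log (log_le_big' hx hr ?_ ?_)
    · exact_mod_cast (by omega : 1 ≤ n + 2*r)
    · have h1 : ((n + 2*r : ℕ):ℝ) ≤ (N:ℝ) + 2*r := by
        exact_mod_cast (by omega : n + 2*r ≤ N + 2*r)
      nlinarith
  have hlog1 : ∀ n ∈ Finset.Icc 1 N, Λ n ≤ Real.log x := by
    intro n hn
    rw [Finset.mem_Icc] at hn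
    refine le_trans vonMangoldt_le_log (Real.log_le_log ?_ ?_)
    · exact_mod_cast hn.1
    · exact le_trans (by exact_mod_cast hn.2) hN
  have hsum_split : ∑ n ∈ (Finset.Icc 1 N).filter (fun n =>
        ¬(n.Prime ∧ (n+2*r).Prime) ∧ ¬((∃ p, Nat.Prime p ∧ n = p^2) ∧ (n+2*r).Prime)
        ∧ ¬(n.Prime ∧ ∃ q, Nat.Prime q ∧ n + 2*r = q^2)), f n ≤
      (∑ n ∈ (Finset.Icc 1 N).filter D1, f n) + ((∑ n ∈ (Finset.Icc 1 N).filter D2, f n)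
        + (∑ n ∈ (Finset.Icc 1 N).filter D3, f n)) := by
    rw [Finset.sum_filter, Finset.sum_filter, Finset.sum_filter, Finset.sum_filter,
      ← Finset.sum_add_distrib, ← Finset.sum_add_distrib]
    apply Finset.sum_le_sum
    intro n hn
    have h0 : 0 ≤ f n := hf0 n
    have hite : ∀ (P : Prop) [Decidable P], (0:ℝ) ≤ if P then f n else 0 := by
      intro P _; split_ifs; exacts [h0, le_rfl]
    by_cases hc : ¬(n.Prime ∧ (n+2*r).Prime) ∧ ¬((∃ p, Nat.Prime p ∧ n = p^2) ∧ (n+2*r).Prime)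
        ∧ ¬(n.Prime ∧ ∃ q, Nat.Prime q ∧ n + 2*r = q^2)
    · by_cases hfn : f n = 0
      · rw [if_pos hc, hfn]
        simp
      · rcases classify r n hfn hc.1 hc.2.1 hc.2.2 with d | d | d
        · rw [if_pos hc, if_pos (show D1 n from d)]
          have := hite (D2 n); have := hite (D3 n); linarith
        · rw [if_pos hc, if_pos (show D2 n from d)]
          have := hite (D1 n); have := hite (D3 n); linarith
        · rw [if_pos hc, if_pos (show D3 n from d)]
          have := hite (D1 n); have := hite (D2 n); linarith
    · rw [if_neg hc]
      have := hite (D1 n); have := hite (D2 n); have := hite (D3 n)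
      linarith
  have hD1sum : ∑ n ∈ (Finset.Icc 1 N).filter D1, f n
      ≤ (1+2*r) * (x^((1:ℝ)/3) * (Real.log x)^2) := by
    calc ∑ n ∈ (Finset.Icc 1 N).filter D1, f n
        ≤ ∑ n ∈ (Finset.Icc 1 N).filter D1, ((1+2*r)*Real.log x) * Λ n := by
          apply Finset.sum_le_sum
          intro n hn
          have h2 := hlog2 n (Finset.mem_of_mem_filter n hn)
          calc f n = Λ n * Λ (n+2*r) := rfl
            _ ≤ Λ n * ((1+2*r) * Real.log x) :=
              mul_le_mul_of_nonneg_left h2 vonMangoldt_nonneg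
            _ = ((1+2*r)*Real.log x) * Λ n := by ring
      _ = ((1+2*r)*Real.log x) * ∑ n ∈ (Finset.Icc 1 N).filter D1, Λ n := by
          rw [Finset.mul_sum]
      _ ≤ ((1+2*r)*Real.log x) * (x^((1:ℝ)/3) * Real.log x) := by
          apply mul_le_mul_of_nonneg_left (cube_sum_le N x hx hN) (by positivity)
      _ = (1+2*r) * (x^((1:ℝ)/3) * (Real.log x)^2) := by ring
  have hshift : ∑ n ∈ (Finset.Icc 1 N).filter D2, Λ (n+2*r)
      ≤ ((1+r)*x)^((1:ℝ)/3) * Real.log ((1+r)*x) := by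
    have himg : ∑ n ∈ (Finset.Icc 1 N).filter D2, Λ (n+2*r)
        = ∑ m ∈ ((Finset.Icc 1 N).filter D2).image (fun n => n + 2*r), Λ m := by
      rw [Finset.sum_image (fun a _ b _ h => by omega)]
    rw [himg]
    refine le_trans (Finset.sum_le_sum_of_subset_of_nonneg ?_
      (fun _ _ _ => vonMangoldt_nonneg)) (cube_sum_le (N+2*r) ((1+r)*x) (by nlinarith) ?_)
    · intro m hm
      rw [Finset.mem_image] at hm
      obtain ⟨n, hn, rfl⟩ := hm
      rw [Finset.mem_filter] at hn
      obtain ⟨hnI, q, b, hq, hb, heq⟩ := hn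
      rw [Finset.mem_Icc] at hnI
      rw [Finset.mem_filter, Finset.mem_Icc]
      exact ⟨⟨by omega, by omega⟩, q, b, hq, hb, heq⟩
    · push_cast; nlinarith
  have hD2sum : ∑ n ∈ (Finset.Icc 1 N).filter D2, f n
      ≤ (1+r)*(1+2*r) * (x^((1:ℝ)/3) * (Real.log x)^2) := by
    have hstep : ∑ n ∈ (Finset.Icc 1 N).filter D2, f n
        ≤ Real.log x * ∑ n ∈ (Finset.Icc 1 N).filter D2, Λ (n+2*r) := by
      rw [Finset.mul_sum]
      apply Finset.sum_le_sum
      intro n hn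
      have h1 := hlog1 n (Finset.mem_of_mem_filter n hn)
      calc f n = Λ n * Λ (n+2*r) := rfl
        _ ≤ Real.log x * Λ (n+2*r) :=
          mul_le_mul_of_nonneg_right h1 vonMangoldt_nonneg
    have hrpow : ((1+(r:ℝ))*x)^((1:ℝ)/3) ≤ (1+(r:ℝ)) * x^((1:ℝ)/3) := by
      rw [Real.mul_rpow (by positivity) (by linarith)]
      apply mul_le_mul_of_nonneg_right _ (by positivity)
      nth_rewrite 2 [← Real.rpow_one (1+(r:ℝ))]
      exact Real.rpow_le_rpow_of_exponent_le (by linarith) (by norm_num)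
    have hlogy : Real.log ((1+(r:ℝ))*x) ≤ (1+2*r) * Real.log x :=
      log_le_big' hx hr (by nlinarith) le_rfl
    have h2 : ((1+(r:ℝ))*x)^((1:ℝ)/3) * Real.log ((1+(r:ℝ))*x)
        ≤ ((1+(r:ℝ)) * x^((1:ℝ)/3)) * ((1+2*r) * Real.log x) := by
      apply mul_le_mul hrpow hlogy _ (by positivity)
      apply Real.log_nonneg; nlinarith
    calc ∑ n ∈ (Finset.Icc 1 N).filter D2, f n
        ≤ Real.log x * ∑ n ∈ (Finset.Icc 1 N).filter D2, Λ (n+2*r) := hstep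
      _ ≤ Real.log x * (((1+r)*x)^((1:ℝ)/3) * Real.log ((1+r)*x)) := by
          apply mul_le_mul_of_nonneg_left hshift hL.le
      _ ≤ Real.log x * (((1+(r:ℝ)) * x^((1:ℝ)/3)) * ((1+2*r) * Real.log x)) := by
          apply mul_le_mul_of_nonneg_left h2 hL.le
      _ = (1+r)*(1+2*r) * (x^((1:ℝ)/3) * (Real.log x)^2) := by ring
  have hD3sub : (Finset.Icc 1 N).filter D3 ⊆ Finset.Icc 1 (4*r^2) := by
    intro n hn
    rw [Finset.mem_filter, Finset.mem_Icc] at hn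
    obtain ⟨⟨hn1, hnN⟩, ⟨p, hp, hnp⟩, q, hq, heq⟩ := hn
    subst hnp
    rw [Finset.mem_Icc]
    have hpq : p < q := by
      by_contra hcon
      have : q^2 ≤ p^2 := Nat.pow_le_pow_left (by omega) 2
      omega
    have h1 : (p+1)^2 ≤ q^2 := Nat.pow_le_pow_left (by omega) 2
    have h2 : (p+1)^2 = p^2 + 2*p + 1 := by ring
    have hpr : p ≤ r := by omega
    have h3 : p^2 ≤ r^2 := Nat.pow_le_pow_left hpr 2
    constructor
    · omega
    · omega
  have hD3card : ((Finset.Icc 1 N).filter D3).card ≤ 4*r^2 := by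
    refine le_trans (Finset.card_le_card hD3sub) ?_
    rw [Nat.card_Icc]; omega
  have hD3sum : ∑ n ∈ (Finset.Icc 1 N).filter D3, f n
      ≤ 4*r^2*(1+2*r) * (Real.log x)^2 := by
    have hterm : ∀ n ∈ (Finset.Icc 1 N).filter D3, f n
        ≤ Real.log x * ((1+2*r) * Real.log x) := by
      intro n hn
      have hmem := Finset.mem_of_mem_filter n hn
      exact mul_le_mul (hlog1 n hmem) (hlog2 n hmem) vonMangoldt_nonneg hL.le
    calc ∑ n ∈ (Finset.Icc 1 N).filter D3, f n
        ≤ ((Finset.Icc 1 N).filter D3).card • (Real.log x * ((1+2*r) * Real.log x)) :=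
          Finset.sum_le_card_nsmul _ _ _ hterm
      _ = (((Finset.Icc 1 N).filter D3).card : ℝ) * (Real.log x * ((1+2*r) * Real.log x)) := by
          rw [nsmul_eq_mul]
      _ ≤ (4*(r:ℝ)^2) * (Real.log x * ((1+2*r) * Real.log x)) := by
          apply mul_le_mul_of_nonneg_right _ (by positivity)
          exact_mod_cast hD3card
      _ = 4*r^2*(1+2*r) * (Real.log x)^2 := by ring
  have hnn : 0 ≤ ∑ n ∈ (Finset.Icc 1 N).filter (fun n =>
        ¬(n.Prime ∧ (n+2*r).Prime) ∧ ¬((∃ p, Nat.Prime p ∧ n = p^2) ∧ (n+2*r).Prime)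
        ∧ ¬(n.Prime ∧ ∃ q, Nat.Prime q ∧ n + 2*r = q^2)), f n :=
    Finset.sum_nonneg (fun n _ => hf0 n)
  rw [abs_of_nonneg hnn]
  have hKL : (Real.log x)^2 ≤ x^((1:ℝ)/3) * (Real.log x)^2 := by
    nth_rewrite 1 [← one_mul ((Real.log x)^2)]
    apply mul_le_mul_of_nonneg_right hK1 (by positivity)
  calc _ ≤ _ := hsum_split
    _ ≤ (1+2*r) * (x^((1:ℝ)/3) * (Real.log x)^2)
        + ((1+r)*(1+2*r) * (x^((1:ℝ)/3) * (Real.log x)^2)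
        + 4*r^2*(1+2*r) * (x^((1:ℝ)/3) * (Real.log x)^2)) := by
        apply add_le_add hD1sum
        apply add_le_add hD2sum
        calc ∑ n ∈ (Finset.Icc 1 N).filter D3, f n ≤ 4*r^2*(1+2*r) * (Real.log x)^2 := hD3sum
          _ ≤ 4*r^2*(1+2*r) * (x^((1:ℝ)/3) * (Real.log x)^2) := by
              apply mul_le_mul_of_nonneg_left hKL (by positivity)
    _ = ((1+2*r) + (1+r)*(1+2*r) + 4*r^2*(1+2*r)) * (x^((1:ℝ)/3) * (Real.log x)^2) := by ring

set_option maxHeartbeats 2000000 in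
theorem stmt_8 (r : ℕ) (hr : 1 ≤ r) :
    ∃ C : ℝ, ∀ x : ℝ, 2 ≤ x →
      |(∑ n ∈ Finset.Icc 1 ⌊x⌋₊, Λ n * Λ (n + 2 * r))
        - (∑ p ∈ Finset.Icc 1 ⌊x⌋₊,
            if p.Prime ∧ (p + 2 * r).Prime then (Real.log p) ^ 2 else 0)
        - 2 * (∑ q ∈ Finset.Icc 1 ⌊Real.sqrt x⌋₊,
            if q.Prime then
              ((if (q ^ 2 + 2 * r).Prime then (1:ℝ) else 0)
                + (if (q ^ 2 - 2 * r).Prime then (1:ℝ) else 0)) * (Real.log q) ^ 2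
            else 0)|
      ≤ C * x ^ ((1:ℝ)/3) * (Real.log x) ^ 2 := by
  refine ⟨6*r + 6*r + (6*r*(1+r) + 2*r*(1+2*r))
    + ((1+2*r) + (1+r)*(1+2*r) + 4*r^2*(1+2*r)), ?_⟩
  intro x hx
  have hx0 : (0:ℝ) < x := by linarith
  set N := ⌊x⌋₊ with hNdef
  set M := ⌊Real.sqrt x⌋₊ with hMdef
  have hN : (N:ℝ) ≤ x := Nat.floor_le hx0.le
  have hL : 0 < Real.log x := Real.log_pos (by linarith)
  have hK1 : (1:ℝ) ≤ x^((1:ℝ)/3) := Real.one_le_rpow (by linarith) (by norm_num)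
  have hsx : Real.sqrt x ≤ x := by
    have h1 : Real.sqrt x ≤ Real.sqrt (x^2) := Real.sqrt_le_sqrt (by nlinarith)
    rwa [Real.sqrt_sq hx0.le] at h1
  have hMx : (M:ℝ) ≤ x := le_trans (Nat.floor_le (Real.sqrt_nonneg x)) hsx
  have hb : ∀ q : ℕ, 0 < q → (q ≤ M ↔ q^2 ≤ N) := by
    intro q hq
    rw [hMdef, hNdef, Nat.le_floor_iff (Real.sqrt_nonneg x), Nat.le_floor_iff hx0.le]
    rw [Real.le_sqrt (Nat.cast_nonneg q) hx0.le]
    constructor <;> intro h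
    · exact_mod_cast h
    · exact_mod_cast h
  have hnotsq : ∀ p : ℕ, Nat.Prime p → ¬ (p^2).Prime := by
    intro p hp hps
    have hd : p ∣ p^2 := ⟨p, by ring⟩
    have h1 := (Nat.Prime.eq_one_or_self_of_dvd hps p hd)
    have h2 : 2 ≤ p := hp.two_le
    have h3 : p^2 = p*p := by ring
    have h4 : 2*p ≤ p*p := Nat.mul_le_mul_right p h2
    omega
  -- split the main sum
  set f : ℕ → ℝ := fun n => Λ n * Λ (n + 2 * r) with hfdef
  have e1 := Finset.sum_filter_add_sum_filter_not (Finset.Icc 1 N)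
    (fun n => n.Prime ∧ (n+2*r).Prime) f
  have e2 := Finset.sum_filter_add_sum_filter_not
    ((Finset.Icc 1 N).filter (fun n => ¬(n.Prime ∧ (n+2*r).Prime)))
    (fun n => (∃ p, Nat.Prime p ∧ n = p^2) ∧ (n+2*r).Prime) f
  have e3 := Finset.sum_filter_add_sum_filter_not
    (((Finset.Icc 1 N).filter (fun n => ¬(n.Prime ∧ (n+2*r).Prime))).filter
      (fun n => ¬((∃ p, Nat.Prime p ∧ n = p^2) ∧ (n+2*r).Prime)))
    (fun n => n.Prime ∧ ∃ q, Nat.Prime q ∧ n + 2*r = q^2) f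
  have hs1 : ((Finset.Icc 1 N).filter (fun n => ¬(n.Prime ∧ (n+2*r).Prime))).filter
      (fun n => (∃ p, Nat.Prime p ∧ n = p^2) ∧ (n+2*r).Prime)
      = (Finset.Icc 1 N).filter (fun n => (∃ p, Nat.Prime p ∧ n = p^2) ∧ (n+2*r).Prime) := by
    rw [Finset.filter_filter]
    apply Finset.filter_congr
    intro n _
    constructor
    · rintro ⟨_, h⟩; exact h
    · rintro ⟨⟨p, hp, rfl⟩, hq⟩
      exact ⟨fun hc => hnotsq p hp hc.1, ⟨p, hp, rfl⟩, hq⟩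
  have hs2 : (((Finset.Icc 1 N).filter (fun n => ¬(n.Prime ∧ (n+2*r).Prime))).filter
      (fun n => ¬((∃ p, Nat.Prime p ∧ n = p^2) ∧ (n+2*r).Prime))).filter
      (fun n => n.Prime ∧ ∃ q, Nat.Prime q ∧ n + 2*r = q^2)
      = (Finset.Icc 1 N).filter (fun n => n.Prime ∧ ∃ q, Nat.Prime q ∧ n + 2*r = q^2) := by
    rw [Finset.filter_filter, Finset.filter_filter]
    apply Finset.filter_congr
    intro n _
    constructor
    · rintro ⟨_, _, h⟩; exact h
    · rintro ⟨hn, q, hq, heq⟩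
      have hnq : ¬ (n+2*r).Prime := by rw [heq]; exact hnotsq q hq
      exact ⟨fun hc => hnq hc.2, fun hc => hnq hc.2, hn, q, hq, heq⟩
  have hs3 : (((Finset.Icc 1 N).filter (fun n => ¬(n.Prime ∧ (n+2*r).Prime))).filter
      (fun n => ¬((∃ p, Nat.Prime p ∧ n = p^2) ∧ (n+2*r).Prime))).filter
      (fun n => ¬(n.Prime ∧ ∃ q, Nat.Prime q ∧ n + 2*r = q^2))
      = (Finset.Icc 1 N).filter (fun n =>
        ¬(n.Prime ∧ (n+2*r).Prime) ∧ ¬((∃ p, Nat.Prime p ∧ n = p^2) ∧ (n+2*r).Prime)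
        ∧ ¬(n.Prime ∧ ∃ q, Nat.Prime q ∧ n + 2*r = q^2)) := by
    rw [Finset.filter_filter, Finset.filter_filter]
  have key : ∑ n ∈ Finset.Icc 1 N, f n
      = (∑ n ∈ (Finset.Icc 1 N).filter (fun n => n.Prime ∧ (n+2*r).Prime), f n)
      + ((∑ n ∈ (Finset.Icc 1 N).filter
            (fun n => (∃ p, Nat.Prime p ∧ n = p^2) ∧ (n+2*r).Prime), f n)
      + ((∑ n ∈ (Finset.Icc 1 N).filter
            (fun n => n.Prime ∧ ∃ q, Nat.Prime q ∧ n + 2*r = q^2), f n)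
      + (∑ n ∈ (Finset.Icc 1 N).filter (fun n =>
        ¬(n.Prime ∧ (n+2*r).Prime) ∧ ¬((∃ p, Nat.Prime p ∧ n = p^2) ∧ (n+2*r).Prime)
        ∧ ¬(n.Prime ∧ ∃ q, Nat.Prime q ∧ n + 2*r = q^2)), f n))) := by
    rw [← e1, ← e2, ← e3, hs1, hs2, hs3]
  -- split the T sum
  have h2T : (∑ q ∈ Finset.Icc 1 M,
        if q.Prime then
          ((if (q ^ 2 + 2 * r).Prime then (1:ℝ) else 0)
            + (if (q ^ 2 - 2 * r).Prime then (1:ℝ) else 0)) * (Real.log q) ^ 2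
        else 0)
      = (∑ q ∈ (Finset.Icc 1 M).filter (fun q => q.Prime ∧ (q^2+2*r).Prime),
          (Real.log q)^2)
      + (∑ q ∈ (Finset.Icc 1 M).filter (fun q => q.Prime ∧ (q^2-2*r).Prime),
          (Real.log q)^2) := by
    rw [Finset.sum_filter, Finset.sum_filter, ← Finset.sum_add_distrib]
    apply Finset.sum_congr rfl
    intro q _
    by_cases h1 : q.Prime <;> by_cases h2 : (q^2+2*r).Prime
      <;> by_cases h3 : (q^2-2*r).Prime <;> simp [h1, h2, h3] <;> ring
  have hgoal : (∑ n ∈ Finset.Icc 1 N, f n)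
        - (∑ p ∈ Finset.Icc 1 N,
            if p.Prime ∧ (p + 2 * r).Prime then (Real.log p) ^ 2 else 0)
        - 2 * (∑ q ∈ Finset.Icc 1 M,
            if q.Prime then
              ((if (q ^ 2 + 2 * r).Prime then (1:ℝ) else 0)
                + (if (q ^ 2 - 2 * r).Prime then (1:ℝ) else 0)) * (Real.log q) ^ 2
            else 0)
      = ((∑ n ∈ (Finset.Icc 1 N).filter (fun n => n.Prime ∧ (n+2*r).Prime), f n)
          - (∑ p ∈ Finset.Icc 1 N,
              if p.Prime ∧ (p + 2 * r).Prime then (Real.log p) ^ 2 else 0))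
      + (((∑ n ∈ (Finset.Icc 1 N).filter
            (fun n => (∃ p, Nat.Prime p ∧ n = p^2) ∧ (n+2*r).Prime), f n)
          - 2 * ∑ q ∈ (Finset.Icc 1 M).filter (fun q => q.Prime ∧ (q^2+2*r).Prime),
              (Real.log q)^2)
      + (((∑ n ∈ (Finset.Icc 1 N).filter
            (fun n => n.Prime ∧ ∃ q, Nat.Prime q ∧ n + 2*r = q^2), f n)
          - 2 * ∑ q ∈ (Finset.Icc 1 M).filter (fun q => q.Prime ∧ (q^2-2*r).Prime),
              (Real.log q)^2)
      + (∑ n ∈ (Finset.Icc 1 N).filter (fun n =>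
        ¬(n.Prime ∧ (n+2*r).Prime) ∧ ¬((∃ p, Nat.Prime p ∧ n = p^2) ∧ (n+2*r).Prime)
        ∧ ¬(n.Prime ∧ ∃ q, Nat.Prime q ∧ n + 2*r = q^2)), f n))) := by
    rw [key, h2T]; ring
  rw [hgoal]
  have t1 := piece1 r N hr x hx hN
  have t2 := piece2 r N M hr x hx hN hMx hb
  have t3 := piece3 r N M hr x hx hN hMx hb
  have t4 := piece4 r N hr x hx hN
  have hKL : (Real.log x)^2 ≤ x^((1:ℝ)/3) * (Real.log x)^2 := by
    nth_rewrite 1 [← one_mul ((Real.log x)^2)]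
    apply mul_le_mul_of_nonneg_right hK1 (by positivity)
  have habs : ∀ a b c d : ℝ, |a + (b + (c + d))| ≤ |a| + (|b| + (|c| + |d|)) := by
    intro a b c d
    calc |a + (b + (c + d))| ≤ |a| + |b + (c + d)| := abs_add_le _ _
      _ ≤ |a| + (|b| + |c + d|) := by
          apply add_le_add_right
          exact abs_add_le _ _
      _ ≤ |a| + (|b| + (|c| + |d|)) := by
          apply add_le_add_right
          apply add_le_add_right
          exact abs_add_le _ _
  refine le_trans (habs _ _ _ _) ?_
  have hr0 : (0:ℝ) ≤ (r:ℝ) := by positivity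
  calc |_| + (|_| + (|_| + |_|))
      ≤ (6*r*(Real.log x)^2) + ((6*r*(Real.log x)^2)
        + (((6*r*(1+r) + 2*r*(1+2*r))*(Real.log x)^2)
        + (((1+2*r) + (1+r)*(1+2*r) + 4*r^2*(1+2*r)) * (x^((1:ℝ)/3) * (Real.log x)^2)))) := by
        apply add_le_add t1
        apply add_le_add t2
        exact add_le_add t3 t4
    _ ≤ (6*r*(x^((1:ℝ)/3) * (Real.log x)^2)) + ((6*r*(x^((1:ℝ)/3) * (Real.log x)^2))
        + (((6*r*(1+r) + 2*r*(1+2*r))*(x^((1:ℝ)/3) * (Real.log x)^2))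
        + (((1+2*r) + (1+r)*(1+2*r) + 4*r^2*(1+2*r)) * (x^((1:ℝ)/3) * (Real.log x)^2)))) := by
        apply add_le_add (mul_le_mul_of_nonneg_left hKL (by positivity))
        apply add_le_add (mul_le_mul_of_nonneg_left hKL (by positivity))
        apply add_le_add _ le_rfl
        apply mul_le_mul_of_nonneg_left hKL (by positivity)
    _ = (6*r + 6*r + (6*r*(1+r) + 2*r*(1+2*r))
        + ((1+2*r) + (1+r)*(1+2*r) + 4*r^2*(1+2*r))) * x ^ ((1:ℝ)/3) * (Real.log x) ^ 2 := by
        ring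
end

section
/- For Re z > 1, Σ_k Λ²(k) k^{−z} = Σ_p (log² p) p^{−z} + Σ_p (log² p) p^{−2z} + h(z), where h(z) is holomorphic for Re z > 1/3, and consequently Σ_k Λ²(k) k^{−z} = (d/dz){ζ'(z)/ζ(z) − (1/2) ζ'(2z)/ζ(2z)} + H(z) with H holomorphic on {Re z > 1/3}. -/
open Complex ArithmeticFunction

namespace Stmt18Aux
open LSeries
open scoped LSeries.notation

noncomputable section

/-- `Λ²` as a function `ℕ → ℂ`. -/
def F (n : ℕ) : ℂ := ((Λ n : ℝ) : ℂ) ^ 2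

/-- the part of `Λ²` supported on primes. -/
def f₁ (n : ℕ) : ℂ := if n.Prime then ((Real.log n : ℝ) : ℂ) ^ 2 else 0

/-- the part of `Λ²` supported on squares of primes. -/
def f₂ (n : ℕ) : ℂ :=
  if (Nat.sqrt n).Prime ∧ (Nat.sqrt n) ^ 2 = n then ((Real.log (Nat.sqrt n) : ℝ) : ℂ) ^ 2 else 0

/-- remainder coefficients for the first identity. -/
def f₃ (n : ℕ) : ℂ := F n - f₁ n - f₂ n

/-- the coefficients of the Dirichlet series `LSeries (logMul Λ) (2z)` viewed at `z`. -/
def g₂ (n : ℕ) : ℂ :=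
  if (Nat.sqrt n) ^ 2 = n then ((Real.log (Nat.sqrt n) * Λ (Nat.sqrt n) : ℝ) : ℂ) else 0

/-- remainder coefficients for the second identity. -/
def c (n : ℕ) : ℂ := F n - Complex.log n * ((Λ n : ℝ) : ℂ) + g₂ n

lemma log_nat_nonneg (n : ℕ) : 0 ≤ Real.log n := by
  rcases Nat.eq_zero_or_pos n with rfl | h
  · simp
  · rcases Nat.lt_or_ge n 2 with h2 | h2
    · interval_cases n <;> simp
    · exact Real.log_nonneg (by exact_mod_cast Nat.one_le_iff_ne_zero.mpr (by omega))

lemma log_nat_mono {a b : ℕ} (h : a ≤ b) : Real.log a ≤ Real.log b := by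
  rcases Nat.eq_zero_or_pos a with rfl | ha
  · simpa using log_nat_nonneg b
  · exact Real.log_le_log (by exact_mod_cast ha) (by exact_mod_cast h)

lemma norm_F_le (n : ℕ) : ‖F n‖ ≤ (Real.log n) ^ 2 := by
  rw [F, ← ofReal_pow, Complex.norm_real, Real.norm_eq_abs, _root_.abs_of_nonneg (by positivity)]
  have h1 : Λ n ≤ Real.log n := vonMangoldt_le_log
  have h2 : (0:ℝ) ≤ Λ n := vonMangoldt_nonneg
  nlinarith [log_nat_nonneg n]

lemma norm_f₁_le (n : ℕ) : ‖f₁ n‖ ≤ (Real.log n) ^ 2 := by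
  rw [f₁]
  split
  · rw [← ofReal_pow, Complex.norm_real, Real.norm_eq_abs, _root_.abs_of_nonneg (by positivity)]
  · simpa using sq_nonneg (Real.log n)

lemma norm_f₂_le (n : ℕ) : ‖f₂ n‖ ≤ (Real.log n) ^ 2 := by
  rw [f₂]
  split
  · rw [← ofReal_pow, Complex.norm_real, Real.norm_eq_abs, _root_.abs_of_nonneg (by positivity)]
    have := log_nat_mono (Nat.sqrt_le_self n)
    have := log_nat_nonneg (Nat.sqrt n)
    nlinarith
  · simpa using sq_nonneg (Real.log n)

lemma norm_g₂_le (n : ℕ) : ‖g₂ n‖ ≤ (Real.log n) ^ 2 := by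
  rw [g₂]
  split
  · rw [Complex.norm_real, Real.norm_eq_abs,
      _root_.abs_of_nonneg (mul_nonneg (log_nat_nonneg _) vonMangoldt_nonneg)]
    have h1 : Λ (Nat.sqrt n) ≤ Real.log (Nat.sqrt n) := vonMangoldt_le_log
    have h2 : (0:ℝ) ≤ Λ (Nat.sqrt n) := vonMangoldt_nonneg
    have h3 := log_nat_mono (Nat.sqrt_le_self n)
    have h4 := log_nat_nonneg (Nat.sqrt n)
    nlinarith
  · simpa using sq_nonneg (Real.log n)

lemma norm_logMul_le (n : ℕ) : ‖logMul ↗Λ n‖ ≤ (Real.log n) ^ 2 := by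
  have : logMul ↗Λ n = ((Real.log n * Λ n : ℝ) : ℂ) := by
    rw [logMul, ← Complex.natCast_log]
    push_cast
    ring
  rw [this, Complex.norm_real, Real.norm_eq_abs,
    _root_.abs_of_nonneg (mul_nonneg (log_nat_nonneg _) vonMangoldt_nonneg)]
  have h1 : Λ n ≤ Real.log n := vonMangoldt_le_log
  have h2 : (0:ℝ) ≤ Λ n := vonMangoldt_nonneg
  nlinarith [log_nat_nonneg n]

lemma norm_f₃_le (n : ℕ) : ‖f₃ n‖ ≤ 3 * (Real.log n) ^ 2 := by
  calc ‖f₃ n‖ ≤ ‖F n - f₁ n‖ + ‖f₂ n‖ := norm_sub_le _ _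
  _ ≤ ‖F n‖ + ‖f₁ n‖ + ‖f₂ n‖ := by linarith [norm_sub_le (F n) (f₁ n)]
  _ ≤ 3 * (Real.log n) ^ 2 := by linarith [norm_F_le n, norm_f₁_le n, norm_f₂_le n]

lemma norm_c_le (n : ℕ) : ‖c n‖ ≤ 3 * (Real.log n) ^ 2 := by
  calc ‖c n‖ ≤ ‖F n - Complex.log n * ((Λ n : ℝ) : ℂ)‖ + ‖g₂ n‖ := norm_add_le _ _
  _ ≤ ‖F n‖ + ‖logMul ↗Λ n‖ + ‖g₂ n‖ := by
      have : ‖F n - Complex.log n * ((Λ n : ℝ) : ℂ)‖ ≤ ‖F n‖ + ‖Complex.log n * ((Λ n : ℝ):ℂ)‖ :=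
        norm_sub_le _ _
      have h2 : ‖Complex.log n * ((Λ n : ℝ):ℂ)‖ = ‖logMul ↗Λ n‖ := rfl
      linarith
  _ ≤ 3 * (Real.log n) ^ 2 := by linarith [norm_F_le n, norm_logMul_le n, norm_g₂_le n]

/-- summability of `log² n / n^s` for `s > 1`. -/
lemma summable_logsq {s : ℝ} (hs : 1 < s) :
    Summable (fun n : ℕ => (Real.log n) ^ 2 / (n : ℝ) ^ s) := by
  set ε : ℝ := (s - 1) / 4 with hε
  have hε0 : 0 < ε := by rw [hε]; linarith
  have key : ∀ n : ℕ, (Real.log n) ^ 2 / (n : ℝ) ^ s ≤ ε⁻¹ ^ 2 * (n : ℝ) ^ (2 * ε - s) := by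
    intro n
    rcases Nat.eq_zero_or_pos n with rfl | hn
    · simp [Real.zero_rpow (by nlinarith : s ≠ 0), Real.zero_rpow (by nlinarith : 2*ε - s ≠ 0)]
    · have hn1 : (1:ℝ) ≤ (n:ℝ) := by exact_mod_cast hn
      have hlog : Real.log n ≤ (n:ℝ) ^ ε / ε :=
        Real.log_le_rpow_div (by positivity) hε0
      have hsq : (Real.log n) ^ 2 ≤ ((n:ℝ) ^ ε / ε) ^ 2 := by
        have := log_nat_nonneg n
        nlinarith
      have hpow : ((n:ℝ) ^ ε / ε) ^ 2 = ε⁻¹ ^ 2 * (n:ℝ) ^ (2 * ε) := by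
        rw [div_pow, ← Real.rpow_natCast ((n:ℝ) ^ ε) 2,
          ← Real.rpow_mul (by positivity : (0:ℝ) ≤ (n:ℝ)), div_eq_mul_inv, ← inv_pow, mul_comm]
        congr 1
        push_cast
        ring
      have hns : (0:ℝ) < (n:ℝ) ^ s := Real.rpow_pos_of_pos (by positivity) s
      rw [div_le_iff₀ hns]
      calc (Real.log n) ^ 2 ≤ ε⁻¹ ^ 2 * (n:ℝ) ^ (2 * ε) := by rw [← hpow]; exact hsq
      _ = ε⁻¹ ^ 2 * (n : ℝ) ^ (2 * ε - s) * (n:ℝ) ^ s := by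
          rw [mul_assoc, ← Real.rpow_add (by positivity)]
          ring_nf
  have hsum : Summable (fun n : ℕ => ε⁻¹ ^ 2 * (n : ℝ) ^ (2 * ε - s)) := by
    apply Summable.mul_left
    rw [Real.summable_nat_rpow]
    nlinarith
  exact hsum.of_nonneg_of_le (fun n => by positivity) key

/-- summability of L-series with `log²`-bounded coefficients for `re z > 1`. -/
lemma lseriesSummable_of_le {g : ℕ → ℂ} (hg : ∀ n, ‖g n‖ ≤ 3 * (Real.log n) ^ 2)
    {z : ℂ} (hz : 1 < z.re) : LSeriesSummable g z := by
  have hsum : Summable (fun n : ℕ => 3 * ((Real.log n) ^ 2 / (n : ℝ) ^ z.re)) :=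
    (summable_logsq hz).mul_left 3
  refine Summable.of_norm (hsum.of_nonneg_of_le (fun n => norm_nonneg _) fun n => ?_)
  rw [norm_term_eq]
  split
  · positivity
  · rw [mul_div_assoc']
    gcongr
    exact hg n

lemma abscissa_le_one {g : ℕ → ℂ} (hg : ∀ n, ‖g n‖ ≤ 3 * (Real.log n) ^ 2) :
    abscissaOfAbsConv g ≤ 1 := by
  have := abscissaOfAbsConv_le_of_forall_lt_LSeriesSummable (f := g) (x := 1)
    (fun y hy => lseriesSummable_of_le hg (by simpa using hy))
  simpa using this

/-- the injection from primes and exponents `≥ 3` to `ℕ`. -/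
def ι (x : Nat.Primes × ℕ) : ℕ := (x.1 : ℕ) ^ (x.2 + 3)

lemma ι_injective : Function.Injective ι := by
  rintro ⟨p, a⟩ ⟨q, b⟩ h
  simp only [ι] at h
  have hpq : (p : ℕ) = (q : ℕ) := by
    have hdvd : (p : ℕ) ∣ (q : ℕ) ^ (b + 3) := by
      rw [← h]; exact dvd_pow_self _ (by omega)
    have := (Nat.Prime.dvd_of_dvd_pow p.2 hdvd)
    exact ((Nat.prime_dvd_prime_iff_eq p.2 q.2).mp this)
  have hab : a + 3 = b + 3 := by
    apply Nat.pow_right_injective p.2.two_le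
    show (p:ℕ) ^ (a+3) = (p:ℕ) ^ (b+3)
    rw [h, hpq]
  simp only [Prod.mk.injEq]
  exact ⟨Subtype.ext hpq, by omega⟩

/-- summability of "cube-supported" L-series for `re > 1/3`. -/
lemma lseriesSummable_of_cube {g : ℕ → ℂ}
    (hsupp : ∀ n, g n ≠ 0 → ∃ p m : ℕ, p.Prime ∧ 3 ≤ m ∧ n = p ^ m)
    (hg : ∀ n, ‖g n‖ ≤ 3 * (Real.log n) ^ 2)
    {y : ℝ} (hy : 1 / 3 < y) : LSeriesSummable g (y : ℂ) := by
  have hy0 : 0 < y := by linarith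
  refine Summable.of_norm ?_
  have hzero : ∀ n ∉ Set.range ι, ‖term g (y : ℂ) n‖ = 0 := by
    intro n hn
    rcases eq_or_ne n 0 with rfl | hn0
    · simp
    rcases eq_or_ne (g n) 0 with hgn | hgn
    · simp [term_of_ne_zero hn0, hgn]
    obtain ⟨p, m, hp, hm, rfl⟩ := hsupp n hgn
    exact absurd ⟨(⟨p, hp⟩, m - 3), by simp [ι]; congr 1; omega⟩ hn
  rw [← Function.Injective.summable_iff ι_injective hzero]
  -- now summability over primes × ℕ
  set r : ℝ := (2:ℝ) ^ (-y) with hr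
  have hr0 : 0 < r := Real.rpow_pos_of_pos (by norm_num) _
  have hr1 : r < 1 := Real.rpow_lt_one_of_one_lt_of_neg (by norm_num) (by linarith)
  have hb : Summable (fun j : ℕ => 3 * ((j:ℝ) + 3) ^ 2 * r ^ j) := by
    have h0 : Summable (fun j : ℕ => (j:ℝ) ^ 0 * r ^ j) :=
      summable_pow_mul_geometric_of_norm_lt_one 0 (by rwa [Real.norm_eq_abs, _root_.abs_of_pos hr0])
    have h1 : Summable (fun j : ℕ => (j:ℝ) ^ 1 * r ^ j) :=
      summable_pow_mul_geometric_of_norm_lt_one 1 (by rwa [Real.norm_eq_abs, _root_.abs_of_pos hr0])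
    have h2 : Summable (fun j : ℕ => (j:ℝ) ^ 2 * r ^ j) :=
      summable_pow_mul_geometric_of_norm_lt_one 2 (by rwa [Real.norm_eq_abs, _root_.abs_of_pos hr0])
    have hsumb : Summable (fun j : ℕ =>
        3 * ((j:ℝ) ^ 2 * r ^ j) + (18 * ((j:ℝ) ^ 1 * r ^ j) + 27 * ((j:ℝ) ^ 0 * r ^ j))) :=
      (h2.mul_left 3).add ((h1.mul_left 18).add (h0.mul_left 27))
    exact hsumb.congr (fun j => by push_cast; ring)
  have hc : Summable (fun p : Nat.Primes => (Real.log (p:ℕ)) ^ 2 * ((p:ℕ):ℝ) ^ (-(3 * y))) := by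
    have h3y : 1 < 3 * y := by linarith
    have hNat : Summable (fun n : ℕ => (Real.log n) ^ 2 * (n:ℝ) ^ (-(3 * y))) :=
      (summable_logsq h3y).congr fun n => by
        rw [Real.rpow_neg (by positivity), div_eq_mul_inv]
    exact hNat.comp_injective Nat.Primes.coe_nat_injective
  have hmaj : Summable (fun x : Nat.Primes × ℕ =>
      ((Real.log (x.1:ℕ)) ^ 2 * ((x.1:ℕ):ℝ) ^ (-(3 * y))) * (3 * ((x.2:ℝ) + 3) ^ 2 * r ^ x.2)) :=
    hc.mul_of_nonneg hb (fun p => by positivity) (fun j => by positivity)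
  refine hmaj.of_nonneg_of_le (fun x => norm_nonneg _) ?_
  rintro ⟨p, j⟩
  have hp2 : 2 ≤ (p:ℕ) := p.2.two_le
  set P : ℝ := ((p:ℕ):ℝ) with hP
  have hP1 : (2:ℝ) ≤ P := by rw [hP]; exact_mod_cast hp2
  have hP0 : (0:ℝ) < P := by linarith
  have hne : ι (p, j) ≠ 0 := pow_ne_zero _ p.2.ne_zero
  have hcast : ((ι (p, j) : ℕ) : ℝ) = P ^ (j + 3 : ℕ) := by
    rw [ι]; push_cast; ring
  have hlog : Real.log (ι (p, j)) = ((j:ℝ) + 3) * Real.log P := by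
    rw [hcast, Real.log_pow]; push_cast; ring
  have h1 : ‖g (ι (p, j))‖ ≤ 3 * (((j:ℝ) + 3) * Real.log P) ^ 2 := by
    have := hg (ι (p, j)); rwa [hlog] at this
  have hrpow : ((ι (p, j) : ℕ) : ℝ) ^ ((y:ℂ)).re = P ^ (((j:ℝ) + 3) * y) := by
    rw [Complex.ofReal_re, hcast, ← Real.rpow_natCast P (j + 3),
      ← Real.rpow_mul hP0.le]
    congr 1
    push_cast
    ring
  simp only [Function.comp_apply]
  rw [norm_term_eq, if_neg hne, hrpow, div_eq_mul_inv, ← Real.rpow_neg hP0.le]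
  have hmul : P ^ (-(((j:ℝ) + 3) * y)) = P ^ (-(3 * y)) * P ^ (-(y * (j:ℝ))) := by
    rw [← Real.rpow_add hP0]; ring_nf
  have hPy : (P ^ (-y)) ^ j = P ^ (-(y * (j:ℝ))) := by
    rw [← Real.rpow_natCast (P ^ (-y)) j, ← Real.rpow_mul hP0.le]; ring_nf
  have hbase : P ^ (-y) ≤ r := by
    rw [hr, Real.rpow_neg hP0.le, Real.rpow_neg (by norm_num : (0:ℝ) ≤ 2)]
    exact inv_anti₀ (Real.rpow_pos_of_pos two_pos y)
      (Real.rpow_le_rpow (by norm_num) hP1 hy0.le)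
  calc ‖g (ι (p, j))‖ * P ^ (-(((j:ℝ) + 3) * y))
      ≤ (3 * (((j:ℝ) + 3) * Real.log P) ^ 2) * P ^ (-(((j:ℝ) + 3) * y)) := by
        exact mul_le_mul_of_nonneg_right h1 (Real.rpow_nonneg hP0.le _)
    _ = ((Real.log P) ^ 2 * P ^ (-(3 * y))) * (3 * ((j:ℝ) + 3) ^ 2 * (P ^ (-y)) ^ j) := by
        rw [hmul, hPy]; ring
    _ ≤ ((Real.log P) ^ 2 * P ^ (-(3 * y))) * (3 * ((j:ℝ) + 3) ^ 2 * r ^ j) := by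
        have h0 : (0:ℝ) ≤ P ^ (-y) := Real.rpow_nonneg hP0.le _
        gcongr

lemma sq_ne_prime {p s : ℕ} (hp : p.Prime) : s ^ 2 ≠ p := by
  intro h
  have hdvd : s ∣ p := ⟨s, by rw [← h]; ring⟩
  rcases (Nat.Prime.eq_one_or_self_of_dvd hp s hdvd) with h1 | h1
  · subst h1; simp at h; exact hp.ne_one h.symm
  · rw [h1] at h
    have h2 : p ^ 2 = p ^ 1 := by simpa using h
    have := Nat.pow_right_injective hp.two_le h2
    omega

lemma prime_sq_not_prime {p : ℕ} (hp : p.Prime) : ¬ (p ^ 2).Prime := by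
  intro h
  exact sq_ne_prime h rfl

lemma sqrt_sq (p : ℕ) : Nat.sqrt (p ^ 2) = p := Nat.sqrt_eq' p

lemma vonMangoldt_pp {p k : ℕ} (hp : p.Prime) (hk : k ≠ 0) : Λ (p ^ k) = Real.log p := by
  rw [vonMangoldt_apply_pow hk, vonMangoldt_apply_prime hp]

lemma f₃_supp : ∀ n, f₃ n ≠ 0 → ∃ p m : ℕ, p.Prime ∧ 3 ≤ m ∧ n = p ^ m := by
  intro n h
  by_contra hcon
  push_neg at hcon
  apply h
  by_cases hn : IsPrimePow n
  · obtain ⟨p, k, hp, hk, rfl⟩ := hn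
    have hpp : p.Prime := hp.nat_prime
    have hk3 : k < 3 := by
      by_contra h3
      exact (hcon p k hpp (by omega)) rfl
    interval_cases k
    · rw [f₃, F, f₁, f₂, pow_one, if_pos hpp,
        if_neg (fun hc => sq_ne_prime hpp hc.2),
        vonMangoldt_apply_prime hpp]
      ring
    · rw [f₃, F, f₁, f₂, if_neg (prime_sq_not_prime hpp), vonMangoldt_pp hpp (by norm_num)]
      rw [if_pos (by rw [sqrt_sq]; exact ⟨hpp, rfl⟩), sqrt_sq]
      ring
  · have hΛ : Λ n = 0 := vonMangoldt_eq_zero_iff.mpr hn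
    rw [f₃, F, hΛ, f₁, f₂]
    rw [if_neg (fun hc : n.Prime => hn hc.prime.isPrimePow)]
    rw [if_neg (fun hc => hn ⟨Nat.sqrt n, 2, hc.1.prime, by norm_num, hc.2⟩)]
    push_cast
    ring

lemma c_supp : ∀ n, c n ≠ 0 → ∃ p m : ℕ, p.Prime ∧ 3 ≤ m ∧ n = p ^ m := by
  intro n h
  by_contra hcon
  push_neg at hcon
  apply h
  by_cases hn : IsPrimePow n
  · obtain ⟨p, k, hp, hk, rfl⟩ := hn
    have hpp : p.Prime := hp.nat_prime
    have hp0 : 0 < p := hpp.pos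
    have hk3 : k < 3 := by
      by_contra h3
      exact (hcon p k hpp (by omega)) rfl
    interval_cases k
    · rw [c, F, g₂, pow_one, if_neg (fun hc => sq_ne_prime hpp hc),
        vonMangoldt_apply_prime hpp, ← Complex.natCast_log]
      push_cast
      ring
    · rw [c, F, g₂, if_pos (by rw [sqrt_sq]), sqrt_sq, vonMangoldt_pp hpp (by norm_num),
        vonMangoldt_apply_prime hpp, ← Complex.natCast_log]
      push_cast [Real.log_pow]
      ring
  · have hΛ : Λ n = 0 := vonMangoldt_eq_zero_iff.mpr hn
    have hg : g₂ n = 0 := by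
      rw [g₂]
      split
      · rename_i hsq
        have hΛs : Λ (Nat.sqrt n) = 0 := by
          by_contra hs
          have hpp : IsPrimePow (Nat.sqrt n) := vonMangoldt_ne_zero_iff.mp hs
          obtain ⟨p, k, hp, hk, hpk⟩ := hpp
          refine hn ⟨p, k * 2, hp, by omega, ?_⟩
          rw [pow_mul, hpk, hsq]
        simp [hΛs]
      · rfl
    rw [c, F, hΛ, hg]
    push_cast
    ring

lemma bound3 {g : ℕ → ℂ} (h : ∀ n, ‖g n‖ ≤ (Real.log n) ^ 2) :
    ∀ n, ‖g n‖ ≤ 3 * (Real.log n) ^ 2 :=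
  fun n => (h n).trans (by nlinarith [sq_nonneg (Real.log n)])

lemma absc_f₃ : abscissaOfAbsConv f₃ ≤ ((1/3 : ℝ) : EReal) :=
  abscissaOfAbsConv_le_of_forall_lt_LSeriesSummable fun _ hy =>
    lseriesSummable_of_cube f₃_supp norm_f₃_le hy

lemma absc_c : abscissaOfAbsConv c ≤ ((1/3 : ℝ) : EReal) :=
  abscissaOfAbsConv_le_of_forall_lt_LSeriesSummable fun _ hy =>
    lseriesSummable_of_cube c_supp norm_c_le hy

lemma diff_f₃ : DifferentiableOn ℂ (LSeries f₃) {z : ℂ | 1 / 3 < z.re} :=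
  (LSeries_differentiableOn f₃).mono fun z hz =>
    absc_f₃.trans_lt (by exact_mod_cast hz)

lemma diff_c : DifferentiableOn ℂ (LSeries c) {z : ℂ | 1 / 3 < z.re} :=
  (LSeries_differentiableOn c).mono fun z hz =>
    absc_c.trans_lt (by exact_mod_cast hz)

lemma term_eq (f : ℕ → ℂ) (z : ℂ) {n : ℕ} (hn : n ≠ 0) :
    term f z n = f n * (n : ℂ) ^ (-z) := by
  rw [term_of_ne_zero hn, cpow_neg, div_eq_mul_inv]

lemma cpow_two_mul (x : ℕ) (z : ℂ) : ((x:ℂ) ^ (2:ℕ)) ^ z = (x:ℂ) ^ (2 * z) := by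
  have h := Complex.cpow_nat_mul' (x := (x:ℂ)) (n := 2) (y := z)
    (by rw [Complex.natCast_arg]; simpa using Real.pi_pos)
    (by rw [Complex.natCast_arg]; simpa using Real.pi_nonneg)
  rw [← h]
  norm_num

lemma LSeries_f₁ (z : ℂ) :
    LSeries f₁ z = ∑' p : Nat.Primes, ((Real.log p : ℂ)) ^ 2 * ((p : ℕ) : ℂ) ^ (-z) := by
  rw [LSeries]
  rw [← Function.Injective.tsum_eq (g := fun p : Nat.Primes => (p : ℕ))
    Nat.Primes.coe_nat_injective ?_]
  · exact tsum_congr fun p => by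
      rw [term_eq _ _ p.2.pos.ne', f₁, if_pos p.2]
  · intro n hn
    have hn0 : n ≠ 0 := by rintro rfl; simp at hn
    have hf : f₁ n ≠ 0 := by
      intro h0
      apply hn
      rw [term_of_ne_zero hn0, h0, zero_div]
    have hp : n.Prime := by
      by_contra hnp
      exact hf (if_neg hnp)
    exact ⟨⟨n, hp⟩, rfl⟩

lemma LSeries_f₂ (z : ℂ) :
    LSeries f₂ z = ∑' p : Nat.Primes, ((Real.log p : ℂ)) ^ 2 * ((p : ℕ) : ℂ) ^ (-(2 * z)) := by
  rw [LSeries]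
  rw [← Function.Injective.tsum_eq (g := fun p : Nat.Primes => (p : ℕ) ^ 2)
    ((Nat.pow_left_injective (by norm_num)).comp Nat.Primes.coe_nat_injective) ?_]
  · refine tsum_congr fun p => ?_
    have hne : (p : ℕ) ^ 2 ≠ 0 := pow_ne_zero _ p.2.pos.ne'
    rw [term_eq _ _ hne, f₂, if_pos (by rw [sqrt_sq]; exact ⟨p.2, rfl⟩), sqrt_sq]
    congr 1
    rw [Nat.cast_pow, cpow_two_mul, mul_neg]
  · intro n hn
    have hn0 : n ≠ 0 := by rintro rfl; simp at hn
    have hf : f₂ n ≠ 0 := by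
      intro h0
      apply hn
      rw [term_of_ne_zero hn0, h0, zero_div]
    have hp : (Nat.sqrt n).Prime ∧ (Nat.sqrt n) ^ 2 = n := by
      by_contra hnp
      exact hf (if_neg hnp)
    exact ⟨⟨Nat.sqrt n, hp.1⟩, hp.2⟩

lemma LSeries_g₂ (z : ℂ) : LSeries g₂ z = LSeries (logMul ↗Λ) (2 * z) := by
  rw [LSeries, LSeries]
  rw [← Function.Injective.tsum_eq (g := fun s : ℕ => s ^ 2)
    (Nat.pow_left_injective (by norm_num)) ?_]
  · refine tsum_congr fun s => ?_
    rcases eq_or_ne s 0 with rfl | hs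
    · simp
    · have hne : s ^ 2 ≠ 0 := pow_ne_zero _ hs
      rw [term_of_ne_zero hne, term_of_ne_zero hs, g₂, if_pos (by rw [sqrt_sq]), sqrt_sq]
      rw [logMul, ← Complex.natCast_log]
      push_cast
      rw [cpow_two_mul]
  · intro n hn
    have hn0 : n ≠ 0 := by rintro rfl; simp at hn
    have hf : g₂ n ≠ 0 := by
      intro h0
      apply hn
      rw [term_of_ne_zero hn0, h0, zero_div]
    have hp : (Nat.sqrt n) ^ 2 = n := by
      by_contra hnp
      exact hf (if_neg hnp)
    exact ⟨Nat.sqrt n, hp⟩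

end

end Stmt18Aux


open Stmt18Aux LSeries in
open scoped LSeries.notation in
theorem stmt_18 :
    ∃ h H : ℂ → ℂ, DifferentiableOn ℂ h {z : ℂ | 1 / 3 < z.re} ∧
      DifferentiableOn ℂ H {z : ℂ | 1 / 3 < z.re} ∧
      ∀ z : ℂ, 1 < z.re →
        (∑' k : ℕ, ((Λ k : ℂ)) ^ 2 * (k : ℂ) ^ (-z)
          = (∑' p : Nat.Primes, ((Real.log p : ℂ)) ^ 2 * ((p : ℕ) : ℂ) ^ (-z))
            + (∑' p : Nat.Primes, ((Real.log p : ℂ)) ^ 2 * ((p : ℕ) : ℂ) ^ (-(2 * z)))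
            + h z) ∧
        (∑' k : ℕ, ((Λ k : ℂ)) ^ 2 * (k : ℂ) ^ (-z)
          = deriv (fun w : ℂ => deriv riemannZeta w / riemannZeta w
              - (1 / 2) * (deriv riemannZeta (2 * w) / riemannZeta (2 * w))) z
            + H z) := by
  refine ⟨LSeries Stmt18Aux.f₃, LSeries Stmt18Aux.c, diff_f₃, diff_c, ?_⟩
  intro z hz
  have hL : (∑' k : ℕ, ((Λ k : ℂ)) ^ 2 * (k : ℂ) ^ (-z)) = LSeries F z := by
    rw [LSeries]
    refine tsum_congr fun k => ?_
    rcases eq_or_ne k 0 with rfl | hk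
    · simp [F]
    · rw [term_eq F z hk, F]
  have hf₁ : LSeriesSummable f₁ z := lseriesSummable_of_le (bound3 norm_f₁_le) hz
  have hf₂ : LSeriesSummable f₂ z := lseriesSummable_of_le (bound3 norm_f₂_le) hz
  have hf₃ : LSeriesSummable f₃ z := lseriesSummable_of_le norm_f₃_le hz
  have hcs : LSeriesSummable Stmt18Aux.c z := lseriesSummable_of_le norm_c_le hz
  have hg₂s : LSeriesSummable g₂ z := lseriesSummable_of_le (bound3 norm_g₂_le) hz
  have hlm : LSeriesSummable (logMul ↗Λ) z := lseriesSummable_of_le (bound3 norm_logMul_le) hz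
  constructor
  · -- first identity
    have hEq : F = (f₁ + f₂) + f₃ := by
      funext n
      simp only [Pi.add_apply, f₃]
      ring
    rw [hL, hEq, LSeries_add (hf₁.add hf₂) hf₃, LSeries_add hf₁ hf₂, LSeries_f₁, LSeries_f₂]
  · -- second identity
    have hΛabs : abscissaOfAbsConv ↗Λ ≤ ((1 : ℝ) : EReal) :=
      abscissaOfAbsConv_le_of_forall_lt_LSeriesSummable fun y hy =>
        LSeriesSummable_vonMangoldt (by simpa using hy)
    have hz1 : abscissaOfAbsConv ↗Λ < z.re := hΛabs.trans_lt (by exact_mod_cast hz)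
    have h2zre : (2 * z).re = 2 * z.re := by simp [Complex.mul_re]
    have hz2 : abscissaOfAbsConv ↗Λ < (2 * z).re := by
      refine hΛabs.trans_lt ?_
      rw [h2zre]
      exact_mod_cast (by linarith : (1:ℝ) < 2 * z.re)
    have hd1 : HasDerivAt (LSeries ↗Λ) (-(LSeries (logMul ↗Λ) z)) z := LSeries_hasDerivAt hz1
    have hd2' : HasDerivAt (LSeries ↗Λ) (-(LSeries (logMul ↗Λ) (2 * z))) (2 * z) :=
      LSeries_hasDerivAt hz2
    have hgd : HasDerivAt (fun w : ℂ => 2 * w) 2 z := by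
      simpa using (hasDerivAt_id z).const_mul (2 : ℂ)
    have hd2 : HasDerivAt (fun w => LSeries ↗Λ (2 * w))
        (-(LSeries (logMul ↗Λ) (2 * z)) * 2) z := hd2'.comp z hgd
    have hG : HasDerivAt (fun w : ℂ => -(LSeries ↗Λ w) + (1/2 : ℂ) * LSeries ↗Λ (2 * w))
        (LSeries (logMul ↗Λ) z - LSeries (logMul ↗Λ) (2 * z)) z := by
      have h := hd1.neg.add ((hd2).const_mul (1/2 : ℂ))
      convert h using 1
      all_goals first | rfl | ring
    have hopen : IsOpen {w : ℂ | 1 < w.re} := isOpen_lt continuous_const Complex.continuous_re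
    have hEqOn : Set.EqOn
        (fun w : ℂ => deriv riemannZeta w / riemannZeta w
          - (1 / 2) * (deriv riemannZeta (2 * w) / riemannZeta (2 * w)))
        (fun w : ℂ => -(LSeries ↗Λ w) + (1/2 : ℂ) * LSeries ↗Λ (2 * w))
        {w : ℂ | 1 < w.re} := by
      intro w hw
      have hw' : 1 < w.re := hw
      have hw2 : 1 < (2 * w).re := by
        have : (2 * w).re = 2 * w.re := by simp [Complex.mul_re]
        rw [this]; linarith
      have h1 := LSeries_vonMangoldt_eq_deriv_riemannZeta_div hw'
      have h2 := LSeries_vonMangoldt_eq_deriv_riemannZeta_div hw2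
      simp only
      rw [h1, h2]
      ring
    have hderiv_eq : deriv (fun w : ℂ => deriv riemannZeta w / riemannZeta w
          - (1 / 2) * (deriv riemannZeta (2 * w) / riemannZeta (2 * w))) z
        = deriv (fun w : ℂ => -(LSeries ↗Λ w) + (1/2 : ℂ) * LSeries ↗Λ (2 * w)) z :=
      Filter.EventuallyEq.deriv_eq (hEqOn.eventuallyEq_of_mem (hopen.mem_nhds hz))
    rw [hL, hderiv_eq, hG.deriv, ← LSeries_g₂]
    have hEq : F = (logMul ↗Λ - g₂) + Stmt18Aux.c := by
      funext n
      simp only [Pi.add_apply, Pi.sub_apply, Stmt18Aux.c, logMul, ← Complex.natCast_log]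
      ring
    rw [hEq, LSeries_add (hlm.sub hg₂s) hcs, LSeries_sub hlm hg₂s]
end
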